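/- arXiv:1912.04714 — 6 statements merged into one kernel-verified Lean document; each statement's English description precedes it below -/
import Mathlib

section
/- Let q = (q_k)_{k≥1} be a sequence of nonnegative reals with ∑_{k≥1} k·q_k < ∞, q_1 > 0, and ∑_{k≥1} k·q_k > 2·∑_{k≥1} q_k. Then there exists a unique β ∈ (0,1) such that ∑_{k≥1} k·q_k = (1 − β²)·∑_{k≥1} k·q_k/(1 − β^k). (For every β ∈ (0,1) the series on the right converges, since 1 − β^k ≥ 1 − β for all k ≥ 1.) -/
open Finset

section helpers

noncomputable def tt (m : ℕ) (β : ℝ) : ℝ := (β - β ^ (m - 1)) / (1 - β ^ m)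

lemma sum_pow_pos {β : ℝ} (hβ : 0 ≤ β) {m : ℕ} (hm : 1 ≤ m) :
    0 < ∑ j ∈ Finset.range m, β ^ j :=
  Finset.sum_pos' (fun i _ => pow_nonneg hβ i) ⟨0, Finset.mem_range.mpr hm, by simp⟩

lemma one_sub_pow_pos {β : ℝ} (h0 : 0 ≤ β) (h1 : β < 1) {m : ℕ} (hm : 1 ≤ m) :
    0 < 1 - β ^ m := by
  have := pow_lt_one₀ h0 h1 (by omega : m ≠ 0); linarith

lemma tt_two (β : ℝ) : tt 2 β = 0 := by simp [tt]

lemma tt_one {β : ℝ} (h1 : β < 1) : tt 1 β = -1 := by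
  have h : (1:ℝ) - β ≠ 0 := by linarith
  simp only [tt, Nat.sub_self, pow_zero, pow_one]; rw [div_eq_iff h]; ring

lemma tt_zero {m : ℕ} (hm : 2 ≤ m) : tt m 0 = 0 := by
  have h1 : m - 1 ≠ 0 := by omega
  have h2 : m ≠ 0 := by omega
  simp [tt, zero_pow h1, zero_pow h2]

lemma tt_nonneg {m : ℕ} (hm : 2 ≤ m) {β : ℝ} (h0 : 0 ≤ β) (h1 : β < 1) : 0 ≤ tt m β := by
  have hd := one_sub_pow_pos h0 h1 (by omega : 1 ≤ m)
  have hnum : β ^ (m-1) ≤ β := by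
    calc β ^ (m-1) ≤ β ^ 1 := pow_le_pow_of_le_one h0 h1.le (by omega)
    _ = β := pow_one β
  exact div_nonneg (by linarith) hd.le

lemma tt_abs_le {m : ℕ} (hm : 1 ≤ m) {β : ℝ} (h0 : 0 ≤ β) (h1 : β < 1) :
    |tt m β| ≤ 1 / (1 - β) := by
  have hd := one_sub_pow_pos h0 h1 hm
  have hbm : β ^ m ≤ β := by
    have := pow_le_pow_of_le_one h0 h1.le hm; simpa using this
  have hden : 1 - β ≤ 1 - β ^ m := by linarith
  have hnum : |β - β ^ (m-1)| ≤ 1 := by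
    have h2 : β ^ (m-1) ≤ 1 := pow_le_one₀ h0 h1.le
    have h3 : 0 ≤ β ^ (m-1) := pow_nonneg h0 _
    rw [abs_le]; constructor <;> nlinarith
  rw [tt, abs_div, abs_of_pos hd]
  exact div_le_div₀ zero_le_one hnum (by linarith) hden

lemma tt_eq_form {m : ℕ} (hm : 2 ≤ m) {β : ℝ} (h0 : 0 ≤ β) (h1 : β < 1) :
    tt m β = 1 - (1 + β ^ (m - 1)) / (∑ j ∈ Finset.range m, β ^ j) := by
  have hD : (1 - β) * ∑ j ∈ Finset.range m, β ^ j = 1 - β ^ m := by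
    linear_combination -geom_sum_mul β m
  have hDpos := sum_pow_pos h0 (by omega : 1 ≤ m)
  have hden := one_sub_pow_pos h0 h1 (by omega : 1 ≤ m)
  have hpow : β * β ^ (m - 1) = β ^ m := by
    rw [← pow_succ']; congr 1; omega
  rw [tt, div_eq_iff (ne_of_gt hden), sub_mul, one_mul]
  have h2 : (1 + β^(m-1)) / (∑ j ∈ Finset.range m, β ^ j) * (1 - β^m)
      = (1 + β^(m-1)) * (1-β) := by
    rw [div_mul_eq_mul_div, ← hD]
    field_simp
  rw [h2]
  linear_combination -hpow

lemma key_ineq {a b : ℝ} (ha : 0 ≤ a) (hab : a < b) (hb : b < 1) {n : ℕ} (hn : 2 ≤ n) :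
    (1 + b ^ n) * ∑ j ∈ Finset.range (n+1), a ^ j
      < (1 + a ^ n) * ∑ j ∈ Finset.range (n+1), b ^ j := by
  have hb0 : 0 ≤ b := le_trans ha hab.le
  have ha1 : a < 1 := lt_trans hab hb
  have hab01 : 0 ≤ a * b := mul_nonneg ha hb0
  have hab1 : a * b < 1 := by nlinarith
  set w : ℕ → ℝ := fun j => (1 + a ^ n) * b ^ j - (1 + b ^ n) * a ^ j with hw
  set F : ℕ → ℝ := fun j =>
    (b ^ j - a ^ j) * (1 - (a*b) ^ (n - j)) + (b ^ (n-j) - a ^ (n-j)) * (1 - (a*b) ^ j) with hF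
  have hWF : ∀ j ∈ Finset.range (n+1), w j + w (n - j) = F j := by
    intro j hj
    have hj' : j ≤ n := by simpa [Nat.lt_succ_iff] using hj
    obtain ⟨i, hi⟩ : ∃ i, n = j + i := ⟨n - j, by omega⟩
    have hni : n - j = i := by omega
    simp only [hw, hF, hi, Nat.add_sub_cancel_left]
    ring
  have hsumF : 0 < ∑ j ∈ Finset.range (n+1), F j := by
    apply Finset.sum_pos'
    · intro j hj
      have hj' : j ≤ n := by simpa [Nat.lt_succ_iff] using hj
      have h1 : a ^ j ≤ b ^ j := pow_le_pow_left₀ ha hab.le j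
      have h2 : a ^ (n-j) ≤ b ^ (n-j) := pow_le_pow_left₀ ha hab.le _
      have h3 : (a*b) ^ (n-j) ≤ 1 := pow_le_one₀ hab01 hab1.le
      have h4 : (a*b) ^ j ≤ 1 := pow_le_one₀ hab01 hab1.le
      simp only [hF]
      have := mul_nonneg (sub_nonneg.mpr h1) (sub_nonneg.mpr h3)
      have := mul_nonneg (sub_nonneg.mpr h2) (sub_nonneg.mpr h4)
      linarith
    · refine ⟨1, Finset.mem_range.mpr (by omega), ?_⟩
      simp only [hF]
      have h1 : a ^ 1 < b ^ 1 := by simpa using hab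
      have h3 : (a*b) ^ (n-1) < 1 := pow_lt_one₀ hab01 hab1 (by omega)
      have h2 : a ^ (n-1) ≤ b ^ (n-1) := pow_le_pow_left₀ ha hab.le _
      have h4 : (a*b) ^ 1 ≤ 1 := by simpa using hab1.le
      have p1 : 0 < (b ^ 1 - a ^ 1) * (1 - (a*b) ^ (n-1)) := by
        apply mul_pos <;> linarith
      have p2 : 0 ≤ (b ^ (n-1) - a ^ (n-1)) * (1 - (a*b) ^ 1) := by
        apply mul_nonneg <;> linarith
      linarith
  have hrefl : ∑ j ∈ Finset.range (n+1), w (n - j) = ∑ j ∈ Finset.range (n+1), w j := by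
    have := Finset.sum_range_reflect w (n+1)
    simpa using this
  have hsum2 : ∑ j ∈ Finset.range (n+1), F j = 2 * ∑ j ∈ Finset.range (n+1), w j := by
    rw [← Finset.sum_congr rfl hWF, Finset.sum_add_distrib, hrefl]; ring
  have hsumw : 0 < ∑ j ∈ Finset.range (n+1), w j := by linarith [hsum2 ▸ hsumF]
  have hexp : ∑ j ∈ Finset.range (n+1), w j
      = (1 + a ^ n) * ∑ j ∈ Finset.range (n+1), b ^ j
        - (1 + b ^ n) * ∑ j ∈ Finset.range (n+1), a ^ j := by
    rw [Finset.sum_sub_distrib, ← Finset.mul_sum, ← Finset.mul_sum]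
  linarith [hexp ▸ hsumw]
lemma tt_lt {m : ℕ} (hm : 3 ≤ m) {a b : ℝ} (ha : 0 ≤ a) (hab : a < b) (hb : b < 1) :
    tt m a < tt m b := by
  have hb0 : 0 ≤ b := le_trans ha hab.le
  have ha1 : a < 1 := lt_trans hab hb
  rw [tt_eq_form (by omega) ha ha1, tt_eq_form (by omega) hb0 hb]
  have hDa := sum_pow_pos ha (by omega : 1 ≤ m)
  have hDb := sum_pow_pos hb0 (by omega : 1 ≤ m)
  have key := key_ineq ha hab hb (n := m - 1) (by omega)
  rw [show m - 1 + 1 = m by omega] at key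
  have hlt : (1 + b ^ (m-1)) / (∑ j ∈ Finset.range m, b ^ j)
      < (1 + a ^ (m-1)) / (∑ j ∈ Finset.range m, a ^ j) := by
    rw [div_lt_div_iff₀ hDb hDa]
    linarith
  linarith

lemma tt_le {m : ℕ} (hm : 2 ≤ m) {a b : ℝ} (ha : 0 ≤ a) (hab : a < b) (hb : b < 1) :
    tt m a ≤ tt m b := by
  rcases eq_or_lt_of_le hm with h | h
  · rw [← h, tt_two, tt_two]
  · exact (tt_lt h ha hab hb).le

noncomputable def gg (q : ℕ → ℝ) (k : ℕ) (β : ℝ) : ℝ := ((k+2:ℕ):ℝ) * q (k+2) * tt (k+2) β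

noncomputable def Phi (q : ℕ → ℝ) (β : ℝ) : ℝ := ∑' k, gg q k β

lemma gg_nonneg (q : ℕ → ℝ) (hqn : ∀ k, 0 ≤ q (k+2)) (k : ℕ) {β : ℝ}
    (h0 : 0 ≤ β) (h1 : β < 1) : 0 ≤ gg q k β :=
  mul_nonneg (mul_nonneg (by positivity) (hqn k)) (tt_nonneg (by omega) h0 h1)

lemma gg_bound (q : ℕ → ℝ) (hqn : ∀ k, 0 ≤ q (k+2)) (k : ℕ) {β c : ℝ}
    (h0 : 0 ≤ β) (hβc : β ≤ c) (hc : c < 1) :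
    ‖gg q k β‖ ≤ ((k+2:ℕ):ℝ) * q (k+2) * (1/(1-c)) := by
  have h1 : β < 1 := lt_of_le_of_lt hβc hc
  have coef_nn : 0 ≤ ((k+2:ℕ):ℝ) * q (k+2) := mul_nonneg (by positivity) (hqn k)
  rw [Real.norm_eq_abs, gg, abs_mul, abs_of_nonneg coef_nn]
  have h2 := tt_abs_le (by omega : 1 ≤ k+2) h0 h1
  have h3 : 1/(1-β) ≤ 1/(1-c) := one_div_le_one_div_of_le (by linarith) (by linarith)
  exact mul_le_mul_of_nonneg_left (h2.trans h3) coef_nn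

lemma gg_summable (q : ℕ → ℝ) (hA : Summable (fun k : ℕ => ((k+2:ℕ):ℝ) * q (k+2)))
    (hqn : ∀ k, 0 ≤ q (k+2)) {β : ℝ} (h0 : 0 ≤ β) (h1 : β < 1) :
    Summable (fun k => gg q k β) := by
  apply Summable.of_norm
  exact Summable.of_nonneg_of_le (fun k => norm_nonneg _)
    (fun k => gg_bound q hqn k h0 le_rfl h1) (hA.mul_right _)

lemma Phi_contOn (q : ℕ → ℝ) (hA : Summable (fun k : ℕ => ((k+2:ℕ):ℝ) * q (k+2)))
    (hqn : ∀ k, 0 ≤ q (k+2)) {c : ℝ} (hc : c < 1) :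
    ContinuousOn (Phi q) (Set.Icc 0 c) := by
  apply continuousOn_tsum (u := fun k => ((k+2:ℕ):ℝ) * q (k+2) * (1/(1-c)))
  · intro k
    apply ContinuousOn.mul continuousOn_const
    unfold tt
    apply ContinuousOn.div
    · exact (continuous_id.sub (continuous_pow _)).continuousOn
    · exact (continuous_const.sub (continuous_pow _)).continuousOn
    · intro x hx
      exact ne_of_gt (one_sub_pow_pos hx.1 (lt_of_le_of_lt hx.2 hc) (by omega))
  · exact hA.mul_right _
  · intro k x hx
    exact gg_bound q hqn k hx.1 hx.2 hc

lemma Phi_strict (q : ℕ → ℝ) (hA : Summable (fun k : ℕ => ((k+2:ℕ):ℝ) * q (k+2)))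
    (hqn : ∀ k, 0 ≤ q (k+2)) {k0 : ℕ} (hk0 : 0 < q (k0+3)) {a b : ℝ}
    (ha : 0 ≤ a) (hab : a < b) (hb : b < 1) : Phi q a < Phi q b := by
  have hb0 : 0 ≤ b := le_trans ha hab.le
  have ha1 : a < 1 := lt_trans hab hb
  refine Summable.tsum_lt_tsum (i := k0+1) ?_ ?_ (gg_summable q hA hqn ha ha1)
    (gg_summable q hA hqn hb0 hb)
  · intro k
    exact mul_le_mul_of_nonneg_left (tt_le (by omega) ha hab hb)
      (mul_nonneg (by positivity) (hqn k))
  · have hcoef : 0 < ((k0+1+2:ℕ):ℝ) * q (k0+1+2) := by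
      have : 0 < q (k0+1+2) := hk0
      positivity
    exact mul_lt_mul_of_pos_left (tt_lt (by omega) ha hab hb) hcoef

lemma Phi_zero (q : ℕ → ℝ) : Phi q 0 = 0 := by
  unfold Phi
  have h : ∀ k : ℕ, gg q k 0 = 0 := fun k => by rw [gg, tt_zero (by omega), mul_zero]
  simp [h]

set_option maxHeartbeats 1000000 in
/-- Let q = (q_k)_{k≥1} be a sequence of nonnegative reals with
∑_{k≥1} k·q_k < ∞, q_1 > 0, and ∑_{k≥1} k·q_k > 2·∑_{k≥1} q_k. Then there exists a
unique β ∈ (0,1) such that ∑_{k≥1} k·q_k = (1 − β²)·∑_{k≥1} k·q_k/(1 − β^k). -/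
theorem stmt0 (q : ℕ → ℝ) (hq : ∀ k, 1 ≤ k → 0 ≤ q k)
    (hsum : Summable (fun k : ℕ => ((k + 1 : ℕ) : ℝ) * q (k + 1)))
    (hq1 : 0 < q 1)
    (hgt : (∑' k : ℕ, ((k + 1 : ℕ) : ℝ) * q (k + 1)) > 2 * ∑' k : ℕ, q (k + 1)) :
    ∃! β : ℝ, β ∈ Set.Ioo (0 : ℝ) 1 ∧
      (∑' k : ℕ, ((k + 1 : ℕ) : ℝ) * q (k + 1)) =
        (1 - β ^ 2) * ∑' k : ℕ, ((k + 1 : ℕ) : ℝ) * q (k + 1) / (1 - β ^ (k + 1)) := by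
  have hqn : ∀ k : ℕ, 0 ≤ q (k+1) := fun k => hq (k+1) (by omega)
  have hqn2 : ∀ k : ℕ, 0 ≤ q (k+2) := fun k => hq (k+2) (by omega)
  have hA : Summable (fun k : ℕ => ((k+2:ℕ):ℝ) * q (k+2)) :=
    (summable_nat_add_iff 1).mpr hsum
  have hA2 : Summable (fun k : ℕ => ((k+3:ℕ):ℝ) * q (k+3)) :=
    (summable_nat_add_iff 2).mpr hsum
  have hQ : Summable (fun k : ℕ => q (k+1)) := by
    refine Summable.of_nonneg_of_le hqn (fun k => ?_) hsum
    have h1 : (1:ℝ) ≤ ((k+1:ℕ):ℝ) := by exact_mod_cast Nat.one_le_iff_ne_zero.mpr (by omega)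
    nlinarith [hqn k]
  -- Part A : q 1 < L
  set aa : ℕ → ℝ := fun k => ((k+1:ℕ):ℝ) * q (k+1) - 2 * q (k+1) with haa
  have hAA : Summable aa := hsum.sub (hQ.mul_left 2)
  have hAA1 : Summable (fun k => aa (k+1)) := (summable_nat_add_iff 1).mpr hAA
  have hLsum : Summable (fun k : ℕ => ((k+1:ℕ):ℝ) * q (k+3)) := by
    refine Summable.of_nonneg_of_le (fun k => mul_nonneg (by positivity) (hq _ (by omega)))
      (fun k => ?_) hA2
    have : ((k+1:ℕ):ℝ) ≤ ((k+3:ℕ):ℝ) := by exact_mod_cast by omega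
    exact mul_le_mul_of_nonneg_right this (hq _ (by omega))
  set L : ℝ := ∑' k : ℕ, ((k+1:ℕ):ℝ) * q (k+3) with hL
  have h4 : ∀ k : ℕ, aa (k+2) = ((k+1:ℕ):ℝ) * q (k+3) := by
    intro k
    show ((k+2+1:ℕ):ℝ) * q (k+2+1) - 2 * q (k+2+1) = ((k+1:ℕ):ℝ) * q (k+3)
    push_cast
    ring_nf
  have hq1L : q 1 < L := by
    have h1 : ∑' k, aa k = (∑' k : ℕ, ((k + 1 : ℕ) : ℝ) * q (k + 1)) - 2 * ∑' k : ℕ, q (k+1) := by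
      rw [← tsum_mul_left]
      exact Summable.tsum_sub hsum (hQ.mul_left 2)
    have h2 : ∑' k, aa k = aa 0 + ∑' k, aa (k+1) := Summable.tsum_eq_zero_add hAA
    have h3 : ∑' k, aa (k+1) = aa 1 + ∑' k, aa (k+2) := Summable.tsum_eq_zero_add hAA1
    have h5 : ∑' k, aa (k+2) = L := tsum_congr h4
    have ha0 : aa 0 = -q 1 := by simp [haa]; ring
    have ha1 : aa 1 = 0 := by norm_num [haa]
    have hpos : 0 < ∑' k, aa k := by rw [h1]; linarith
    rw [h2, h3, h5, ha0, ha1] at hpos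
    linarith
  -- Part B : positive coefficient
  have hk0 : ∃ k0 : ℕ, 0 < q (k0+3) := by
    by_contra h
    push_neg at h
    have hz : ∀ k : ℕ, ((k+1:ℕ):ℝ) * q (k+3) = 0 := by
      intro k
      have := le_antisymm (h k) (hq _ (by omega))
      rw [this, mul_zero]
    have : L = 0 := by rw [hL, tsum_congr hz, tsum_zero]
    linarith
  obtain ⟨k0, hk0⟩ := hk0
  -- Part C : partial sum N
  have hev : ∀ᶠ N in Filter.atTop, q 1 < ∑ k ∈ Finset.range N, ((k+1:ℕ):ℝ) * q (k+3) :=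
    (hLsum.hasSum.tendsto_sum_nat).eventually (eventually_gt_nhds hq1L)
  obtain ⟨N, hN⟩ := hev.exists
  -- Part D : pick b close to 1
  set FS : ℝ → ℝ := fun β => ∑ k ∈ Finset.range N,
    ((k+3:ℕ):ℝ) * q (k+3) * (1 - (1 + β^(k+2)) / (∑ j ∈ Finset.range (k+3), β^j)) with hFS
  have hFScont : ContinuousOn FS (Set.Icc (0:ℝ) 1) := by
    apply continuousOn_finset_sum
    intro k _
    apply ContinuousOn.mul continuousOn_const
    apply ContinuousOn.sub continuousOn_const
    apply ContinuousOn.div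
    · exact (continuous_const.add (continuous_pow _)).continuousOn
    · exact (continuous_finset_sum _ fun j _ => continuous_pow j).continuousOn
    · intro x hx
      exact ne_of_gt (sum_pow_pos hx.1 (by omega))
  have hFS1 : FS 1 = ∑ k ∈ Finset.range N, ((k+1:ℕ):ℝ) * q (k+3) := by
    apply Finset.sum_congr rfl
    intro k _
    simp only [one_pow, Finset.sum_const, Finset.card_range, nsmul_eq_mul, mul_one]
    have h3 : ((k+3:ℕ):ℝ) ≠ 0 := by positivity
    field_simp
    push_cast
    ring
  have hq1FS1 : q 1 < FS 1 := by rw [hFS1]; exact hN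
  have hcw : ContinuousWithinAt FS (Set.Ioo (0:ℝ) 1) 1 :=
    (hFScont 1 (by norm_num)).mono Set.Ioo_subset_Icc_self
  have hne : (nhdsWithin (1:ℝ) (Set.Ioo 0 1)).NeBot := by
    rw [← mem_closure_iff_nhdsWithin_neBot, closure_Ioo (by norm_num : (0:ℝ) ≠ 1)]
    constructor <;> norm_num
  have hev2 : ∀ᶠ x in nhdsWithin (1:ℝ) (Set.Ioo 0 1), q 1 < FS x :=
    hcw.eventually (eventually_gt_nhds hq1FS1)
  obtain ⟨b, hbFS, hbmem⟩ := (hev2.and self_mem_nhdsWithin).exists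
  obtain ⟨hb0, hb1⟩ := hbmem
  -- FS b ≤ Phi q b
  have hFSb : FS b = ∑ k ∈ Finset.range N, gg q (k+1) b := by
    apply Finset.sum_congr rfl
    intro k _
    rw [show gg q (k+1) b = ((k+3:ℕ):ℝ) * q (k+3) * tt (k+3) b from rfl,
      tt_eq_form (by omega) hb0.le hb1]
    rfl
  have hΦb : q 1 < Phi q b := by
    refine lt_of_lt_of_le hbFS ?_
    rw [hFSb]
    have himg : ∑ k ∈ Finset.range N, gg q (k+1) b
        = ∑ k ∈ (Finset.range N).image (· + 1), gg q k b := by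
      rw [Finset.sum_image (fun a _ b _ h => by omega)]
    rw [himg]
    exact Summable.sum_le_tsum _ (fun i _ => gg_nonneg q hqn2 i hb0.le hb1)
      (gg_summable q hA hqn2 hb0.le hb1)
  -- Part E : IVT
  have hcont : ContinuousOn (Phi q) (Set.Icc 0 b) := Phi_contOn q hA hqn2 hb1
  have hivt := intermediate_value_Ioo hb0.le hcont
  have hmem : q 1 ∈ Set.Ioo (Phi q 0) (Phi q b) := by
    rw [Phi_zero]; exact ⟨hq1, hΦb⟩
  obtain ⟨β0, hβ0mem, hβ0eq⟩ := hivt hmem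
  have hβ0Ioo : β0 ∈ Set.Ioo (0:ℝ) 1 := ⟨hβ0mem.1, lt_trans hβ0mem.2 hb1⟩
  -- Part F : key equivalence
  have key : ∀ β : ℝ, β ∈ Set.Ioo (0:ℝ) 1 →
      ((1 - β^2) * ∑' k : ℕ, ((k + 1 : ℕ) : ℝ) * q (k + 1) / (1 - β ^ (k + 1)))
        - (∑' k : ℕ, ((k + 1 : ℕ) : ℝ) * q (k + 1)) = β * (q 1 - Phi q β) := by
    rintro β ⟨hβ0, hβ1⟩
    have hT : Summable (fun k : ℕ => ((k+1:ℕ):ℝ) * q (k+1) / (1 - β^(k+1))) := by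
      refine Summable.of_nonneg_of_le (fun k => ?_) (fun k => ?_) (hsum.mul_right (1/(1-β)))
      · exact div_nonneg (mul_nonneg (by positivity) (hqn k))
          (one_sub_pow_pos hβ0.le hβ1 (by omega)).le
      · have hd := one_sub_pow_pos hβ0.le hβ1 (show 1 ≤ k+1 by omega)
        have hd2 : 1 - β ≤ 1 - β^(k+1) := by
          have : β^(k+1) ≤ β := by
            simpa using pow_le_pow_of_le_one hβ0.le hβ1.le (show 1 ≤ k+1 by omega)
          linarith
        calc ((k+1:ℕ):ℝ) * q (k+1) / (1 - β^(k+1)) ≤ ((k+1:ℕ):ℝ) * q (k+1) / (1-β) :=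
              div_le_div₀ (mul_nonneg (by positivity) (hqn k)) le_rfl (by linarith) hd2
          _ = ((k+1:ℕ):ℝ) * q (k+1) * (1/(1-β)) := by rw [div_eq_mul_one_div]
    have hW : Summable (fun k : ℕ => ((k+1:ℕ):ℝ) * q (k+1) * tt (k+1) β) := by
      apply Summable.of_abs
      refine Summable.of_nonneg_of_le (fun k => abs_nonneg _) (fun k => ?_)
        (hsum.mul_right (1/(1-β)))
      rw [abs_mul, abs_of_nonneg (mul_nonneg (by positivity) (hqn k))]
      exact mul_le_mul_of_nonneg_left (tt_abs_le (by omega) hβ0.le hβ1)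
        (mul_nonneg (by positivity) (hqn k))
    have hptw : ∀ k : ℕ, (1-β^2) * (((k+1:ℕ):ℝ) * q (k+1) / (1 - β^(k+1)))
        - ((k+1:ℕ):ℝ) * q (k+1) = (-β) * (((k+1:ℕ):ℝ) * q (k+1) * tt (k+1) β) := by
      intro k
      have hd := one_sub_pow_pos hβ0.le hβ1 (show 1 ≤ k+1 by omega)
      rw [tt]
      simp only [Nat.add_sub_cancel]
      have hdne : (1:ℝ) - β^(k+1) ≠ 0 := ne_of_gt hd
      field_simp
      ring
    have hW1 : Summable (fun k : ℕ => ((k+1+1:ℕ):ℝ) * q (k+1+1) * tt (k+1+1) β) :=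
      (summable_nat_add_iff 1).mpr hW
    calc (1 - β^2) * (∑' k : ℕ, ((k + 1 : ℕ) : ℝ) * q (k + 1) / (1 - β ^ (k + 1)))
          - (∑' k : ℕ, ((k + 1 : ℕ) : ℝ) * q (k + 1))
        = (∑' k : ℕ, (1-β^2) * (((k+1:ℕ):ℝ) * q (k+1) / (1 - β^(k+1))))
          - (∑' k : ℕ, ((k + 1 : ℕ) : ℝ) * q (k + 1)) := by rw [tsum_mul_left]
      _ = ∑' k : ℕ, ((1-β^2) * (((k+1:ℕ):ℝ) * q (k+1) / (1 - β^(k+1)))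
            - ((k+1:ℕ):ℝ) * q (k+1)) := (Summable.tsum_sub (hT.mul_left _) hsum).symm
      _ = ∑' k : ℕ, (-β) * (((k+1:ℕ):ℝ) * q (k+1) * tt (k+1) β) := tsum_congr hptw
      _ = (-β) * ∑' k : ℕ, ((k+1:ℕ):ℝ) * q (k+1) * tt (k+1) β := tsum_mul_left
      _ = (-β) * (((0+1:ℕ):ℝ) * q (0+1) * tt (0+1) β
            + ∑' k : ℕ, ((k+1+1:ℕ):ℝ) * q (k+1+1) * tt (k+1+1) β) := by
          rw [Summable.tsum_eq_zero_add hW]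
      _ = (-β) * (-(q 1) + Phi q β) := by
          have e1 : ((0+1:ℕ):ℝ) * q (0+1) * tt (0+1) β = -(q 1) := by
            show ((1:ℕ):ℝ) * q 1 * tt 1 β = -(q 1)
            rw [tt_one hβ1]; norm_num
          have e2 : (∑' k : ℕ, ((k+1+1:ℕ):ℝ) * q (k+1+1) * tt (k+1+1) β) = Phi q β :=
            tsum_congr (fun k => rfl)
          rw [e1, e2]
      _ = β * (q 1 - Phi q β) := by ring
  have hiff : ∀ β : ℝ, β ∈ Set.Ioo (0:ℝ) 1 →
      (((∑' k : ℕ, ((k + 1 : ℕ) : ℝ) * q (k + 1)) =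
        (1 - β ^ 2) * ∑' k : ℕ, ((k + 1 : ℕ) : ℝ) * q (k + 1) / (1 - β ^ (k + 1)))
        ↔ Phi q β = q 1) := by
    intro β hβ
    have hk := key β hβ
    constructor
    · intro h
      rw [← h] at hk
      simp only [sub_self] at hk
      have := (mul_eq_zero.mp hk.symm).resolve_left (ne_of_gt hβ.1)
      linarith
    · intro h
      rw [h] at hk
      simp only [sub_self, mul_zero] at hk
      linarith
  -- Assemble
  refine ⟨β0, ⟨hβ0Ioo, (hiff β0 hβ0Ioo).mpr hβ0eq⟩, ?_⟩
  rintro y ⟨hymem, hyeq⟩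
  have hy : Phi q y = q 1 := (hiff y hymem).mp hyeq
  rcases lt_trichotomy y β0 with h | h | h
  · exfalso
    have := Phi_strict q hA hqn2 hk0 hymem.1.le h hβ0Ioo.2
    rw [hy, hβ0eq] at this
    exact lt_irrefl _ this
  · exact h
  · exfalso
    have := Phi_strict q hA hqn2 hk0 hβ0Ioo.1.le h hymem.2
    rw [hy, hβ0eq] at this
    exact lt_irrefl _ this
end helpers
end

section
/- Let p = (p_k)_{k≥1} and q = (q_k)_{k≥1} be sequences of reals with 0 ≤ q_k ≤ p_k for every k ≥ 1, ∑_{k≥1} p_k ≤ 1 and ∑_{k≥1} k·p_k < ∞. Then the function k ↦ q_k·log q_k is summable (with the convention 0·log 0 = 0), and ∑_{k≥1} q_k·log q_k ≥ −(1 − ∑_{k≥1} q_k)·log(2·(1 − ∑_{k≥1} q_k)) − (log 2)·∑_{k≥1} (k+1)·q_k, which is finite. In particular H(q) is a finite real number. -/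
/-- Key scalar inequality: for t ≥ 0, -(t·log(2t)) ≤ 1/2 - t. -/
lemma stmt2_aux_key (t : ℝ) (ht : 0 ≤ t) : -(t * Real.log (2 * t)) ≤ 1/2 - t := by
  rcases eq_or_lt_of_le ht with h | h
  · simp [← h]
  · have h2t : 0 < 2 * t := by linarith
    have h1 : Real.log ((2*t)⁻¹) ≤ (2*t)⁻¹ - 1 :=
      Real.log_le_sub_one_of_pos (by positivity)
    rw [Real.log_inv] at h1
    have h2 : t * (-Real.log (2*t)) ≤ t * ((2*t)⁻¹ - 1) :=
      mul_le_mul_of_nonneg_left h1 ht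
    have h3 : t * (2*t)⁻¹ = 1/2 := by
      field_simp
    nlinarith [h2, h3]

/-- Let p, q be sequences (indexed by k ≥ 1) with 0 ≤ q_k ≤ p_k,
∑ p_k ≤ 1 and ∑ k·p_k < ∞. Then k ↦ q_k·log q_k is summable (convention 0·log 0 = 0,
which holds since `Real.log 0 = 0`), and
∑ q_k·log q_k ≥ −(1 − ∑ q_k)·log(2·(1 − ∑ q_k)) − (log 2)·∑ (k+1)·q_k. -/
theorem stmt2 (p q : ℕ → ℝ)
    (hpq : ∀ k, 1 ≤ k → 0 ≤ q k ∧ q k ≤ p k)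
    (hpsum : Summable (fun k : ℕ => ((k + 1 : ℕ) : ℝ) * p (k + 1)))
    (hp1 : (∑' k : ℕ, p (k + 1)) ≤ 1) :
    Summable (fun k : ℕ => q (k + 1) * Real.log (q (k + 1))) ∧
    (∑' k : ℕ, q (k + 1) * Real.log (q (k + 1))) ≥
      -(1 - ∑' k : ℕ, q (k + 1)) * Real.log (2 * (1 - ∑' k : ℕ, q (k + 1))) -
        Real.log 2 * ∑' k : ℕ, (((k + 1 : ℕ) : ℝ) + 1) * q (k + 1) := by
  have hq0 : ∀ k : ℕ, 0 ≤ q (k+1) := fun k => (hpq (k+1) (Nat.le_add_left 1 k)).1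
  have hqp : ∀ k : ℕ, q (k+1) ≤ p (k+1) := fun k => (hpq (k+1) (Nat.le_add_left 1 k)).2
  have hp0 : ∀ k : ℕ, 0 ≤ p (k+1) := fun k => le_trans (hq0 k) (hqp k)
  have hsum_p : Summable (fun k : ℕ => p (k+1)) := by
    apply hpsum.of_nonneg_of_le hp0
    intro k
    have h1 : (1:ℝ) ≤ ((k+1:ℕ):ℝ) := by exact_mod_cast Nat.one_le_iff_ne_zero.mpr (Nat.succ_ne_zero k)
    exact le_mul_of_one_le_left (hp0 k) h1
  have hsum_q : Summable (fun k : ℕ => q (k+1)) :=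
    hsum_p.of_nonneg_of_le hq0 hqp
  have hsum_kq : Summable (fun k : ℕ => ((k:ℝ)+2) * q (k+1)) := by
    apply (hpsum.mul_left 2).of_nonneg_of_le
    · intro k; exact mul_nonneg (by positivity) (hq0 k)
    · intro k
      have h1 : q (k+1) ≤ p (k+1) := hqp k
      have h2 : (0:ℝ) ≤ q (k+1) := hq0 k
      have h3 : ((k+1:ℕ):ℝ) = (k:ℝ)+1 := by push_cast; ring
      rw [h3]
      nlinarith
  -- the geometric reference measure
  set m : ℕ → ℝ := fun k => (1/2 : ℝ)^(k+2) with hm_def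
  have hm_pos : ∀ k, 0 < m k := fun k => by positivity
  have hm_eq : m = fun k : ℕ => (1/4 : ℝ) * (1/2)^k := by
    funext k; simp only [hm_def]; ring
  have hsum_m : Summable m := by
    rw [hm_eq]
    exact (summable_geometric_of_lt_one (by norm_num) (by norm_num)).mul_left _
  have htsum_m : ∑' k, m k = 1/2 := by
    rw [hm_eq, tsum_mul_left, tsum_geometric_of_lt_one (by norm_num) (by norm_num)]
    norm_num
  have hlogm : ∀ k : ℕ, Real.log (m k) = -(((k:ℝ)+2) * Real.log 2) := by
    intro k
    simp only [hm_def]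
    rw [Real.log_pow, one_div, Real.log_inv]
    push_cast; ring
  -- pointwise Gibbs bound
  have hkey : ∀ k : ℕ, q (k+1) * Real.log (m k) + (q (k+1) - m k)
      ≤ q (k+1) * Real.log (q (k+1)) := by
    intro k
    rcases eq_or_lt_of_le (hq0 k) with h | h
    · simp [← h, (hm_pos k).le]
    · have h1 : Real.log (m k / q (k+1)) ≤ m k / q (k+1) - 1 :=
        Real.log_le_sub_one_of_pos (div_pos (hm_pos k) h)
      rw [Real.log_div (hm_pos k).ne' h.ne'] at h1
      have h2 : q (k+1) * (Real.log (m k) - Real.log (q (k+1)))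
          ≤ q (k+1) * (m k / q (k+1) - 1) := mul_le_mul_of_nonneg_left h1 h.le
      have h3 : q (k+1) * (m k / q (k+1)) = m k := by field_simp
      nlinarith
  -- summability of the lower-bound function g
  have hg_eq : (fun k : ℕ => q (k+1) * Real.log (m k) + (q (k+1) - m k))
      = fun k : ℕ => (-Real.log 2) * (((k:ℝ)+2) * q (k+1)) + (q (k+1) - m k) := by
    funext k; rw [hlogm k]; ring
  have hsum_g : Summable (fun k : ℕ => q (k+1) * Real.log (m k) + (q (k+1) - m k)) := by
    rw [hg_eq]
    exact (hsum_kq.mul_left _).add (hsum_q.sub hsum_m)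
  -- q k ≤ 1 hence q log q ≤ 0
  have hq1 : ∀ k : ℕ, q (k+1) ≤ 1 := by
    intro k
    have h1 : p (k+1) ≤ ∑' j : ℕ, p (j+1) := Summable.le_tsum hsum_p k (fun j _ => hp0 j)
    linarith [hqp k]
  have hf_nonpos : ∀ k : ℕ, q (k+1) * Real.log (q (k+1)) ≤ 0 := by
    intro k
    exact mul_nonpos_iff.mpr (Or.inl ⟨hq0 k, Real.log_nonpos (hq0 k) (hq1 k)⟩)
  -- summability of f
  have hsum_f : Summable (fun k : ℕ => q (k+1) * Real.log (q (k+1))) := by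
    have hneg : Summable (fun k : ℕ => -(q (k+1) * Real.log (q (k+1)))) := by
      apply hsum_g.neg.of_nonneg_of_le
      · intro k; linarith [hf_nonpos k]
      · intro k; simp only [neg_le_neg_iff]; linarith [hkey k]
    have := hneg.neg
    simpa using this
  refine ⟨hsum_f, ?_⟩
  -- compare tsums
  have htsum_ge : ∑' k : ℕ, (q (k+1) * Real.log (m k) + (q (k+1) - m k))
      ≤ ∑' k : ℕ, q (k+1) * Real.log (q (k+1)) :=
    Summable.tsum_le_tsum hkey hsum_g hsum_f
  -- compute tsum of g
  have htsum_g : ∑' k : ℕ, (q (k+1) * Real.log (m k) + (q (k+1) - m k))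
      = (-Real.log 2) * (∑' k : ℕ, ((k:ℝ)+2) * q (k+1))
        + ((∑' k : ℕ, q (k+1)) - 1/2) := by
    rw [hg_eq, Summable.tsum_add (hsum_kq.mul_left _) (hsum_q.sub hsum_m), tsum_mul_left,
      Summable.tsum_sub hsum_q hsum_m, htsum_m]
  set Q := ∑' k : ℕ, q (k+1) with hQ
  set T := ∑' k : ℕ, ((k:ℝ)+2) * q (k+1) with hT
  have hT' : (∑' k : ℕ, (((k + 1 : ℕ) : ℝ) + 1) * q (k + 1)) = T := by
    apply tsum_congr; intro k; push_cast; ring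
  have hQ1 : Q ≤ 1 := le_trans (Summable.tsum_le_tsum hqp hsum_q hsum_p) hp1
  have hkey2 : -((1 - Q) * Real.log (2 * (1 - Q))) ≤ 1/2 - (1 - Q) :=
    stmt2_aux_key (1 - Q) (by linarith)
  rw [ge_iff_le, hT']
  calc -(1 - Q) * Real.log (2 * (1 - Q)) - Real.log 2 * T
      ≤ (Q - 1/2) + (-Real.log 2) * T := by nlinarith [hkey2]
    _ = (-Real.log 2) * T + (Q - 1/2) := by ring
    _ ≤ ∑' k : ℕ, q (k+1) * Real.log (q (k+1)) := by rw [← htsum_g]; exact htsum_ge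
end

section
/- Let x₀⁽¹⁾ ≥ 0 and x₀⁽²⁾ ≥ 0 be reals and let z = (z_k)_{k≥1} be a sequence of nonnegative reals with ∑_{k≥1} k·z_k < ∞. Assume ∑_{k≥1} k·z_k + (x₀⁽¹⁾ − x₀⁽²⁾) > 2·∑_{k≥1} z_k, and that x₀⁽²⁾ > 0 or z_1 > 0. Then there exists a unique β ∈ (0,1) such that ∑_{k≥1} k·z_k = (1 − β²)·∑_{k≥1} k·z_k/(1 − β^k) + x₀⁽²⁾ − β²·x₀⁽¹⁾. -/
open Finset Filter

private noncomputable def Wf (n : ℕ) (β : ℝ) : ℝ :=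
  (β * ∑ j ∈ Finset.range (n+1), β^j) / (∑ j ∈ Finset.range (n+3), β^j)

private lemma Wf_den_pos {β : ℝ} (hβ : 0 ≤ β) (n : ℕ) :
    (0:ℝ) < ∑ j ∈ Finset.range (n+3), β^j := by
  have h1 : (1:ℝ) ≤ ∑ j ∈ Finset.range (n+3), β^j := by
    have := Finset.single_le_sum (f := fun j => β^j) (fun j _ => pow_nonneg hβ j)
      (Finset.mem_range.2 (show 0 < n+3 by omega))
    simpa using this
  linarith

private lemma Wf_nonneg {β : ℝ} (hβ : 0 ≤ β) (n : ℕ) : 0 ≤ Wf n β := by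
  apply div_nonneg
  · exact mul_nonneg hβ (Finset.sum_nonneg fun j _ => pow_nonneg hβ j)
  · exact (Wf_den_pos hβ n).le

private lemma Wf_le_beta {β : ℝ} (hβ : 0 ≤ β) (hβ1 : β ≤ 1) (n : ℕ) : Wf n β ≤ β := by
  rw [Wf, div_le_iff₀ (Wf_den_pos hβ n)]
  have h1 : ∑ j ∈ Finset.range (n+1), β^j ≤ ∑ j ∈ Finset.range (n+3), β^j :=
    Finset.sum_le_sum_of_subset_of_nonneg
      (Finset.range_subset_range.2 (by omega)) (fun j _ _ => pow_nonneg hβ j)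
  nlinarith [Finset.sum_nonneg (fun j (_ : j ∈ Finset.range (n+1)) => pow_nonneg hβ j)]

private lemma Wf_le_one {β : ℝ} (hβ : 0 ≤ β) (hβ1 : β ≤ 1) (n : ℕ) : Wf n β ≤ 1 :=
  (Wf_le_beta hβ hβ1 n).trans hβ1

private lemma Wf_one (n : ℕ) : Wf n 1 = ((n+1:ℕ):ℝ)/((n+3:ℕ):ℝ) := by
  simp [Wf]

private lemma Wf_closed {β : ℝ} (hβ : β ≠ 1) (n : ℕ) (hd : (1:ℝ) - β^(n+3) ≠ 0) :
    Wf n β = (β - β^(n+2))/(1 - β^(n+3)) := by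
  have h1 : β - 1 ≠ 0 := sub_ne_zero.2 hβ
  have h2 : β^(n+3) - 1 ≠ 0 := fun h => hd (by linarith [sub_eq_zero.1 h])
  rw [Wf, geom_sum_eq hβ, geom_sum_eq hβ]
  field_simp
  ring

private lemma aux_pair {a b : ℝ} (ha0 : 0 ≤ a) (ha1 : a ≤ 1) (hb0 : 0 ≤ b) (hb1 : b ≤ 1)
    (i j : ℕ) : b^i * a^j + b^j * a^i ≤ (b*a)^i + (b*a)^j := by
  wlog hij : i ≤ j generalizing i j
  · have := this j i (le_of_not_ge hij); linarith
  obtain ⟨t, rfl⟩ : ∃ t, j = i + t := ⟨j - i, by omega⟩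
  have hba : (0:ℝ) ≤ (b*a)^i := by positivity
  have h1 : a^t + b^t ≤ 1 + a^t * b^t := by
    nlinarith [pow_le_one₀ ha0 ha1 (n := t), pow_le_one₀ hb0 hb1 (n := t),
      pow_nonneg ha0 t, pow_nonneg hb0 t]
  calc b^i * a^(i+t) + b^(i+t) * a^i = (b*a)^i * (a^t + b^t) := by
        simp only [mul_pow, pow_add]; ring
    _ ≤ (b*a)^i * (1 + a^t * b^t) := by nlinarith
    _ = (b*a)^i + (b*a)^(i+t) := by simp only [mul_pow, pow_add]; ring

private lemma aux_sum_lt {a b : ℝ} (ha : 0 < a) (ha1 : a < 1) (hb : 0 < b) (hb1 : b < 1)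
    (m : ℕ) (hm : 2 ≤ m) :
    ∑ j ∈ Finset.range m, b^j * a^(m-1-j) < ∑ j ∈ Finset.range m, (b*a)^j := by
  have key : ∑ j ∈ Finset.range m, (b^j * a^(m-1-j) + b^(m-1-j) * a^j)
      < ∑ j ∈ Finset.range m, ((b*a)^j + (b*a)^(m-1-j)) := by
    apply Finset.sum_lt_sum
    · intro j _; exact aux_pair ha.le ha1.le hb.le hb1.le j (m-1-j)
    · refine ⟨0, Finset.mem_range.2 (by omega), ?_⟩
      simp only [pow_zero, one_mul, mul_one, Nat.sub_zero]
      have h1 : a^(m-1) < 1 := pow_lt_one₀ ha.le ha1 (by omega)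
      have h2 : b^(m-1) < 1 := pow_lt_one₀ hb.le hb1 (by omega)
      have h3 : (b*a)^(m-1) = b^(m-1) * a^(m-1) := mul_pow b a (m-1)
      nlinarith [pow_pos ha (m-1), pow_pos hb (m-1)]
  have r1 : ∑ j ∈ Finset.range m, b^(m-1-j) * a^j = ∑ j ∈ Finset.range m, b^j * a^(m-1-j) := by
    rw [← Finset.sum_range_reflect]
    apply Finset.sum_congr rfl
    intro j hj
    have hj' : j < m := Finset.mem_range.1 hj
    rw [Nat.sub_sub_self (by omega : j ≤ m - 1)]
  have r2 : ∑ j ∈ Finset.range m, (b*a)^(m-1-j) = ∑ j ∈ Finset.range m, (b*a)^j := by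
    rw [← Finset.sum_range_reflect]
    apply Finset.sum_congr rfl
    intro j hj
    have hj' : j < m := Finset.mem_range.1 hj
    rw [Nat.sub_sub_self (by omega : j ≤ m - 1)]
  rw [Finset.sum_add_distrib, Finset.sum_add_distrib, r1, r2] at key
  linarith

private lemma aux_cross {a b : ℝ} (ha : 0 < a) (hab : a < b) (hb1 : b < 1)
    (m : ℕ) (hm : 2 ≤ m) :
    (b^m - a^m) * (1 - a*b) < (b - a) * (1 - (a*b)^m) := by
  have hb : 0 < b := ha.trans hab
  have ha1 : a < 1 := hab.trans hb1
  have e1 : b^m - a^m = (∑ j ∈ Finset.range m, b^j * a^(m-1-j)) * (b - a) :=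
    (geom_sum₂_mul b a m).symm
  have e2 : 1 - (a*b)^m = (∑ j ∈ Finset.range m, (a*b)^j) * (1 - a*b) := by
    have := geom_sum_mul (a*b) m
    nlinarith [this]
  have hs := aux_sum_lt ha ha1 hb hb1 m hm
  have hba : 0 < b - a := by linarith
  have h1ab : 0 < 1 - a*b := by nlinarith
  rw [e1, e2]
  calc (∑ j ∈ Finset.range m, b^j * a^(m-1-j)) * (b - a) * (1 - a*b)
      < (∑ j ∈ Finset.range m, (b*a)^j) * (b - a) * (1 - a*b) := by
        apply mul_lt_mul_of_pos_right (mul_lt_mul_of_pos_right hs hba) h1ab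
    _ = (b - a) * ((∑ j ∈ Finset.range m, (a*b)^j) * (1 - a*b)) := by
        rw [mul_comm a b]; ring

private lemma Wf_mono {a b : ℝ} (ha : 0 < a) (hab : a < b) (hb1 : b < 1) (n : ℕ) :
    Wf n a < Wf n b := by
  have hb : 0 < b := ha.trans hab
  have ha1 : a < 1 := hab.trans hb1
  have hda : 0 < 1 - a^(n+3) := by
    have := pow_lt_one₀ ha.le ha1 (show n+3 ≠ 0 by omega); linarith
  have hdb : 0 < 1 - b^(n+3) := by
    have := pow_lt_one₀ hb.le hb1 (show n+3 ≠ 0 by omega); linarith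
  rw [Wf_closed (by linarith) n (by linarith), Wf_closed (by linarith) n (by linarith),
    div_lt_div_iff₀ hda hdb]
  have key := aux_cross ha hab hb1 (n+2) (by omega)
  have expand : (b - b^(n+2)) * (1 - a^(n+3)) - (a - a^(n+2)) * (1 - b^(n+3))
      = (b - a) * (1 - (a*b)^(n+2)) - (b^(n+2) - a^(n+2)) * (1 - a*b) := by
    rw [mul_pow]; ring
  linarith

private lemma Wf_continuousOn (n : ℕ) : ContinuousOn (Wf n) (Set.Icc 0 1) := by
  apply ContinuousOn.div
  · exact (Continuous.mul continuous_id (continuous_finset_sum _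
      (fun j _ => continuous_pow j))).continuousOn
  · exact (continuous_finset_sum _ (fun j _ => continuous_pow j)).continuousOn
  · intro x hx
    exact (Wf_den_pos hx.1 n).ne'

private noncomputable def hfun (x1 x2 : ℝ) (z : ℕ → ℝ) (β : ℝ) : ℝ :=
  z 1 + x2/β - β*x1 - ∑' n : ℕ, ((n+3:ℕ):ℝ) * z (n+3) * Wf n β

private lemma split2 {f : ℕ → ℝ} (hf : Summable f) :
    ∑' n, f n = f 0 + f 1 + ∑' n, f (n+2) := by
  rw [Summable.tsum_eq_zero_add hf, Summable.tsum_eq_zero_add ((summable_nat_add_iff 1).2 hf), ← add_assoc]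

private lemma sum_c {z : ℕ → ℝ} (hsum : Summable fun k : ℕ => ((k+1:ℕ):ℝ) * z (k+1)) :
    Summable (fun n : ℕ => ((n+3:ℕ):ℝ) * z (n+3)) := by
  have h := (summable_nat_add_iff (f := fun k : ℕ => ((k+1:ℕ):ℝ) * z (k+1)) 2).2 hsum
  refine h.congr fun n => ?_
  have e : n + 2 + 1 = n + 3 := by omega
  simp only [e]

private lemma sum_cW {z : ℕ → ℝ} (hz' : ∀ n : ℕ, 0 ≤ z (n+1))
    (hsum : Summable fun k : ℕ => ((k+1:ℕ):ℝ) * z (k+1))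
    {β : ℝ} (hβ0 : 0 ≤ β) (hβ1 : β ≤ 1) :
    Summable (fun n : ℕ => ((n+3:ℕ):ℝ) * z (n+3) * Wf n β) := by
  have hc0 : ∀ n : ℕ, (0:ℝ) ≤ ((n+3:ℕ):ℝ) * z (n+3) := by
    intro n
    have := hz' (n+2)
    have e : n + 2 + 1 = n + 3 := by omega
    rw [e] at this
    positivity
  apply Summable.of_nonneg_of_le
    (fun n => mul_nonneg (hc0 n) (Wf_nonneg hβ0 n))
    (fun n => mul_le_of_le_one_right (hc0 n) (Wf_le_one hβ0 hβ1 n))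
    (sum_c hsum)

private lemma key_summable1 {z : ℕ → ℝ} (hz' : ∀ n : ℕ, 0 ≤ z (n+1))
    (hsum : Summable fun k : ℕ => ((k+1:ℕ):ℝ) * z (k+1))
    {β : ℝ} (hβ0 : 0 ≤ β) (hβ1 : β < 1) :
    Summable (fun k : ℕ => ((k+1:ℕ):ℝ) * z (k+1) / (1 - β^(k+1))) := by
  have hb : (0:ℝ) < 1 - β := by linarith
  apply Summable.of_nonneg_of_le (f := fun k : ℕ => ((k+1:ℕ):ℝ) * z (k+1) / (1 - β))
  · intro n
    have h1 : (0:ℝ) < 1 - β^(n+1) := by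
      have := pow_lt_one₀ hβ0 hβ1 (show n+1 ≠ 0 by omega); linarith
    exact div_nonneg (mul_nonneg (by positivity) (hz' n)) h1.le
  · intro n
    have h1 : (0:ℝ) < 1 - β^(n+1) := by
      have := pow_lt_one₀ hβ0 hβ1 (show n+1 ≠ 0 by omega); linarith
    have h2 : 1 - β ≤ 1 - β^(n+1) := by
      have := pow_le_of_le_one hβ0 hβ1.le (show n+1 ≠ 0 by omega); linarith
    exact div_le_div_of_nonneg_left (mul_nonneg (by positivity) (hz' n)) hb h2
  · exact hsum.div_const _

private lemma key_identity (x1 x2 : ℝ) (z : ℕ → ℝ) (hz' : ∀ n : ℕ, 0 ≤ z (n+1))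
    (hsum : Summable fun k : ℕ => ((k+1:ℕ):ℝ) * z (k+1)) {β : ℝ} (hβ0 : 0 < β) (hβ1 : β < 1) :
    (1 - β^2) * (∑' k : ℕ, ((k+1:ℕ):ℝ) * z (k+1) / (1 - β^(k+1))) + x2 - β^2 * x1
      = (∑' k : ℕ, ((k+1:ℕ):ℝ) * z (k+1)) + β * hfun x1 x2 z β := by
  have hβne : β ≠ 1 := ne_of_lt hβ1
  have hpow : ∀ m : ℕ, m ≠ 0 → (0:ℝ) < 1 - β^m := fun m hm => by
    have := pow_lt_one₀ hβ0.le hβ1 hm; linarith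
  set F : ℕ → ℝ := fun n : ℕ => ((n+1:ℕ):ℝ) * z (n+1) / (1 - β^(n+1)) with hF
  have hFs : Summable F := key_summable1 hz' hsum hβ0.le hβ1
  set g : ℕ → ℝ := fun n : ℕ => (1-β^2) * F n - ((n+1:ℕ):ℝ) * z (n+1) with hg
  have hgs : Summable g := (hFs.mul_left _).sub hsum
  have e1 : (1-β^2) * ∑' n, F n = (∑' n : ℕ, ((n+1:ℕ):ℝ) * z (n+1)) + ∑' n, g n := by
    rw [← tsum_mul_left, ← Summable.tsum_add hsum hgs]
    apply tsum_congr; intro n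
    simp only [hg]; ring
  have g0 : g 0 = β * z 1 := by
    have h1 : (1:ℝ) - β ≠ 0 := by have := hpow 1 one_ne_zero; simp at this ⊢; linarith
    simp only [hg, hF]
    norm_num
    field_simp
    ring
  have g1 : g 1 = 0 := by
    have h2 : (1:ℝ) - β^2 ≠ 0 := (hpow 2 two_ne_zero).ne'
    simp only [hg, hF]
    norm_num
    field_simp
    ring
  have g2 : ∀ n : ℕ, g (n+2) = (-β) * (((n+3:ℕ):ℝ) * z (n+3) * Wf n β) := by
    intro n
    have hd : (1:ℝ) - β^(n+3) ≠ 0 := (hpow (n+3) (by omega)).ne'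
    have e : n + 2 + 1 = n + 3 := by omega
    simp only [hg, hF, e]
    rw [Wf_closed hβne n hd]
    field_simp
    ring
  have e2 : ∑' n, g n = β * z 1 + (-β) * ∑' n : ℕ, ((n+3:ℕ):ℝ) * z (n+3) * Wf n β := by
    rw [split2 hgs, g0, g1, tsum_congr g2, tsum_mul_left]
    ring
  rw [show hfun x1 x2 z β = z 1 + x2/β - β*x1 - ∑' n : ℕ, ((n+3:ℕ):ℝ) * z (n+3) * Wf n β from rfl]
  rw [e1, e2]
  field_simp
  ring

private lemma hc0 {z : ℕ → ℝ} (hz' : ∀ n : ℕ, 0 ≤ z (n+1)) (n : ℕ) :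
    (0:ℝ) ≤ ((n+3:ℕ):ℝ) * z (n+3) := by
  have h := hz' (n+2)
  have e : n+2+1 = n+3 := by omega
  rw [e] at h
  positivity

private lemma T_continuousOn {z : ℕ → ℝ} (hz' : ∀ n : ℕ, 0 ≤ z (n+1))
    (hsum : Summable fun k : ℕ => ((k+1:ℕ):ℝ) * z (k+1)) :
    ContinuousOn (fun β => ∑' n : ℕ, ((n+3:ℕ):ℝ) * z (n+3) * Wf n β) (Set.Icc 0 1) := by
  have hb : ∀ (n : ℕ) (β : ℝ), β ∈ Set.Icc (0:ℝ) 1 →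
      ‖((n+3:ℕ):ℝ) * z (n+3) * Wf n β‖ ≤ ((n+3:ℕ):ℝ) * z (n+3) := by
    intro n β hβ
    rw [Real.norm_eq_abs, abs_of_nonneg (mul_nonneg (hc0 hz' n) (Wf_nonneg hβ.1 n))]
    exact mul_le_of_le_one_right (hc0 hz' n) (Wf_le_one hβ.1 hβ.2 n)
  exact (tendstoUniformlyOn_tsum (sum_c hsum) hb).continuousOn
    (Filter.Frequently.of_forall fun t =>
      continuousOn_finset_sum t fun n _ => continuousOn_const.mul (Wf_continuousOn n))

private lemma sum_z {z : ℕ → ℝ} (hz' : ∀ n : ℕ, 0 ≤ z (n+1))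
    (hsum : Summable fun k : ℕ => ((k+1:ℕ):ℝ) * z (k+1)) :
    Summable (fun n : ℕ => z (n+1)) := by
  apply Summable.of_nonneg_of_le hz' (fun n => ?_) hsum
  have h1 : (1:ℝ) ≤ ((n+1:ℕ):ℝ) := by push_cast; linarith [Nat.cast_nonneg (α := ℝ) n]
  nlinarith [hz' n]

private lemma hfun_one_neg (x1 x2 : ℝ) (z : ℕ → ℝ) (hz' : ∀ n : ℕ, 0 ≤ z (n+1))
    (hsum : Summable fun k : ℕ => ((k+1:ℕ):ℝ) * z (k+1))
    (hgt : (∑' k : ℕ, ((k + 1 : ℕ) : ℝ) * z (k + 1)) + (x1 - x2) >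
      2 * ∑' k : ℕ, z (k + 1)) :
    hfun x1 x2 z 1 < 0 := by
  have hZ : Summable (fun n : ℕ => z (n+1)) := sum_z hz' hsum
  set D : ℕ → ℝ := fun n : ℕ => ((n+1:ℕ):ℝ) * z (n+1) - 2 * z (n+1) with hD
  have hDs : Summable D := hsum.sub (hZ.mul_left 2)
  have hDsum : ∑' n, D n > x2 - x1 := by
    have e : ∑' n, D n = (∑' k : ℕ, ((k + 1 : ℕ) : ℝ) * z (k + 1))
        - 2 * ∑' k : ℕ, z (k + 1) := by
      rw [hD, Summable.tsum_sub hsum (hZ.mul_left 2), tsum_mul_left]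
    rw [e]; linarith [hgt]
  have hsplit : ∑' n, D n = - z 1 + ∑' n : ℕ, ((n+1:ℕ):ℝ) * z (n+3) := by
    rw [split2 hDs]
    have d0 : D 0 = - z 1 := by simp [hD]; ring
    have d1 : D 1 = 0 := by simp [hD]; ring
    have d2 : ∀ n : ℕ, D (n+2) = ((n+1:ℕ):ℝ) * z (n+3) := by
      intro n
      have e : n+2+1 = n+3 := by omega
      simp only [hD, e]
      push_cast
      ring
    rw [d0, d1, tsum_congr d2]
    ring
  have hT1 : (∑' n : ℕ, ((n+3:ℕ):ℝ) * z (n+3) * Wf n 1)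
      = ∑' n : ℕ, ((n+1:ℕ):ℝ) * z (n+3) := by
    apply tsum_congr
    intro n
    rw [Wf_one]
    have h3 : ((n+3:ℕ):ℝ) ≠ 0 := by push_cast; positivity
    field_simp
  show z 1 + x2/1 - 1*x1 - _ < 0
  rw [hT1]
  have : ∑' n : ℕ, ((n+1:ℕ):ℝ) * z (n+3) > x2 - x1 + z 1 := by linarith [hDsum, hsplit]
  simp only [div_one, one_mul]
  linarith

private lemma hfun_inj (x1 x2 : ℝ) (hx1 : 0 ≤ x1) (hx2 : 0 ≤ x2) (z : ℕ → ℝ)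
    (hz' : ∀ n : ℕ, 0 ≤ z (n+1))
    (hsum : Summable fun k : ℕ => ((k+1:ℕ):ℝ) * z (k+1))
    (hgt : (∑' k : ℕ, ((k + 1 : ℕ) : ℝ) * z (k + 1)) + (x1 - x2) >
      2 * ∑' k : ℕ, z (k + 1))
    {β1 β2 : ℝ} (h01 : 0 < β1) (h12 : β1 < β2) (h21 : β2 < 1)
    (e1 : hfun x1 x2 z β1 = 0) (e2 : hfun x1 x2 z β2 = 0) : False := by
  have h02 : 0 < β2 := h01.trans h12
  have h11 : β1 < 1 := h12.trans h21
  have hWle : ∀ n : ℕ, ((n+3:ℕ):ℝ) * z (n+3) * Wf n β1 ≤ ((n+3:ℕ):ℝ) * z (n+3) * Wf n β2 :=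
    fun n => mul_le_mul_of_nonneg_left (Wf_mono h01 h12 h21 n).le (hc0 hz' n)
  have hs1 := sum_cW hz' hsum h01.le h11.le
  have hs2 := sum_cW hz' hsum h02.le h21.le
  have hT : (∑' n : ℕ, ((n+3:ℕ):ℝ) * z (n+3) * Wf n β1)
      ≤ ∑' n : ℕ, ((n+3:ℕ):ℝ) * z (n+3) * Wf n β2 := Summable.tsum_le_tsum hWle hs1 hs2
  have hx2d : x2/β2 ≤ x2/β1 := div_le_div_of_nonneg_left hx2 h01 h12.le
  have hx1d : β1 * x1 ≤ β2 * x1 := mul_le_mul_of_nonneg_right h12.le hx1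
  have e1' : z 1 + x2/β1 - β1*x1 - (∑' n : ℕ, ((n+3:ℕ):ℝ) * z (n+3) * Wf n β1) = 0 := e1
  have e2' : z 1 + x2/β2 - β2*x1 - (∑' n : ℕ, ((n+3:ℕ):ℝ) * z (n+3) * Wf n β2) = 0 := e2
  have hTeq : (∑' n : ℕ, ((n+3:ℕ):ℝ) * z (n+3) * Wf n β1)
      = ∑' n : ℕ, ((n+3:ℕ):ℝ) * z (n+3) * Wf n β2 := by linarith
  have hx1z : x1 = 0 := by nlinarith
  have hx2z : x2 = 0 := by
    by_contra hne
    have hx2p : 0 < x2 := lt_of_le_of_ne hx2 (Ne.symm hne)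
    have : x2/β2 < x2/β1 := div_lt_div_of_pos_left hx2p h01 h12
    linarith
  have hz3 : ∀ n : ℕ, z (n+3) = 0 := by
    intro n
    by_contra hne
    have e : n+2+1 = n+3 := by omega
    have hzn : 0 < z (n+3) := lt_of_le_of_ne (e ▸ hz' (n+2)) (Ne.symm hne)
    have hcn : 0 < ((n+3:ℕ):ℝ) * z (n+3) := by positivity
    have hstrict : ((n+3:ℕ):ℝ) * z (n+3) * Wf n β1 < ((n+3:ℕ):ℝ) * z (n+3) * Wf n β2 :=
      mul_lt_mul_of_pos_left (Wf_mono h01 h12 h21 n) hcn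
    exact absurd hTeq (ne_of_lt (Summable.tsum_lt_tsum hWle hstrict hs1 hs2))
  -- now compute tsums
  have hA2 : ∀ n : ℕ, ((n+2+1:ℕ):ℝ) * z (n+2+1) = 0 := by
    intro n
    have e : n+2+1 = n+3 := by omega
    rw [e, hz3 n, mul_zero]
  have hS : (∑' k : ℕ, ((k + 1 : ℕ) : ℝ) * z (k + 1)) = z 1 + 2 * z 2 := by
    rw [split2 hsum, tsum_congr hA2, tsum_zero]
    norm_num
  have hZ : Summable (fun n : ℕ => z (n+1)) := sum_z hz' hsum
  have hZv : (∑' k : ℕ, z (k + 1)) = z 1 + z 2 := by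
    rw [split2 hZ]
    have : ∀ n : ℕ, z (n+2+1) = 0 := fun n => by
      have e : n+2+1 = n+3 := by omega
      rw [e, hz3 n]
    rw [tsum_congr this, tsum_zero]
    norm_num
  rw [hS, hZv, hx1z, hx2z] at hgt
  linarith [hz' 0]

private lemma hfun_pos (x1 x2 : ℝ) (hx1 : 0 ≤ x1) (hx2 : 0 ≤ x2) (z : ℕ → ℝ)
    (hz' : ∀ n : ℕ, 0 ≤ z (n+1))
    (hsum : Summable fun k : ℕ => ((k+1:ℕ):ℝ) * z (k+1))
    {β : ℝ} (hβ0 : 0 < β) (hβ1 : β ≤ 1)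
    (hsmall : β * (x1 + ∑' k : ℕ, ((k + 1 : ℕ) : ℝ) * z (k + 1)) ≤ (z 1 + x2)/2)
    (hzx : 0 < z 1 + x2) :
    0 < hfun x1 x2 z β := by
  have hsW := sum_cW hz' hsum hβ0.le hβ1
  have hterm : ∀ n : ℕ, ((n+3:ℕ):ℝ) * z (n+3) * Wf n β ≤ ((n+3:ℕ):ℝ) * z (n+3) * β :=
    fun n => mul_le_mul_of_nonneg_left (Wf_le_beta hβ0.le hβ1 n) (hc0 hz' n)
  have hsum_cβ : Summable (fun n : ℕ => ((n+3:ℕ):ℝ) * z (n+3) * β) :=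
    (sum_c hsum).mul_right β
  have hT1 : (∑' n : ℕ, ((n+3:ℕ):ℝ) * z (n+3) * Wf n β)
      ≤ (∑' n : ℕ, ((n+3:ℕ):ℝ) * z (n+3)) * β := by
    rw [← tsum_mul_right]
    exact Summable.tsum_le_tsum hterm hsW hsum_cβ
  have hsplitS : (∑' k : ℕ, ((k + 1 : ℕ) : ℝ) * z (k + 1))
      = ((0+1:ℕ):ℝ) * z (0+1) + ((1+1:ℕ):ℝ) * z (1+1)
        + ∑' n : ℕ, ((n+2+1:ℕ):ℝ) * z (n+2+1) := split2 hsum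
  have ec : ∑' n : ℕ, ((n+2+1:ℕ):ℝ) * z (n+2+1) = ∑' n : ℕ, ((n+3:ℕ):ℝ) * z (n+3) := by
    apply tsum_congr
    intro n
    have e : n+2+1 = n+3 := by omega
    rw [e]
  have hcS : (∑' n : ℕ, ((n+3:ℕ):ℝ) * z (n+3)) ≤ ∑' k : ℕ, ((k + 1 : ℕ) : ℝ) * z (k + 1) := by
    rw [hsplitS, ec]
    have h0 : (0:ℝ) ≤ ((0+1:ℕ):ℝ) * z (0+1) := mul_nonneg (by norm_num) (hz' 0)
    have h1 : (0:ℝ) ≤ ((1+1:ℕ):ℝ) * z (1+1) := mul_nonneg (by norm_num) (hz' 1)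
    linarith
  have hT2 : (∑' n : ℕ, ((n+3:ℕ):ℝ) * z (n+3) * Wf n β)
      ≤ (∑' k : ℕ, ((k + 1 : ℕ) : ℝ) * z (k + 1)) * β :=
    hT1.trans (mul_le_mul_of_nonneg_right hcS hβ0.le)
  have hx2b : x2 ≤ x2/β := by
    rw [le_div_iff₀ hβ0]; nlinarith
  show 0 < z 1 + x2/β - β*x1 - ∑' n : ℕ, ((n+3:ℕ):ℝ) * z (n+3) * Wf n β
  nlinarith [hT2, hx2b, hsmall]

/-- Let x₀⁽¹⁾, x₀⁽²⁾ ≥ 0 and z = (z_k)_{k≥1} nonnegative with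
∑ k·z_k < ∞. Assume ∑ k·z_k + (x₀⁽¹⁾ − x₀⁽²⁾) > 2·∑ z_k and (x₀⁽²⁾ > 0 or z_1 > 0).
Then there is a unique β ∈ (0,1) with
∑ k·z_k = (1 − β²)·∑ k·z_k/(1 − β^k) + x₀⁽²⁾ − β²·x₀⁽¹⁾. -/
theorem stmt6 (x1 x2 : ℝ) (hx1 : 0 ≤ x1) (hx2 : 0 ≤ x2)
    (z : ℕ → ℝ) (hz : ∀ k, 1 ≤ k → 0 ≤ z k)
    (hsum : Summable (fun k : ℕ => ((k + 1 : ℕ) : ℝ) * z (k + 1)))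
    (hgt : (∑' k : ℕ, ((k + 1 : ℕ) : ℝ) * z (k + 1)) + (x1 - x2) >
      2 * ∑' k : ℕ, z (k + 1))
    (hpos : 0 < x2 ∨ 0 < z 1) :
    ∃! β : ℝ, β ∈ Set.Ioo (0 : ℝ) 1 ∧
      (∑' k : ℕ, ((k + 1 : ℕ) : ℝ) * z (k + 1)) =
        (1 - β ^ 2) * (∑' k : ℕ, ((k + 1 : ℕ) : ℝ) * z (k + 1) / (1 - β ^ (k + 1))) +
          x2 - β ^ 2 * x1 := by
  have hz' : ∀ n : ℕ, 0 ≤ z (n+1) := fun n => hz (n+1) (by omega)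
  have hzx : 0 < z 1 + x2 := by
    rcases hpos with h | h
    · linarith [hz' 0]
    · linarith
  set S := ∑' k : ℕ, ((k + 1 : ℕ) : ℝ) * z (k + 1) with hSdef
  have hS0 : 0 ≤ S := tsum_nonneg fun n => mul_nonneg (by positivity) (hz' n)
  set a : ℝ := min (1/2) ((z 1 + x2)/(2*(x1 + S + 1))) with hadef
  have hd : (0:ℝ) < 2*(x1 + S + 1) := by linarith
  have ha0 : 0 < a := lt_min (by norm_num) (div_pos hzx hd)
  have ha1 : a < 1 := lt_of_le_of_lt (min_le_left _ _) (by norm_num)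
  have hsmall : a * (x1 + S) ≤ (z 1 + x2)/2 := by
    have h1 : a ≤ (z 1 + x2)/(2*(x1 + S + 1)) := min_le_right _ _
    have h2 : a * (x1 + S) ≤ (z 1 + x2)/(2*(x1 + S + 1)) * (x1 + S) :=
      mul_le_mul_of_nonneg_right h1 (by linarith)
    have h3 : (z 1 + x2)/(2*(x1 + S + 1)) * (x1 + S) ≤ (z 1 + x2)/2 := by
      rw [div_mul_eq_mul_div, div_le_div_iff₀ hd two_pos]
      nlinarith
    linarith
  -- continuity of hfun on [a,1]
  have hsub : Set.Icc a 1 ⊆ Set.Icc (0:ℝ) 1 :=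
    Set.Icc_subset_Icc ha0.le le_rfl
  have hcont : ContinuousOn (hfun x1 x2 z) (Set.Icc a 1) := by
    have c1 : ContinuousOn (fun β : ℝ => x2/β) (Set.Icc a 1) := by
      apply ContinuousOn.div continuousOn_const continuousOn_id
      intro β hβ
      have : a ≤ β := hβ.1
      exact ne_of_gt (lt_of_lt_of_le ha0 this)
    have c2 : ContinuousOn (fun β : ℝ => ∑' n : ℕ, ((n+3:ℕ):ℝ) * z (n+3) * Wf n β)
        (Set.Icc a 1) := (T_continuousOn hz' hsum).mono hsub
    exact ((continuousOn_const.add c1).sub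
      (continuousOn_id.mul continuousOn_const)).sub c2
  -- endpoint values
  have hpos_a : 0 < hfun x1 x2 z a :=
    hfun_pos x1 x2 hx1 hx2 z hz' hsum ha0 ha1.le (by linarith [hsmall]) hzx
  have hneg_1 : hfun x1 x2 z 1 < 0 := hfun_one_neg x1 x2 z hz' hsum hgt
  -- IVT
  have hivt := intermediate_value_Icc' ha1.le hcont
  have h0mem : (0:ℝ) ∈ Set.Icc (hfun x1 x2 z 1) (hfun x1 x2 z a) :=
    ⟨hneg_1.le, hpos_a.le⟩
  obtain ⟨β, hβmem, hβzero⟩ := hivt h0mem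
  have hβ0 : 0 < β := lt_of_lt_of_le ha0 hβmem.1
  have hβ1 : β < 1 := by
    rcases lt_or_eq_of_le hβmem.2 with h | h
    · exact h
    · exfalso; rw [h] at hβzero; linarith [hβzero, hneg_1]
  refine ⟨β, ⟨⟨hβ0, hβ1⟩, ?_⟩, ?_⟩
  · rw [key_identity x1 x2 z hz' hsum hβ0 hβ1, hβzero, mul_zero, add_zero]
  · rintro y ⟨⟨hy0, hy1⟩, hyeq⟩
    rw [key_identity x1 x2 z hz' hsum hy0 hy1] at hyeq
    have hyzero : hfun x1 x2 z y = 0 := by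
      have : y * hfun x1 x2 z y = 0 := by linarith
      rcases mul_eq_zero.1 this with h | h
      · exact absurd h (ne_of_gt hy0)
      · exact h
    rcases lt_trichotomy y β with h | h | h
    · exact absurd (hfun_inj x1 x2 hx1 hx2 z hz' hsum hgt hy0 h hβ1 hyzero hβzero) id
    · exact h
    · exact absurd (hfun_inj x1 x2 hx1 hx2 z hz' hsum hgt hβ0 h hy1 hβzero hyzero) id
end

section
/- Assume in addition that ∑_{k≥1} k²·p_k < ∞, that ∑_{k≥1} k·(k−2)·p_k ≤ 0, and that T ≥ μ/2 where μ = ∑_{k≥1} k·p_k. Define G_0(u) = ∑_{k≥1} p_k·u^k for u ∈ [0,1], and F_1(t) = G_0(1) − G_0(t) = 1 − G_0(t); F_1 is a continuous strictly decreasing bijection of [0,1] onto [0,1], and set f_1(t) = F_1⁻¹(t) for 0 ≤ t ≤ 1 and f_1(t) = 0 for t > 1. Define ζ_0(t) = 0, ζ_k(t) = p_k·(f_1(t))^k for k ≥ 1, and ψ(t) = −2·∫_0^t r_0(ζ(s)) ds + ∑_{k≥1} (k−2)·(p_k − ζ_k(t)). Then (ζ, ψ) ∈ C_T and I_T(ζ,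 ψ) = 0. -/
open MeasureTheory
open scoped ENNReal

/-- r(x) = max(x₀,0) + ∑_{k≥1} k·x_k. -/
noncomputable def rtot (x : ℕ → ℝ) : ℝ :=
  max (x 0) 0 + ∑' k : ℕ, ((k + 1 : ℕ) : ℝ) * x (k + 1)

open Classical in
/-- r_k(x): if 0 < r(x) < ∞ (finiteness encoded as summability of k·x_k) then
r_0(x) = max(x₀,0)/r(x) and r_k(x) = k·x_k/r(x) for k ≥ 1; otherwise r_k(x) = 0. -/
noncomputable def rcoord (x : ℕ → ℝ) (k : ℕ) : ℝ :=
  if 0 < rtot x ∧ Summable (fun j : ℕ => ((j + 1 : ℕ) : ℝ) * x (j + 1)) then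
    (if k = 0 then max (x 0) 0 / rtot x else (k : ℝ) * x k / rtot x)
  else 0

/-- The one-dimensional Skorokhod map: Γ(ψ)(t) = ψ(t) − min(inf_{0≤s≤t} ψ(s), 0). -/
noncomputable def Skorokhod (ψ : ℝ → ℝ) (t : ℝ) : ℝ :=
  ψ t - min (sInf (ψ '' Set.Icc 0 t)) 0

/-- f is absolutely continuous on [0,T]: f(t) = f(0) + ∫₀ᵗ g for some g ∈ L¹([0,T]). -/
def AbsContOn (f : ℝ → ℝ) (T : ℝ) : Prop :=
  ∃ g : ℝ → ℝ, MeasureTheory.IntegrableOn g (Set.Icc 0 T) ∧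
    ∀ t ∈ Set.Icc (0 : ℝ) T, f t = f 0 + ∫ s in (0 : ℝ)..t, g s

/-- (ζ, ψ) ∈ C_T. -/
def memCT (T : ℝ) (p : ℕ → ℝ) (ζ : ℝ → ℕ → ℝ) (ψ : ℝ → ℝ) : Prop :=
  (∀ k : ℕ, ContinuousOn (fun t => ζ t k) (Set.Icc 0 T)) ∧
  ContinuousOn ψ (Set.Icc 0 T) ∧
  ψ 0 = 0 ∧ AbsContOn ψ T ∧
  (∀ t ∈ Set.Icc (0 : ℝ) T, ζ t 0 = Skorokhod ψ t) ∧
  (∀ k : ℕ, 1 ≤ k →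
    ζ 0 k = p k ∧ (∀ t ∈ Set.Icc (0 : ℝ) T, 0 ≤ ζ t k) ∧
    AntitoneOn (fun t => ζ t k) (Set.Icc 0 T) ∧ AbsContOn (fun t => ζ t k) T)

/-- φ ∈ S_T(ζ, ψ). -/
def memST (T : ℝ) (p : ℕ → ℝ) (ζ : ℝ → ℕ → ℝ) (ψ : ℝ → ℝ)
    (φ : ℕ → ℝ → ℝ → ℝ) : Prop :=
  (∀ k, Measurable (Function.uncurry (φ k))) ∧
  (∀ k s y, 0 ≤ φ k s y) ∧
  (∀ t ∈ Set.Icc (0 : ℝ) T,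
    ψ t = ∑' k : ℕ, ((k : ℝ) - 2) *
      ∫ s in (0 : ℝ)..t, ∫ y in (0 : ℝ)..1,
        (if y < rcoord (ζ s) k then φ k s y else 0)) ∧
  (∀ k : ℕ, 1 ≤ k → ∀ t ∈ Set.Icc (0 : ℝ) T,
    ζ t k = p k - ∫ s in (0 : ℝ)..t, ∫ y in (0 : ℝ)..1,
      (if y < rcoord (ζ s) k then φ k s y else 0))

/-- ℓ(u) = u·log u − u + 1 (so ℓ(0) = 1, using `Real.log 0 = 0`). -/
noncomputable def ellFn (u : ℝ) : ℝ := u * Real.log u - u + 1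

/-- The cost ∑_{k≥0} ∫_{[0,T]×[0,1]} ℓ(φ_k(s,y)) ds dy of a control, in [0,∞]. -/
noncomputable def costOf (T : ℝ) (φ : ℕ → ℝ → ℝ → ℝ) : ℝ≥0∞ :=
  ∑' k : ℕ, ∫⁻ s in Set.Icc (0 : ℝ) T, ∫⁻ y in Set.Icc (0 : ℝ) 1,
    ENNReal.ofReal (ellFn (φ k s y))

open Classical in
/-- The rate function I_T, equal to +∞ off C_T (and inf ∅ = +∞). -/
noncomputable def IT (T : ℝ) (p : ℕ → ℝ) (ζ : ℝ → ℕ → ℝ) (ψ : ℝ → ℝ) : ℝ≥0∞ :=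
  if memCT T p ζ ψ then
    ⨅ (φ : ℕ → ℝ → ℝ → ℝ) (_ : memST T p ζ ψ φ), costOf T φ
  else ⊤


open Set

noncomputable def Gser (p : ℕ → ℝ) (u : ℝ) : ℝ := ∑' k : ℕ, p (k+1) * u^(k+1)
/-- derivative series -/
noncomputable def Done (p : ℕ → ℝ) (u : ℝ) : ℝ := ∑' k : ℕ, ((k+1:ℕ):ℝ) * p (k+1) * u^k

section aux
variable {p : ℕ → ℝ}

lemma sumq (hp1 : (∑' k : ℕ, p (k+1)) = 1) : Summable (fun k : ℕ => p (k+1)) := by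
  by_contra h
  rw [tsum_eq_zero_of_not_summable h] at hp1
  norm_num at hp1

lemma sumkq (hq0 : ∀ k : ℕ, 0 ≤ p (k+1))
    (hp2 : Summable (fun k : ℕ => ((k + 1 : ℕ) : ℝ) ^ 2 * p (k + 1))) :
    Summable (fun k : ℕ => ((k+1:ℕ):ℝ) * p (k+1)) := by
  refine Summable.of_nonneg_of_le (fun k => mul_nonneg (by positivity) (hq0 k)) (fun k => ?_) hp2
  have h1 : (1:ℝ) ≤ ((k+1:ℕ):ℝ) := by exact_mod_cast Nat.one_le_iff_ne_zero.2 (by omega)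
  nlinarith [mul_nonneg (mul_nonneg (show (0:ℝ) ≤ ((k+1:ℕ):ℝ) by positivity) (hq0 k)) (sub_nonneg.2 h1)]

lemma sumk2q (hq0 : ∀ k : ℕ, 0 ≤ p (k+1))
    (hp2 : Summable (fun k : ℕ => ((k + 1 : ℕ) : ℝ) ^ 2 * p (k + 1))) :
    Summable (fun k : ℕ => ((k+1:ℕ):ℝ) * (((k+1:ℕ):ℝ) - 2) * p (k+1)) := by
  apply Summable.of_norm
  refine Summable.of_nonneg_of_le (fun k => norm_nonneg _) (fun k => ?_) (hp2.mul_left 3)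
  have h1 : (1:ℝ) ≤ ((k+1:ℕ):ℝ) := by exact_mod_cast Nat.one_le_iff_ne_zero.2 (by omega)
  have hq := hq0 k
  rw [Real.norm_eq_abs, abs_mul, abs_mul, abs_of_nonneg hq]
  have : |(((k+1:ℕ):ℝ))| = ((k+1:ℕ):ℝ) := abs_of_nonneg (by positivity)
  rw [this]
  have h2 : |(((k+1:ℕ):ℝ) - 2)| ≤ 3 * ((k+1:ℕ):ℝ) := by
    rw [abs_le]; constructor <;> nlinarith
  have h3 : (0:ℝ) ≤ ((k+1:ℕ):ℝ) := by positivity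
  calc ((k+1:ℕ):ℝ) * |(((k+1:ℕ):ℝ) - 2)| * p (k+1)
      ≤ ((k+1:ℕ):ℝ) * (3 * ((k+1:ℕ):ℝ)) * p (k+1) := by
        apply mul_le_mul_of_nonneg_right _ hq
        exact mul_le_mul_of_nonneg_left h2 h3
    _ = 3 * (((k+1:ℕ):ℝ)^2 * p (k+1)) := by ring

/-- summability of the Gser terms for |u| ≤ 1 -/
lemma sumGterm (hq0 : ∀ k : ℕ, 0 ≤ p (k+1)) (hp1 : (∑' k : ℕ, p (k+1)) = 1)
    {u : ℝ} (hu : |u| ≤ 1) : Summable (fun k : ℕ => p (k+1) * u^(k+1)) := by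
  apply Summable.of_norm
  refine Summable.of_nonneg_of_le (fun k => norm_nonneg _) (fun k => ?_) (sumq hp1)
  rw [Real.norm_eq_abs, abs_mul, abs_of_nonneg (hq0 k), abs_pow]
  calc p (k+1) * |u| ^ (k+1) ≤ p (k+1) * 1 := by
        apply mul_le_mul_of_nonneg_left _ (hq0 k)
        exact pow_le_one₀ (abs_nonneg u) hu
    _ = p (k+1) := mul_one _

lemma sumDterm (hq0 : ∀ k : ℕ, 0 ≤ p (k+1))
    (hp2 : Summable (fun k : ℕ => ((k + 1 : ℕ) : ℝ) ^ 2 * p (k + 1)))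
    {u : ℝ} (hu : |u| ≤ 1) : Summable (fun k : ℕ => ((k+1:ℕ):ℝ) * p (k+1) * u^k) := by
  apply Summable.of_norm
  refine Summable.of_nonneg_of_le (fun k => norm_nonneg _) (fun k => ?_) (sumkq hq0 hp2)
  rw [Real.norm_eq_abs, abs_mul, abs_mul, abs_of_nonneg (hq0 k), abs_pow,
    abs_of_nonneg (show (0:ℝ) ≤ ((k+1:ℕ):ℝ) by positivity)]
  calc ((k+1:ℕ):ℝ) * p (k+1) * |u| ^ k ≤ ((k+1:ℕ):ℝ) * p (k+1) * 1 := by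
        apply mul_le_mul_of_nonneg_left _ (mul_nonneg (by positivity) (hq0 k))
        exact pow_le_one₀ (abs_nonneg u) hu
    _ = _ := mul_one _

lemma contGser (hq0 : ∀ k : ℕ, 0 ≤ p (k+1)) (hp1 : (∑' k : ℕ, p (k+1)) = 1) :
    ContinuousOn (Gser p) (Icc (0:ℝ) 1) := by
  apply continuousOn_tsum (u := fun k => p (k+1))
    (fun i => (continuous_const.mul ((continuous_pow (i+1)))).continuousOn) (sumq hp1)
  intro n x hx
  simp only [Pi.mul_apply]
  rw [Real.norm_eq_abs, abs_mul, abs_of_nonneg (hq0 n), abs_pow]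
  calc p (n+1) * |x| ^ (n+1) ≤ p (n+1) * 1 := by
        apply mul_le_mul_of_nonneg_left _ (hq0 n)
        exact pow_le_one₀ (abs_nonneg x) (abs_le.2 ⟨by linarith [hx.1], hx.2⟩)
    _ = p (n+1) := mul_one _

lemma contDone (hq0 : ∀ k : ℕ, 0 ≤ p (k+1))
    (hp2 : Summable (fun k : ℕ => ((k + 1 : ℕ) : ℝ) ^ 2 * p (k + 1))) :
    ContinuousOn (Done p) (Icc (0:ℝ) 1) := by
  apply continuousOn_tsum (u := fun k => ((k+1:ℕ):ℝ) * p (k+1))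
    (fun i => ((continuous_const.mul (continuous_pow i))).continuousOn) (sumkq hq0 hp2)
  intro n x hx
  simp only [Pi.mul_apply]
  rw [Real.norm_eq_abs, abs_mul, abs_pow,
      abs_of_nonneg (mul_nonneg (show (0:ℝ) ≤ ((n+1:ℕ):ℝ) by positivity) (hq0 n))]
  calc ((n+1:ℕ):ℝ) * p (n+1) * |x| ^ n ≤ ((n+1:ℕ):ℝ) * p (n+1) * 1 := by
        apply mul_le_mul_of_nonneg_left _ (mul_nonneg (by positivity) (hq0 n))
        exact pow_le_one₀ (abs_nonneg x) (abs_le.2 ⟨by linarith [hx.1], hx.2⟩)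
    _ = _ := mul_one _

lemma Gser_zero : Gser p 0 = 0 := by
  simp [Gser]

lemma Gser_one (hp1 : (∑' k : ℕ, p (k+1)) = 1) : Gser p 1 = 1 := by
  simp [Gser, hp1]

lemma exists_pos (hq0 : ∀ k : ℕ, 0 ≤ p (k+1)) (hp1 : (∑' k : ℕ, p (k+1)) = 1) :
    ∃ k0 : ℕ, 0 < p (k0+1) := by
  by_contra h
  push_neg at h
  have : ∀ k : ℕ, p (k+1) = 0 := fun k => le_antisymm (h k) (hq0 k)
  rw [tsum_congr (fun k => this k)] at hp1
  simp at hp1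

lemma strictMonoGser (hq0 : ∀ k : ℕ, 0 ≤ p (k+1)) (hp1 : (∑' k : ℕ, p (k+1)) = 1) :
    StrictMonoOn (Gser p) (Icc (0:ℝ) 1) := by
  obtain ⟨k0, hk0⟩ := exists_pos hq0 hp1
  intro u hu v hv huv
  have h1 : ∀ k : ℕ, p (k+1) * u^(k+1) ≤ p (k+1) * v^(k+1) := fun k => by
    apply mul_le_mul_of_nonneg_left _ (hq0 k)
    exact pow_le_pow_left₀ hu.1 huv.le _
  have h2 : p (k0+1) * u^(k0+1) < p (k0+1) * v^(k0+1) := by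
    apply mul_lt_mul_of_pos_left _ hk0
    exact pow_lt_pow_left₀ huv hu.1 (by omega)
  exact Summable.tsum_lt_tsum h1 h2 (sumGterm hq0 hp1 (abs_le.2 ⟨by linarith [hu.1], hu.2⟩))
    (sumGterm hq0 hp1 (abs_le.2 ⟨by linarith [hv.1], hv.2⟩))

lemma hasDerivAtGser (hq0 : ∀ k : ℕ, 0 ≤ p (k+1)) (hp1 : (∑' k : ℕ, p (k+1)) = 1)
    (hp2 : Summable (fun k : ℕ => ((k + 1 : ℕ) : ℝ) ^ 2 * p (k + 1)))
    {u : ℝ} (hu : u ∈ Ioo (-1:ℝ) 1) :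
    HasDerivAt (Gser p) (Done p u) u := by
  apply hasDerivAt_tsum_of_isPreconnected (u := fun k => ((k+1:ℕ):ℝ) * p (k+1))
    (sumkq hq0 hp2) isOpen_Ioo (isPreconnected_Ioo) (y₀ := 0)
    (g' := fun k y => ((k+1:ℕ):ℝ) * p (k+1) * y^k)
  · intro n y _
    simpa [mul_comm, mul_assoc, mul_left_comm] using
      (hasDerivAt_pow (n+1) y).const_mul (p (n+1))
  · intro n y hy
    rw [Real.norm_eq_abs, abs_mul, abs_mul, abs_of_nonneg (hq0 n), abs_pow,
      abs_of_nonneg (show (0:ℝ) ≤ ((n+1:ℕ):ℝ) by positivity)]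
    calc ((n+1:ℕ):ℝ) * p (n+1) * |y| ^ n ≤ ((n+1:ℕ):ℝ) * p (n+1) * 1 := by
          apply mul_le_mul_of_nonneg_left _ (mul_nonneg (by positivity) (hq0 n))
          exact pow_le_one₀ (abs_nonneg y) (abs_le.2 ⟨hy.1.le, hy.2.le⟩)
      _ = _ := mul_one _
  · exact ⟨by norm_num, by norm_num⟩
  · exact summable_zero.congr (fun n => by simp)
  · exact hu

lemma DonePos (hq0 : ∀ k : ℕ, 0 ≤ p (k+1)) (hp1 : (∑' k : ℕ, p (k+1)) = 1)
    (hp2 : Summable (fun k : ℕ => ((k + 1 : ℕ) : ℝ) ^ 2 * p (k + 1)))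
    {u : ℝ} (hu0 : 0 < u) (hu1 : u ≤ 1) : 0 < Done p u := by
  obtain ⟨k0, hk0⟩ := exists_pos hq0 hp1
  have habs : |u| ≤ 1 := abs_le.2 ⟨by linarith, hu1⟩
  have hle : ((k0+1:ℕ):ℝ) * p (k0+1) * u^k0 ≤ Done p u := by
    apply Summable.le_tsum (sumDterm hq0 hp2 habs) k0
    intro j _
    exact mul_nonneg (mul_nonneg (by positivity) (hq0 j)) (by positivity)
  calc (0:ℝ) < ((k0+1:ℕ):ℝ) * p (k0+1) * u^k0 := by
        apply mul_pos (mul_pos (by positivity) hk0) (by positivity)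
    _ ≤ Done p u := hle

/-- k p_k u^(k-1) is a term of Done -/
lemma term_le_Done (hq0 : ∀ k : ℕ, 0 ≤ p (k+1))
    (hp2 : Summable (fun k : ℕ => ((k + 1 : ℕ) : ℝ) ^ 2 * p (k + 1)))
    {u : ℝ} (hu0 : 0 ≤ u) (hu1 : u ≤ 1) (k : ℕ) :
    ((k+1:ℕ):ℝ) * p (k+1) * u^k ≤ Done p u := by
  apply Summable.le_tsum (sumDterm hq0 hp2 (abs_le.2 ⟨by linarith, hu1⟩)) k
  intro j _
  exact mul_nonneg (mul_nonneg (by positivity) (hq0 j)) (by positivity)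

end aux


noncomputable def clamp01 (s : ℝ) : ℝ := min (max s 0) 1
noncomputable def Fc (f1 : ℝ → ℝ) (s : ℝ) : ℝ := f1 (clamp01 s)

lemma clamp01_mem (s : ℝ) : clamp01 s ∈ Icc (0:ℝ) 1 :=
  ⟨le_min (le_max_right _ _) zero_le_one, min_le_right _ _⟩

lemma clamp01_continuous : Continuous clamp01 :=
  (continuous_id.max continuous_const).min continuous_const

lemma clamp01_of_mem {s : ℝ} (h0 : 0 ≤ s) (h1 : s ≤ 1) : clamp01 s = s := by
  unfold clamp01; rw [max_eq_left h0, min_eq_left h1]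

lemma clamp01_of_ge {s : ℝ} (h1 : 1 ≤ s) : clamp01 s = 1 := by
  unfold clamp01; rw [max_eq_left (by linarith), min_eq_right h1]

lemma clamp01_mono : Monotone clamp01 :=
  fun a b hab => min_le_min (max_le_max hab (le_refl 0)) (le_refl 1)

section aux2
variable {p : ℕ → ℝ} {f1 : ℝ → ℝ}
variable (hq0 : ∀ k : ℕ, 0 ≤ p (k+1)) (hp1 : (∑' k : ℕ, p (k+1)) = 1)
  (hp2 : Summable (fun k : ℕ => ((k + 1 : ℕ) : ℝ) ^ 2 * p (k + 1)))
  (hf1a : ∀ t ∈ Icc (0:ℝ) 1, f1 t ∈ Icc (0:ℝ) 1)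
  (hf1b : ∀ t ∈ Icc (0:ℝ) 1, Gser p (f1 t) = 1 - t)
  (hf1c : ∀ t : ℝ, 1 < t → f1 t = 0)

include hq0 hp1 hf1a hf1b hf1c

lemma f1_zero : f1 0 = 1 := by
  have h1 : Gser p (f1 0) = 1 := by
    have := hf1b 0 (by norm_num); simpa using this
  apply (strictMonoGser hq0 hp1).injOn (hf1a 0 (by norm_num))
    (right_mem_Icc.2 zero_le_one)
  rw [h1, Gser_one hp1]

lemma f1_one : f1 1 = 0 := by
  have h1 : Gser p (f1 1) = 0 := by
    have := hf1b 1 (by norm_num); simpa using this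
  apply (strictMonoGser hq0 hp1).injOn (hf1a 1 (by norm_num))
    (left_mem_Icc.2 zero_le_one)
  rw [h1, Gser_zero]

lemma f1_strictAnti : StrictAntiOn f1 (Icc (0:ℝ) 1) := by
  intro t ht t' ht' htt'
  by_contra h
  push_neg at h
  have h2 : Gser p (f1 t) ≤ Gser p (f1 t') :=
    (strictMonoGser hq0 hp1).monotoneOn (hf1a t ht) (hf1a t' ht') h
  rw [hf1b t ht, hf1b t' ht'] at h2
  linarith

lemma f1_contOn : ContinuousOn f1 (Icc (0:ℝ) 1) := by
  letI : CompactSpace (Icc (0:ℝ) 1) := isCompact_iff_compactSpace.mp isCompact_Icc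
  have hmem : ∀ u : Icc (0:ℝ) 1, 1 - Gser p u.1 ∈ Icc (0:ℝ) 1 := by
    intro u
    have h0 : Gser p 0 ≤ Gser p u.1 :=
      (strictMonoGser hq0 hp1).monotoneOn (left_mem_Icc.2 zero_le_one) u.2 u.2.1
    have h1 : Gser p u.1 ≤ Gser p 1 :=
      (strictMonoGser hq0 hp1).monotoneOn u.2 (right_mem_Icc.2 zero_le_one) u.2.2
    rw [Gser_zero] at h0
    rw [Gser_one hp1] at h1
    exact ⟨by linarith, by linarith⟩
  set F : Icc (0:ℝ) 1 → Icc (0:ℝ) 1 := fun u => ⟨1 - Gser p u.1, hmem u⟩ with hF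
  have hFcont : Continuous F := by
    apply Continuous.subtype_mk
    exact continuous_const.sub ((contGser hq0 hp1).restrict)
  have hFbij : Function.Bijective F := by
    constructor
    · intro u v huv
      have : Gser p u.1 = Gser p v.1 := by
        have := Subtype.ext_iff.1 huv; simp only [hF] at this; linarith
      exact Subtype.ext ((strictMonoGser hq0 hp1).injOn u.2 v.2 this)
    · intro t
      refine ⟨⟨f1 t.1, hf1a t.1 t.2⟩, ?_⟩
      apply Subtype.ext
      simp only [hF]
      rw [hf1b t.1 t.2]
      ring
  let e : Icc (0:ℝ) 1 ≃ Icc (0:ℝ) 1 := Equiv.ofBijective F hFbij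
  have he : Continuous (e : Icc (0:ℝ) 1 → Icc (0:ℝ) 1) := hFcont
  let h : Icc (0:ℝ) 1 ≃ₜ Icc (0:ℝ) 1 := he.homeoOfEquivCompactToT2 (f := e)
  have hsymm : ∀ t : Icc (0:ℝ) 1, h.symm t = ⟨f1 t.1, hf1a t.1 t.2⟩ := by
    intro t
    have hFt : h ⟨f1 t.1, hf1a t.1 t.2⟩ = t := by
      apply Subtype.ext
      show 1 - Gser p (f1 t.1) = t.1
      rw [hf1b t.1 t.2]; ring
    calc h.symm t = h.symm (h ⟨f1 t.1, hf1a t.1 t.2⟩) := by rw [hFt]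
      _ = ⟨f1 t.1, hf1a t.1 t.2⟩ := h.symm_apply_apply _
  rw [continuousOn_iff_continuous_restrict]
  have : (Icc (0:ℝ) 1).restrict f1 = fun t => (h.symm t : ℝ) := by
    funext t
    rw [hsymm t]
    rfl
  change Continuous ((Icc (0:ℝ) 1).restrict f1); rw [this]
  exact continuous_subtype_val.comp h.symm.continuous


lemma Fc_eq {s : ℝ} (hs : 0 ≤ s) : Fc f1 s = f1 s := by
  unfold Fc
  rcases le_or_gt s 1 with h | h
  · rw [clamp01_of_mem hs h]
  · rw [clamp01_of_ge h.le, f1_one hq0 hp1 hf1a hf1b hf1c, hf1c s h]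

lemma Fc_cont : Continuous (Fc f1) := by
  exact (f1_contOn hq0 hp1 hf1a hf1b hf1c).comp_continuous clamp01_continuous clamp01_mem

lemma Fc_mem (s : ℝ) : Fc f1 s ∈ Icc (0:ℝ) 1 := hf1a _ (clamp01_mem s)

lemma Fc_zero : Fc f1 0 = 1 := by
  rw [Fc_eq hq0 hp1 hf1a hf1b hf1c (le_refl 0), f1_zero hq0 hp1 hf1a hf1b hf1c]

lemma Fc_of_ge {s : ℝ} (hs : 1 ≤ s) : Fc f1 s = 0 := by
  unfold Fc
  rw [clamp01_of_ge hs, f1_one hq0 hp1 hf1a hf1b hf1c]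

lemma Fc_anti : Antitone (Fc f1) := by
  intro a b hab
  exact ((f1_strictAnti hq0 hp1 hf1a hf1b hf1c).antitoneOn) (clamp01_mem a) (clamp01_mem b)
    (clamp01_mono hab)

lemma Fc_pos {s : ℝ} (hs : s < 1) : 0 < Fc f1 s := by
  have h1 : clamp01 s < 1 := by
    unfold clamp01
    rcases le_or_gt s 0 with h | h
    · rw [max_eq_right h]; norm_num
    · rw [max_eq_left h.le]; rw [min_lt_iff]; left; exact hs
  have := (f1_strictAnti hq0 hp1 hf1a hf1b hf1c) (clamp01_mem s) (right_mem_Icc.2 zero_le_one) h1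
  rw [f1_one hq0 hp1 hf1a hf1b hf1c] at this
  exact this

lemma Fc_lt_one {s : ℝ} (hs : 0 < s) : Fc f1 s < 1 := by
  have h1 : 0 < clamp01 s := by
    unfold clamp01
    exact lt_min (lt_max_iff.2 (Or.inl hs)) one_pos
  have := (f1_strictAnti hq0 hp1 hf1a hf1b hf1c) (left_mem_Icc.2 zero_le_one) (clamp01_mem s) h1
  rw [f1_zero hq0 hp1 hf1a hf1b hf1c] at this
  exact this

end aux2

open Classical in
noncomputable def Rfun (p : ℕ → ℝ) (f1 : ℝ → ℝ) (k : ℕ) (s : ℝ) : ℝ :=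
  if 0 < Fc f1 s then (k : ℝ) * p k * Fc f1 s ^ (k-1) / Done p (Fc f1 s) else 0

section aux3
variable {p : ℕ → ℝ} {f1 : ℝ → ℝ}
variable (hq0 : ∀ k : ℕ, 0 ≤ p (k+1)) (hp1 : (∑' k : ℕ, p (k+1)) = 1)
  (hp2 : Summable (fun k : ℕ => ((k + 1 : ℕ) : ℝ) ^ 2 * p (k + 1)))
  (hf1a : ∀ t ∈ Icc (0:ℝ) 1, f1 t ∈ Icc (0:ℝ) 1)
  (hf1b : ∀ t ∈ Icc (0:ℝ) 1, Gser p (f1 t) = 1 - t)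
  (hf1c : ∀ t : ℝ, 1 < t → f1 t = 0)

include hq0 hp1 hp2 hf1a hf1b hf1c

lemma Rfun_nonneg {k : ℕ} (hk : 1 ≤ k) (s : ℝ) : 0 ≤ Rfun p f1 k s := by
  obtain ⟨j, rfl⟩ : ∃ j, k = j + 1 := ⟨k - 1, by omega⟩
  unfold Rfun
  split_ifs with h
  · apply div_nonneg
    · exact mul_nonneg (mul_nonneg (by positivity) (by exact_mod_cast hq0 j))
        (pow_nonneg (Fc_mem hq0 hp1 hf1a hf1b hf1c s).1 _)
    · exact (DonePos hq0 hp1 hp2 h (Fc_mem hq0 hp1 hf1a hf1b hf1c s).2).le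
  · exact le_refl 0

lemma Rfun_le_one {k : ℕ} (hk : 1 ≤ k) (s : ℝ) : Rfun p f1 k s ≤ 1 := by
  obtain ⟨j, rfl⟩ : ∃ j, k = j + 1 := ⟨k - 1, by omega⟩
  unfold Rfun
  split_ifs with h
  · rw [div_le_one (DonePos hq0 hp1 hp2 h (Fc_mem hq0 hp1 hf1a hf1b hf1c s).2)]
    have := term_le_Done hq0 hp2 (Fc_mem hq0 hp1 hf1a hf1b hf1c s).1
      (Fc_mem hq0 hp1 hf1a hf1b hf1c s).2 (u := Fc f1 s) j
    simpa using this
  · norm_num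

lemma Rfun_measurable (k : ℕ) : Measurable (Rfun p f1 k) := by
  unfold Rfun
  apply Measurable.ite
  · exact measurableSet_lt measurable_const (Fc_cont hq0 hp1 hf1a hf1b hf1c).measurable
  · apply Measurable.div
    · exact (continuous_const.mul ((Fc_cont hq0 hp1 hf1a hf1b hf1c).pow _)).measurable
    · exact ((contDone hq0 hp2).comp_continuous (Fc_cont hq0 hp1 hf1a hf1b hf1c)
        (Fc_mem hq0 hp1 hf1a hf1b hf1c)).measurable
  · exact measurable_const

lemma Rfun_zero_of_ge (k : ℕ) {s : ℝ} (hs : 1 ≤ s) : Rfun p f1 k s = 0 := by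
  unfold Rfun
  rw [Fc_of_ge hq0 hp1 hf1a hf1b hf1c hs]
  simp

lemma Rfun_intervalIntegrable {k : ℕ} (hk : 1 ≤ k) (a b : ℝ) :
    IntervalIntegrable (Rfun p f1 k) volume a b := by
  rw [intervalIntegrable_iff]
  have hconst : IntegrableOn (fun _ : ℝ => (1:ℝ)) (Set.uIoc a b) volume := by
    refine integrableOn_const ?_
    rw [Set.uIoc]
    exact measure_Ioc_lt_top.ne
  apply hconst.mono' ((Rfun_measurable hq0 hp1 hp2 hf1a hf1b hf1c k).aestronglyMeasurable)
  apply ae_of_all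
  intro s
  rw [Real.norm_eq_abs, abs_of_nonneg (Rfun_nonneg hq0 hp1 hp2 hf1a hf1b hf1c hk s)]
  exact Rfun_le_one hq0 hp1 hp2 hf1a hf1b hf1c hk s

lemma key_deriv {k : ℕ} (hk : 1 ≤ k) {x : ℝ} (hx : x ∈ Ioo (0:ℝ) 1) :
    HasDerivAt (fun s => p k * Fc f1 s ^ k) (-(Rfun p f1 k x)) x := by
  have hux : Fc f1 x = f1 x := Fc_eq hq0 hp1 hf1a hf1b hf1c hx.1.le
  have hu0 : 0 < Fc f1 x := Fc_pos hq0 hp1 hf1a hf1b hf1c hx.2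
  have hu1 : Fc f1 x < 1 := Fc_lt_one hq0 hp1 hf1a hf1b hf1c hx.1
  have hu0' : 0 < f1 x := hux ▸ hu0
  have hu1' : f1 x < 1 := hux ▸ hu1
  have hDpos : 0 < Done p (f1 x) := DonePos hq0 hp1 hp2 hu0' hu1'.le
  have hf1x : HasDerivAt f1 ((-(Done p (f1 x)))⁻¹) x := by
    apply HasDerivAt.of_local_left_inverse (f := fun v => 1 - Gser p v)
    · exact (f1_contOn hq0 hp1 hf1a hf1b hf1c).continuousAt (Icc_mem_nhds hx.1 hx.2)
    · have hder := hasDerivAtGser hq0 hp1 hp2 (u := f1 x) ⟨by linarith, hu1'⟩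
      have h2 := (hasDerivAt_const (f1 x) (1:ℝ)).sub hder
      rw [zero_sub] at h2; exact h2
    · exact neg_ne_zero.2 hDpos.ne'
    · filter_upwards [Ioo_mem_nhds hx.1 hx.2] with y hy
      rw [hf1b y (Ioo_subset_Icc_self hy)]; ring
  have hpow : HasDerivAt (fun s => p k * f1 s ^ k)
      (p k * ((k:ℝ) * f1 x ^ (k-1) * (-(Done p (f1 x)))⁻¹)) x :=
    (hf1x.pow k).const_mul (p k)
  have heq : (fun s => p k * Fc f1 s ^ k) =ᶠ[nhds x] (fun s => p k * f1 s ^ k) := by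
    filter_upwards [Ioi_mem_nhds hx.1] with y hy
    rw [Fc_eq hq0 hp1 hf1a hf1b hf1c (le_of_lt hy)]
  rw [Filter.EventuallyEq.hasDerivAt_iff heq]
  have hR : -(Rfun p f1 k x) = p k * ((k:ℝ) * f1 x ^ (k-1) * (-(Done p (f1 x)))⁻¹) := by
    unfold Rfun
    rw [if_pos hu0, hux, inv_neg, div_eq_mul_inv]
    ring
  rw [hR]; exact hpow

lemma key_integral {k : ℕ} (hk : 1 ≤ k) {t : ℝ} (ht : 0 ≤ t) :
    ∫ s in (0:ℝ)..t, Rfun p f1 k s = p k - p k * Fc f1 t ^ k := by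
  have main : ∀ t' : ℝ, 0 ≤ t' → t' ≤ 1 →
      ∫ s in (0:ℝ)..t', Rfun p f1 k s = p k - p k * Fc f1 t' ^ k := by
    intro t' ht0 ht1
    have hFTC := intervalIntegral.integral_eq_sub_of_hasDerivAt_of_le ht0
      (f := fun s => p k * Fc f1 s ^ k) (f' := fun s => -(Rfun p f1 k s))
      ((continuous_const.mul ((Fc_cont hq0 hp1 hf1a hf1b hf1c).pow k)).continuousOn)
      (fun x hx => key_deriv hq0 hp1 hp2 hf1a hf1b hf1c hk ⟨hx.1, lt_of_lt_of_le hx.2 ht1⟩)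
      ((Rfun_intervalIntegrable hq0 hp1 hp2 hf1a hf1b hf1c hk 0 t').neg)
    rw [intervalIntegral.integral_neg] at hFTC
    rw [Fc_zero hq0 hp1 hf1a hf1b hf1c, one_pow, mul_one] at hFTC
    linarith
  rcases le_or_gt t 1 with h | h
  · exact main t ht h
  · have hsplit := intervalIntegral.integral_add_adjacent_intervals
      (Rfun_intervalIntegrable hq0 hp1 hp2 hf1a hf1b hf1c hk 0 1)
      (Rfun_intervalIntegrable hq0 hp1 hp2 hf1a hf1b hf1c hk 1 t)
    have h2 : ∫ s in (1:ℝ)..t, Rfun p f1 k s = 0 := by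
      rw [intervalIntegral.integral_congr (g := fun _ => (0:ℝ))
        (fun s hs => by
          rw [Set.uIcc_of_le h.le] at hs
          exact Rfun_zero_of_ge hq0 hp1 hp2 hf1a hf1b hf1c k hs.1)]
      simp
    rw [main 1 zero_le_one (le_refl 1), h2] at hsplit
    rw [← hsplit, Fc_of_ge hq0 hp1 hf1a hf1b hf1c h.le, Fc_of_ge hq0 hp1 hf1a hf1b hf1c (le_refl 1)]
    simp

end aux3

lemma inner_integral {c : ℝ} (h0 : 0 ≤ c) (h1 : c ≤ 1) :
    ∫ y in (0:ℝ)..1, (if y < c then (1:ℝ) else 0) = c := by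
  rw [intervalIntegral.integral_of_le zero_le_one]
  have heq : (fun y => if y < c then (1:ℝ) else 0) = (Iio c).indicator (fun _ => (1:ℝ)) := by
    funext y
    rw [Set.indicator_apply]
    simp [mem_Iio]
  rw [heq, setIntegral_indicator measurableSet_Iio]
  have : Ioc (0:ℝ) 1 ∩ Iio c = Ioo 0 c := by
    ext y
    constructor
    · rintro ⟨⟨hy0, _⟩, hyc⟩; exact ⟨hy0, hyc⟩
    · rintro ⟨hy0, hyc⟩; exact ⟨⟨hy0, by linarith⟩, hyc⟩
  rw [this, setIntegral_const, Real.volume_real_Ioo_of_le h0, smul_eq_mul, mul_one, sub_zero]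

/-- the limiting ψ as a series -/
noncomputable def SER (p : ℕ → ℝ) (f1 : ℝ → ℝ) (t : ℝ) : ℝ :=
  ∑' j : ℕ, (((j+1:ℕ):ℝ) - 2) * (p (j+1) - p (j+1) * Fc f1 t ^ (j+1))

lemma pow_sub_le {v w : ℝ} (hw : 0 ≤ w) (hvw : w ≤ v) (k : ℕ) :
    v^k - w^k ≤ (k:ℝ) * v^(k-1) * (v-w) := by
  have hv0 : 0 ≤ v := le_trans hw hvw
  rw [← geom_sum₂_mul]
  apply mul_le_mul_of_nonneg_right _ (sub_nonneg.2 hvw)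
  calc ∑ i ∈ Finset.range k, v^i * w^(k-1-i)
      ≤ ∑ i ∈ Finset.range k, v^(k-1) := by
        apply Finset.sum_le_sum
        intro i hi
        calc v^i * w^(k-1-i) ≤ v^i * v^(k-1-i) := by
              apply mul_le_mul_of_nonneg_left _ (pow_nonneg hv0 i)
              exact pow_le_pow_left₀ hw hvw _
          _ = v^(k-1) := by
              rw [← pow_add]
              congr 1
              rw [Finset.mem_range] at hi
              omega
    _ = (k:ℝ) * v^(k-1) := by
        rw [Finset.sum_const, Finset.card_range, nsmul_eq_mul]

section aux4
variable {p : ℕ → ℝ} {f1 : ℝ → ℝ}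
variable (hq0 : ∀ k : ℕ, 0 ≤ p (k+1)) (hp1 : (∑' k : ℕ, p (k+1)) = 1)
  (hp2 : Summable (fun k : ℕ => ((k + 1 : ℕ) : ℝ) ^ 2 * p (k + 1)))
  (hf1a : ∀ t ∈ Icc (0:ℝ) 1, f1 t ∈ Icc (0:ℝ) 1)
  (hf1b : ∀ t ∈ Icc (0:ℝ) 1, Gser p (f1 t) = 1 - t)
  (hf1c : ∀ t : ℝ, 1 < t → f1 t = 0)
  (hsub : (∑' k : ℕ, ((k + 1 : ℕ) : ℝ) * (((k + 1 : ℕ) : ℝ) - 2) * p (k + 1)) ≤ 0)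

include hq0 hp2

lemma psi_sum_nonpos (hsub : (∑' k : ℕ, ((k + 1 : ℕ) : ℝ) * (((k + 1 : ℕ) : ℝ) - 2) * p (k + 1)) ≤ 0)
    {v w : ℝ} (hw : 0 ≤ w) (hvw : w ≤ v) (hv : v ≤ 1) :
    (∑' j : ℕ, (((j+1:ℕ):ℝ) - 2) * p (j+1) * (v^(j+1) - w^(j+1))) ≤ 0 := by
  have hv0 : 0 ≤ v := le_trans hw hvw
  have hterm : ∀ j : ℕ, (((j+1:ℕ):ℝ) - 2) * p (j+1) * (v^(j+1) - w^(j+1)) ≤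
      (((j+1:ℕ):ℝ) * (((j+1:ℕ):ℝ) - 2) * p (j+1)) * (v^2 * (v-w)) := by
    intro j
    rcases Nat.lt_or_ge j 2 with hj | hj
    · interval_cases j
      · have h1 : (0:ℝ) ≤ p 1 * (v - w) := mul_nonneg (hq0 0) (sub_nonneg.2 hvw)
        have h2 : (0:ℝ) ≤ 1 - v^2 := by nlinarith
        push_cast
        nlinarith [mul_nonneg h1 h2]
      · push_cast
        norm_num
    · have hc : (0:ℝ) ≤ ((j+1:ℕ):ℝ) - 2 := by
        have : (3:ℝ) ≤ ((j+1:ℕ):ℝ) := by exact_mod_cast (by omega : 3 ≤ j+1)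
        linarith
      have hA : v^(j+1) - w^(j+1) ≤ ((j+1:ℕ):ℝ) * v^2 * (v-w) := by
        calc v^(j+1) - w^(j+1) ≤ ((j+1:ℕ):ℝ) * v^((j+1)-1) * (v-w) := pow_sub_le hw hvw (j+1)
          _ ≤ _ := by
            apply mul_le_mul_of_nonneg_right _ (sub_nonneg.2 hvw)
            apply mul_le_mul_of_nonneg_left _ (by positivity)
            exact pow_le_pow_of_le_one hv0 hv (by omega)
      have hcp : (0:ℝ) ≤ (((j+1:ℕ):ℝ) - 2) * p (j+1) := mul_nonneg hc (hq0 j)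
      calc (((j+1:ℕ):ℝ) - 2) * p (j+1) * (v^(j+1) - w^(j+1))
          ≤ (((j+1:ℕ):ℝ) - 2) * p (j+1) * (((j+1:ℕ):ℝ) * v^2 * (v-w)) :=
            mul_le_mul_of_nonneg_left hA hcp
        _ = _ := by ring
  have hsumL : Summable (fun j : ℕ => (((j+1:ℕ):ℝ) - 2) * p (j+1) * (v^(j+1) - w^(j+1))) := by
    apply Summable.of_norm
    refine Summable.of_nonneg_of_le (fun j => norm_nonneg _) (fun j => ?_) ((sumkq hq0 hp2).mul_left 3)
    rw [Real.norm_eq_abs, abs_mul, abs_mul, abs_of_nonneg (hq0 j)]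
    have h1 : |(((j+1:ℕ):ℝ) - 2)| ≤ 3 * ((j+1:ℕ):ℝ) := by
      rw [abs_le]
      have : (1:ℝ) ≤ ((j+1:ℕ):ℝ) := by exact_mod_cast (by omega : 1 ≤ j+1)
      constructor <;> nlinarith
    have h2 : |v^(j+1) - w^(j+1)| ≤ 1 := by
      rw [abs_le]
      have hv1 : v^(j+1) ≤ 1 := pow_le_one₀ hv0 hv
      have hw1 : w^(j+1) ≤ 1 := pow_le_one₀ hw (le_trans hvw hv)
      have hv2 : 0 ≤ v^(j+1) := pow_nonneg hv0 _
      have hw2 : 0 ≤ w^(j+1) := pow_nonneg hw _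
      constructor <;> nlinarith
    calc |(((j+1:ℕ):ℝ) - 2)| * p (j+1) * |v^(j+1) - w^(j+1)|
        ≤ |(((j+1:ℕ):ℝ) - 2)| * p (j+1) * 1 :=
          mul_le_mul_of_nonneg_left h2 (mul_nonneg (abs_nonneg _) (hq0 j))
      _ = |(((j+1:ℕ):ℝ) - 2)| * p (j+1) := mul_one _
      _ ≤ (3 * ((j+1:ℕ):ℝ)) * p (j+1) := mul_le_mul_of_nonneg_right h1 (hq0 j)
      _ = 3 * (((j+1:ℕ):ℝ) * p (j+1)) := by ring
  have hsumR : Summable (fun j : ℕ =>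
      (((j+1:ℕ):ℝ) * (((j+1:ℕ):ℝ) - 2) * p (j+1)) * (v^2 * (v-w))) :=
    (sumk2q hq0 hp2).mul_right _
  calc (∑' j : ℕ, (((j+1:ℕ):ℝ) - 2) * p (j+1) * (v^(j+1) - w^(j+1)))
      ≤ ∑' j : ℕ, (((j+1:ℕ):ℝ) * (((j+1:ℕ):ℝ) - 2) * p (j+1)) * (v^2 * (v-w)) :=
        Summable.tsum_le_tsum hterm hsumL hsumR
    _ = (∑' j : ℕ, ((j+1:ℕ):ℝ) * (((j+1:ℕ):ℝ) - 2) * p (j+1)) * (v^2 * (v-w)) :=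
        tsum_mul_right
    _ ≤ 0 * (v^2 * (v-w)) := by
        apply mul_le_mul_of_nonneg_right hsub
        have := sub_nonneg.2 hvw
        positivity
    _ = 0 := zero_mul _

include hp1 hf1a hf1b hf1c

lemma SER_summable (t : ℝ) :
    Summable (fun j : ℕ => (((j+1:ℕ):ℝ) - 2) * (p (j+1) - p (j+1) * Fc f1 t ^ (j+1))) := by
  have hu := Fc_mem hq0 hp1 hf1a hf1b hf1c t
  apply Summable.of_norm
  refine Summable.of_nonneg_of_le (fun j => norm_nonneg _) (fun j => ?_) ((sumkq hq0 hp2).mul_left 3)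
  rw [Real.norm_eq_abs, abs_mul]
  have h1 : |(((j+1:ℕ):ℝ) - 2)| ≤ 3 * ((j+1:ℕ):ℝ) := by
    rw [abs_le]
    have : (1:ℝ) ≤ ((j+1:ℕ):ℝ) := by exact_mod_cast (by omega : 1 ≤ j+1)
    constructor <;> nlinarith
  have hpow0 : 0 ≤ Fc f1 t ^ (j+1) := pow_nonneg hu.1 _
  have hpow1 : Fc f1 t ^ (j+1) ≤ 1 := pow_le_one₀ hu.1 hu.2
  have h2 : |p (j+1) - p (j+1) * Fc f1 t ^ (j+1)| ≤ p (j+1) := by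
    rw [abs_le]
    constructor <;> nlinarith [hq0 j]
  calc |(((j+1:ℕ):ℝ) - 2)| * |p (j+1) - p (j+1) * Fc f1 t ^ (j+1)|
      ≤ (3 * ((j+1:ℕ):ℝ)) * p (j+1) := by
        apply mul_le_mul h1 h2 (abs_nonneg _) (by positivity)
    _ = 3 * (((j+1:ℕ):ℝ) * p (j+1)) := by ring

lemma SER_anti (hsub : (∑' k : ℕ, ((k + 1 : ℕ) : ℝ) * (((k + 1 : ℕ) : ℝ) - 2) * p (k + 1)) ≤ 0)
    {t₁ t₂ : ℝ} (h : t₁ ≤ t₂) : SER p f1 t₂ ≤ SER p f1 t₁ := by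
  set v := Fc f1 t₁
  set w := Fc f1 t₂
  have hvw : w ≤ v := Fc_anti hq0 hp1 hf1a hf1b hf1c h
  have hw0 : 0 ≤ w := (Fc_mem hq0 hp1 hf1a hf1b hf1c t₂).1
  have hv1 : v ≤ 1 := (Fc_mem hq0 hp1 hf1a hf1b hf1c t₁).2
  rw [← sub_nonpos]
  have hdiff : SER p f1 t₂ - SER p f1 t₁ =
      ∑' j : ℕ, (((j+1:ℕ):ℝ) - 2) * p (j+1) * (v^(j+1) - w^(j+1)) := by
    unfold SER
    rw [← Summable.tsum_sub (SER_summable hq0 hp1 hp2 hf1a hf1b hf1c t₂)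
      (SER_summable hq0 hp1 hp2 hf1a hf1b hf1c t₁)]
    apply tsum_congr
    intro j
    ring
  rw [hdiff]
  exact psi_sum_nonpos hq0 hp2 hsub hw0 hvw hv1

lemma SER_zero : SER p f1 0 = 0 := by
  unfold SER
  rw [tsum_congr (fun j => ?_)]
  · exact tsum_zero
  · rw [Fc_zero hq0 hp1 hf1a hf1b hf1c, one_pow]
    ring

end aux4

/-- numerator series for the derivative of ψ -/
noncomputable def NumS (p : ℕ → ℝ) (u : ℝ) : ℝ :=
  ∑' j : ℕ, ((((j+1:ℕ):ℝ) - 2) * (((j+1:ℕ):ℝ) * p (j+1))) * u^j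

open Classical in
/-- a.e. derivative of ψ -/
noncomputable def gpsi (p : ℕ → ℝ) (f1 : ℝ → ℝ) (s : ℝ) : ℝ :=
  if 0 < Fc f1 s then NumS p (Fc f1 s) / Done p (Fc f1 s) else 0

section aux5
variable {p : ℕ → ℝ} {f1 : ℝ → ℝ}
variable (hq0 : ∀ k : ℕ, 0 ≤ p (k+1)) (hp1 : (∑' k : ℕ, p (k+1)) = 1)
  (hp2 : Summable (fun k : ℕ => ((k + 1 : ℕ) : ℝ) ^ 2 * p (k + 1)))
  (hf1a : ∀ t ∈ Icc (0:ℝ) 1, f1 t ∈ Icc (0:ℝ) 1)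
  (hf1b : ∀ t ∈ Icc (0:ℝ) 1, Gser p (f1 t) = 1 - t)
  (hf1c : ∀ t : ℝ, 1 < t → f1 t = 0)

include hq0 hp1 hp2 hf1a hf1b hf1c

lemma rcoord_id {x : ℕ → ℝ} {s : ℝ} (hx0 : x 0 = 0)
    (hxk : ∀ j : ℕ, x (j+1) = p (j+1) * Fc f1 s ^ (j+1)) :
    rcoord x 0 = 0 ∧ ∀ k : ℕ, 1 ≤ k → rcoord x k = Rfun p f1 k s := by
  have hum := Fc_mem hq0 hp1 hf1a hf1b hf1c s
  have hsum : Summable (fun j : ℕ => ((j + 1 : ℕ) : ℝ) * x (j + 1)) := by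
    refine Summable.of_nonneg_of_le (fun j => ?_) (fun j => ?_) (sumkq hq0 hp2)
    · rw [hxk j]; exact mul_nonneg (by positivity) (mul_nonneg (hq0 j) (pow_nonneg hum.1 _))
    · rw [hxk j]
      calc ((j+1:ℕ):ℝ) * (p (j+1) * Fc f1 s ^ (j+1)) ≤ ((j+1:ℕ):ℝ) * (p (j+1) * 1) := by
            apply mul_le_mul_of_nonneg_left _ (by positivity)
            exact mul_le_mul_of_nonneg_left (pow_le_one₀ hum.1 hum.2) (hq0 j)
        _ = ((j+1:ℕ):ℝ) * p (j+1) := by ring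
  have hrt : rtot x = Done p (Fc f1 s) * Fc f1 s := by
    unfold rtot Done
    have h1 : ∀ j : ℕ, ((j+1:ℕ):ℝ) * x (j+1) =
        (((j+1:ℕ):ℝ) * p (j+1) * Fc f1 s ^ j) * Fc f1 s := fun j => by
      rw [hxk j, pow_succ]; ring
    rw [tsum_congr h1, tsum_mul_right, hx0]
    simp
  constructor
  · unfold rcoord
    split_ifs with h h2 <;> simp [hx0]
  · intro k hk
    obtain ⟨j, rfl⟩ : ∃ j, k = j + 1 := ⟨k - 1, by omega⟩
    rcases eq_or_lt_of_le hum.1 with h0 | h0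
    · have hrt0 : rtot x = 0 := by rw [hrt, ← h0, mul_zero]
      unfold rcoord
      rw [if_neg (by rw [hrt0]; intro hcon; exact lt_irrefl 0 hcon.1)]
      unfold Rfun
      rw [if_neg (by rw [← h0]; exact lt_irrefl 0)]
    · have hD : 0 < Done p (Fc f1 s) := DonePos hq0 hp1 hp2 h0 hum.2
      have hrt0 : 0 < rtot x := by rw [hrt]; positivity
      unfold rcoord
      rw [if_pos ⟨hrt0, hsum⟩, if_neg (show ¬(j+1 = 0) by omega)]
      unfold Rfun
      rw [if_pos h0, hxk j, hrt]
      rw [show (j+1) - 1 = j from rfl, pow_succ]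
      rw [div_eq_div_iff (by positivity) (by positivity)]
      ring

lemma NumS_cont : ContinuousOn (NumS p) (Icc (0:ℝ) 1) := by
  apply continuousOn_tsum (u := fun j => 3 * (((j+1:ℕ):ℝ)^2 * p (j+1)))
    (fun i => (continuous_const.mul (continuous_pow i)).continuousOn) (hp2.mul_left 3)
  intro n x hx
  simp only [Pi.mul_apply]
  rw [Real.norm_eq_abs, abs_mul, abs_pow]
  have h1 : |(((n+1:ℕ):ℝ) - 2) * (((n+1:ℕ):ℝ) * p (n+1))| ≤ 3 * (((n+1:ℕ):ℝ)^2 * p (n+1)) := by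
    rw [abs_mul, abs_of_nonneg (mul_nonneg (by positivity) (hq0 n))]
    have h2 : |(((n+1:ℕ):ℝ) - 2)| ≤ 3 * ((n+1:ℕ):ℝ) := by
      rw [abs_le]
      have : (1:ℝ) ≤ ((n+1:ℕ):ℝ) := by exact_mod_cast (by omega : 1 ≤ n+1)
      constructor <;> nlinarith
    calc |(((n+1:ℕ):ℝ) - 2)| * (((n+1:ℕ):ℝ) * p (n+1))
        ≤ (3 * ((n+1:ℕ):ℝ)) * (((n+1:ℕ):ℝ) * p (n+1)) :=
          mul_le_mul_of_nonneg_right h2 (mul_nonneg (by positivity) (hq0 n))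
      _ = 3 * (((n+1:ℕ):ℝ)^2 * p (n+1)) := by ring
  have h3 : |x| ^ n ≤ 1 := pow_le_one₀ (abs_nonneg x) (abs_le.2 ⟨by linarith [hx.1], hx.2⟩)
  calc |(((n+1:ℕ):ℝ) - 2) * (((n+1:ℕ):ℝ) * p (n+1))| * |x| ^ n
      ≤ |(((n+1:ℕ):ℝ) - 2) * (((n+1:ℕ):ℝ) * p (n+1))| * 1 :=
        mul_le_mul_of_nonneg_left h3 (abs_nonneg _)
    _ = |(((n+1:ℕ):ℝ) - 2) * (((n+1:ℕ):ℝ) * p (n+1))| := mul_one _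
    _ ≤ 3 * (((n+1:ℕ):ℝ)^2 * p (n+1)) := h1

lemma gpsi_measurable : Measurable (gpsi p f1) := by
  unfold gpsi
  apply Measurable.ite
  · exact measurableSet_lt measurable_const (Fc_cont hq0 hp1 hf1a hf1b hf1c).measurable
  · apply Measurable.div
    · exact ((NumS_cont hq0 hp1 hp2 hf1a hf1b hf1c).comp_continuous
        (Fc_cont hq0 hp1 hf1a hf1b hf1c) (Fc_mem hq0 hp1 hf1a hf1b hf1c)).measurable
    · exact ((contDone hq0 hp2).comp_continuous (Fc_cont hq0 hp1 hf1a hf1b hf1c)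
        (Fc_mem hq0 hp1 hf1a hf1b hf1c)).measurable
  · exact measurable_const

lemma Rfun_succ (j : ℕ) (s : ℝ) : Rfun p f1 (j+1) s =
    if 0 < Fc f1 s then (((j+1:ℕ):ℝ) * p (j+1)) * Fc f1 s ^ j / Done p (Fc f1 s) else 0 := rfl

lemma gpsi_eq_tsum (s : ℝ) :
    gpsi p f1 s = ∑' j : ℕ, (((j+1:ℕ):ℝ) - 2) * Rfun p f1 (j+1) s := by
  unfold gpsi
  split_ifs with h
  · unfold NumS
    rw [← tsum_div_const]
    apply tsum_congr
    intro j
    rw [Rfun_succ hq0 hp1 hp2 hf1a hf1b hf1c, if_pos h]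
    rw [mul_div_assoc, mul_div_assoc, mul_assoc]
  · symm
    rw [tsum_congr (fun j => ?_)]
    · exact tsum_zero
    · rw [Rfun_succ hq0 hp1 hp2 hf1a hf1b hf1c, if_neg h, mul_zero]

lemma cRfun_summable (c : ℕ → ℝ) (hc : ∀ j, |c j| ≤ 3 * ((j+1:ℕ):ℝ)) (s : ℝ) :
    Summable (fun j : ℕ => c j * Rfun p f1 (j+1) s) := by
  by_cases h : 0 < Fc f1 s
  · have hum := Fc_mem hq0 hp1 hf1a hf1b hf1c s
    have hD : 0 < Done p (Fc f1 s) := DonePos hq0 hp1 hp2 h hum.2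
    apply Summable.of_norm
    refine Summable.of_nonneg_of_le (fun j => norm_nonneg _) (fun j => ?_)
      ((hp2.mul_left (3 * (Done p (Fc f1 s))⁻¹)))
    rw [Real.norm_eq_abs, abs_mul]
    have hRnn : 0 ≤ Rfun p f1 (j+1) s :=
      Rfun_nonneg hq0 hp1 hp2 hf1a hf1b hf1c (by omega) s
    have hRle : Rfun p f1 (j+1) s ≤ ((j+1:ℕ):ℝ) * p (j+1) * (Done p (Fc f1 s))⁻¹ := by
      rw [Rfun_succ hq0 hp1 hp2 hf1a hf1b hf1c, if_pos h, div_eq_mul_inv]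
      apply mul_le_mul_of_nonneg_right _ (inv_nonneg.2 hD.le)
      calc (((j+1:ℕ):ℝ) * p (j+1)) * Fc f1 s ^ j
          ≤ (((j+1:ℕ):ℝ) * p (j+1)) * 1 :=
            mul_le_mul_of_nonneg_left (pow_le_one₀ hum.1 hum.2)
              (mul_nonneg (by positivity) (hq0 j))
        _ = ((j+1:ℕ):ℝ) * p (j+1) := mul_one _
    rw [abs_of_nonneg hRnn]
    calc |c j| * Rfun p f1 (j+1) s
        ≤ (3 * ((j+1:ℕ):ℝ)) * (((j+1:ℕ):ℝ) * p (j+1) * (Done p (Fc f1 s))⁻¹) :=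
          mul_le_mul (hc j) hRle hRnn (by positivity)
      _ = 3 * (Done p (Fc f1 s))⁻¹ * (((j+1:ℕ):ℝ)^2 * p (j+1)) := by ring
  · apply summable_zero.congr
    intro j
    rw [Rfun_succ hq0 hp1 hp2 hf1a hf1b hf1c, if_neg h, mul_zero]

lemma gpsi_abs_le (s : ℝ) :
    |gpsi p f1 s| ≤ ∑' j : ℕ, (3 * ((j+1:ℕ):ℝ)) * Rfun p f1 (j+1) s := by
  rw [gpsi_eq_tsum hq0 hp1 hp2 hf1a hf1b hf1c s]
  have hs1 : Summable (fun j : ℕ => (((j+1:ℕ):ℝ) - 2) * Rfun p f1 (j+1) s) := by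
    apply cRfun_summable hq0 hp1 hp2 hf1a hf1b hf1c
    intro j
    rw [abs_le]
    have : (1:ℝ) ≤ ((j+1:ℕ):ℝ) := by exact_mod_cast (by omega : 1 ≤ j+1)
    constructor <;> nlinarith
  have hs2 : Summable (fun j : ℕ => (3 * ((j+1:ℕ):ℝ)) * Rfun p f1 (j+1) s) := by
    apply cRfun_summable hq0 hp1 hp2 hf1a hf1b hf1c
    intro j
    rw [abs_of_nonneg (by positivity)]
  calc |∑' j : ℕ, (((j+1:ℕ):ℝ) - 2) * Rfun p f1 (j+1) s|
      ≤ ∑' j : ℕ, |(((j+1:ℕ):ℝ) - 2) * Rfun p f1 (j+1) s| := by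
        have h := norm_tsum_le_tsum_norm (f := fun j : ℕ => (((j+1:ℕ):ℝ) - 2) * Rfun p f1 (j+1) s)
          (hs1.abs.congr (fun j => (Real.norm_eq_abs _).symm))
        rw [Real.norm_eq_abs] at h
        calc |∑' j : ℕ, (((j+1:ℕ):ℝ) - 2) * Rfun p f1 (j+1) s|
            ≤ ∑' j : ℕ, ‖(((j+1:ℕ):ℝ) - 2) * Rfun p f1 (j+1) s‖ := h
          _ = ∑' j : ℕ, |(((j+1:ℕ):ℝ) - 2) * Rfun p f1 (j+1) s| :=
              tsum_congr (fun j => Real.norm_eq_abs _)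
    _ ≤ ∑' j : ℕ, (3 * ((j+1:ℕ):ℝ)) * Rfun p f1 (j+1) s := by
        apply Summable.tsum_le_tsum _ hs1.abs hs2
        intro j
        have hRnn : 0 ≤ Rfun p f1 (j+1) s :=
          Rfun_nonneg hq0 hp1 hp2 hf1a hf1b hf1c (by omega) s
        rw [abs_mul, abs_of_nonneg hRnn]
        apply mul_le_mul_of_nonneg_right _ hRnn
        rw [abs_le]
        have : (1:ℝ) ≤ ((j+1:ℕ):ℝ) := by exact_mod_cast (by omega : 1 ≤ j+1)
        constructor <;> nlinarith

lemma lint_cR {t : ℝ} (ht : 0 ≤ t) {c : ℝ} (hc : 0 ≤ c) (j : ℕ) :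
    ∫⁻ s in Ioc (0:ℝ) t, ENNReal.ofReal (c * Rfun p f1 (j+1) s) ≤
      ENNReal.ofReal (c * p (j+1)) := by
  have hInt : IntegrableOn (Rfun p f1 (j+1)) (Ioc 0 t) := by
    have := Rfun_intervalIntegrable hq0 hp1 hp2 hf1a hf1b hf1c
      (show 1 ≤ j+1 by omega) 0 t
    rwa [intervalIntegrable_iff_integrableOn_Ioc_of_le ht] at this
  have h1 : ∀ s : ℝ, ENNReal.ofReal (c * Rfun p f1 (j+1) s) =
      ENNReal.ofReal c * ENNReal.ofReal (Rfun p f1 (j+1) s) := fun s =>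
    ENNReal.ofReal_mul hc
  rw [lintegral_congr h1, lintegral_const_mul _
    ((Rfun_measurable hq0 hp1 hp2 hf1a hf1b hf1c (j+1)).ennreal_ofReal)]
  rw [ENNReal.ofReal_mul hc]
  apply mul_le_mul_right _ _
  rw [← MeasureTheory.ofReal_integral_eq_lintegral_ofReal hInt
    (ae_of_all _ (fun s => Rfun_nonneg hq0 hp1 hp2 hf1a hf1b hf1c (by omega) s))]
  apply ENNReal.ofReal_le_ofReal
  rw [← intervalIntegral.integral_of_le ht,
    key_integral hq0 hp1 hp2 hf1a hf1b hf1c (by omega) ht]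
  have h2 : 0 ≤ p (j+1) * Fc f1 t ^ (j+1) :=
    mul_nonneg (hq0 j) (pow_nonneg (Fc_mem hq0 hp1 hf1a hf1b hf1c t).1 _)
  linarith

lemma lint_cR_Icc {T : ℝ} (hT : 0 ≤ T) {c : ℝ} (hc : 0 ≤ c) (j : ℕ) :
    ∫⁻ s in Icc (0:ℝ) T, ENNReal.ofReal (c * Rfun p f1 (j+1) s) ≤
      ENNReal.ofReal (c * p (j+1)) := by
  rw [← MeasureTheory.Measure.restrict_congr_set Ioc_ae_eq_Icc]
  exact lint_cR hq0 hp1 hp2 hf1a hf1b hf1c hT hc j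

lemma sum_lint_bound {T : ℝ} (hT : 0 ≤ T) :
    (∑' j : ℕ, ENNReal.ofReal ((3 * ((j+1:ℕ):ℝ)) * p (j+1))) < ⊤ := by
  have hsum : Summable (fun j : ℕ => (3 * ((j+1:ℕ):ℝ)) * p (j+1)) := by
    have := (sumkq hq0 hp2).mul_left 3
    apply this.congr
    intro j
    ring
  have heq : (∑' j : ℕ, ENNReal.ofReal ((3 * ((j+1:ℕ):ℝ)) * p (j+1)))
      = ENNReal.ofReal (∑' j : ℕ, (3 * ((j+1:ℕ):ℝ)) * p (j+1)) :=
    (ENNReal.ofReal_tsum_of_nonneg (fun j => mul_nonneg (by positivity) (hq0 j)) hsum).symm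
  rw [heq]
  exact ENNReal.ofReal_lt_top

lemma gpsi_integrableOn {T : ℝ} (hT : 0 ≤ T) : IntegrableOn (gpsi p f1) (Icc 0 T) := by
  constructor
  · exact (gpsi_measurable hq0 hp1 hp2 hf1a hf1b hf1c).aestronglyMeasurable
  · rw [hasFiniteIntegral_iff_norm]
    calc ∫⁻ s in Icc (0:ℝ) T, ENNReal.ofReal ‖gpsi p f1 s‖
        ≤ ∫⁻ s in Icc (0:ℝ) T,
            ∑' j : ℕ, ENNReal.ofReal ((3 * ((j+1:ℕ):ℝ)) * Rfun p f1 (j+1) s) := by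
          apply lintegral_mono
          intro s
          have hsum : Summable (fun j : ℕ => (3 * ((j+1:ℕ):ℝ)) * Rfun p f1 (j+1) s) :=
            cRfun_summable hq0 hp1 hp2 hf1a hf1b hf1c _
              (fun j => by rw [abs_of_nonneg (by positivity)]) s
          have heq : (∑' j : ℕ, ENNReal.ofReal ((3 * ((j+1:ℕ):ℝ)) * Rfun p f1 (j+1) s))
              = ENNReal.ofReal (∑' j : ℕ, (3 * ((j+1:ℕ):ℝ)) * Rfun p f1 (j+1) s) :=
            (ENNReal.ofReal_tsum_of_nonneg (fun j => mul_nonneg (by positivity)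
              (Rfun_nonneg hq0 hp1 hp2 hf1a hf1b hf1c (by omega) s)) hsum).symm
          calc ENNReal.ofReal ‖gpsi p f1 s‖
              ≤ ENNReal.ofReal (∑' j : ℕ, (3 * ((j+1:ℕ):ℝ)) * Rfun p f1 (j+1) s) := by
                apply ENNReal.ofReal_le_ofReal
                rw [Real.norm_eq_abs]
                exact gpsi_abs_le hq0 hp1 hp2 hf1a hf1b hf1c s
            _ = ∑' j : ℕ, ENNReal.ofReal ((3 * ((j+1:ℕ):ℝ)) * Rfun p f1 (j+1) s) := heq.symm
      _ = ∑' j : ℕ, ∫⁻ s in Icc (0:ℝ) T,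
            ENNReal.ofReal ((3 * ((j+1:ℕ):ℝ)) * Rfun p f1 (j+1) s) := by
          apply lintegral_tsum
          intro j
          exact ((Rfun_measurable hq0 hp1 hp2 hf1a hf1b hf1c (j+1)).const_mul
            _).ennreal_ofReal.aemeasurable
      _ ≤ ∑' j : ℕ, ENNReal.ofReal ((3 * ((j+1:ℕ):ℝ)) * p (j+1)) :=
          ENNReal.tsum_le_tsum (fun j =>
            lint_cR_Icc hq0 hp1 hp2 hf1a hf1b hf1c hT (by positivity) j)
      _ < ⊤ := sum_lint_bound hq0 hp1 hp2 hf1a hf1b hf1c hT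

lemma gpsi_integral {t : ℝ} (ht : 0 ≤ t) :
    ∫ s in (0:ℝ)..t, gpsi p f1 s = SER p f1 t := by
  rw [intervalIntegral.integral_of_le ht]
  rw [show gpsi p f1 = fun s => ∑' j : ℕ, (((j+1:ℕ):ℝ) - 2) * Rfun p f1 (j+1) s from
    funext (gpsi_eq_tsum hq0 hp1 hp2 hf1a hf1b hf1c)]
  rw [MeasureTheory.integral_tsum]
  · unfold SER
    apply tsum_congr
    intro j
    rw [MeasureTheory.integral_const_mul, ← intervalIntegral.integral_of_le ht,
      key_integral hq0 hp1 hp2 hf1a hf1b hf1c (by omega) ht]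
  · intro j
    exact (((Rfun_measurable hq0 hp1 hp2 hf1a hf1b hf1c (j+1)).const_mul
      _)).aestronglyMeasurable
  · apply ne_top_of_le_ne_top (sum_lint_bound hq0 hp1 hp2 hf1a hf1b hf1c ht).ne
    apply ENNReal.tsum_le_tsum
    intro j
    calc ∫⁻ s in Ioc (0:ℝ) t, ‖(((j+1:ℕ):ℝ) - 2) * Rfun p f1 (j+1) s‖₊
        = ∫⁻ s in Ioc (0:ℝ) t,
            ENNReal.ofReal (|(((j+1:ℕ):ℝ) - 2)| * Rfun p f1 (j+1) s) := by
          apply lintegral_congr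
          intro s
          rw [← enorm_eq_nnnorm, ← ofReal_norm_eq_enorm, Real.norm_eq_abs, abs_mul,
            abs_of_nonneg (Rfun_nonneg hq0 hp1 hp2 hf1a hf1b hf1c (by omega) s)]
      _ ≤ ENNReal.ofReal (|(((j+1:ℕ):ℝ) - 2)| * p (j+1)) :=
          lint_cR hq0 hp1 hp2 hf1a hf1b hf1c ht (abs_nonneg _) j
      _ ≤ ENNReal.ofReal ((3 * ((j+1:ℕ):ℝ)) * p (j+1)) := by
          apply ENNReal.ofReal_le_ofReal
          apply mul_le_mul_of_nonneg_right _ (hq0 j)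
          rw [abs_le]
          have : (1:ℝ) ≤ ((j+1:ℕ):ℝ) := by exact_mod_cast (by omega : 1 ≤ j+1)
          constructor <;> nlinarith

end aux5

/-- LLN trajectory in the (sub)critical case ∑ k(k−2)p_k ≤ 0:
the explicitly given pair (ζ, ψ) lies in C_T and satisfies I_T(ζ, ψ) = 0. -/
theorem stmt10 (T : ℝ) (hT : 0 < T) (p : ℕ → ℝ)
    (hp : ∀ k, 1 ≤ k → 0 ≤ p k)
    (hp1 : (∑' k : ℕ, p (k + 1)) = 1)
    (hp2 : Summable (fun k : ℕ => ((k + 1 : ℕ) : ℝ) ^ 2 * p (k + 1)))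
    (hsub : (∑' k : ℕ, ((k + 1 : ℕ) : ℝ) * (((k + 1 : ℕ) : ℝ) - 2) * p (k + 1)) ≤ 0)
    (μ : ℝ) (hμ : μ = ∑' k : ℕ, ((k + 1 : ℕ) : ℝ) * p (k + 1))
    (hTμ : μ / 2 ≤ T)
    (G0 : ℝ → ℝ)
    (hG0 : ∀ u ∈ Set.Icc (0 : ℝ) 1, G0 u = ∑' k : ℕ, p (k + 1) * u ^ (k + 1))
    (f1 : ℝ → ℝ)
    (hf1 : ∀ t ∈ Set.Icc (0 : ℝ) 1, f1 t ∈ Set.Icc (0 : ℝ) 1 ∧ 1 - G0 (f1 t) = t)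
    (hf1' : ∀ t : ℝ, 1 < t → f1 t = 0)
    (ζ : ℝ → ℕ → ℝ) (ψ : ℝ → ℝ)
    (hζ0 : ∀ t ∈ Set.Icc (0 : ℝ) T, ζ t 0 = 0)
    (hζk : ∀ t ∈ Set.Icc (0 : ℝ) T, ∀ k : ℕ, 1 ≤ k → ζ t k = p k * f1 t ^ k)
    (hψ : ∀ t ∈ Set.Icc (0 : ℝ) T,
      ψ t = -2 * (∫ s in (0 : ℝ)..t, rcoord (ζ s) 0) +
        ∑' k : ℕ, (((k + 1 : ℕ) : ℝ) - 2) * (p (k + 1) - ζ t (k + 1))) :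
    memCT T p ζ ψ ∧ IT T p ζ ψ = 0 := by
  have hT0 : (0:ℝ) ≤ T := hT.le
  have hq0 : ∀ k : ℕ, 0 ≤ p (k+1) := fun k => hp (k+1) (by omega)
  have hf1a : ∀ t ∈ Set.Icc (0:ℝ) 1, f1 t ∈ Set.Icc (0:ℝ) 1 := fun t ht => (hf1 t ht).1
  have hf1b : ∀ t ∈ Set.Icc (0:ℝ) 1, Gser p (f1 t) = 1 - t := by
    intro t ht
    have h1 := (hf1 t ht).2
    have h2 := hG0 (f1 t) (hf1 t ht).1
    unfold Gser
    rw [← h2]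
    linarith
  have hf1c := hf1'
  have hζk' : ∀ t ∈ Set.Icc (0:ℝ) T, ∀ j : ℕ, ζ t (j+1) = p (j+1) * Fc f1 t ^ (j+1) := by
    intro t ht j
    rw [hζk t ht (j+1) (by omega), Fc_eq hq0 hp1 hf1a hf1b hf1c ht.1]
  have hrc := fun (s : ℝ) (hs : s ∈ Set.Icc (0:ℝ) T) =>
    rcoord_id hq0 hp1 hp2 hf1a hf1b hf1c (hζ0 s hs) (hζk' s hs)
  have hpsi : ∀ t ∈ Set.Icc (0:ℝ) T, ψ t = SER p f1 t := by
    intro t ht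
    rw [hψ t ht]
    have h0 : ∫ s in (0:ℝ)..t, rcoord (ζ s) 0 = 0 := by
      rw [intervalIntegral.integral_congr (g := fun _ => (0:ℝ)) (fun s hs => ?_)]
      · simp
      · rw [Set.uIcc_of_le ht.1] at hs
        exact (hrc s ⟨hs.1, le_trans hs.2 ht.2⟩).1
    rw [h0, mul_zero, zero_add]
    unfold SER
    apply tsum_congr
    intro j
    rw [hζk' t ht j]
  have hint_gpsi : MeasureTheory.IntegrableOn (gpsi p f1) (Set.Icc 0 T) :=
    gpsi_integrableOn hq0 hp1 hp2 hf1a hf1b hf1c hT0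
  have hpsi0 : ψ 0 = 0 := by
    rw [hpsi 0 (Set.left_mem_Icc.2 hT0), SER_zero hq0 hp1 hp2 hf1a hf1b hf1c]
  have habs_psi : AbsContOn ψ T := by
    refine ⟨gpsi p f1, hint_gpsi, fun t ht => ?_⟩
    rw [hpsi t ht, hpsi0, gpsi_integral hq0 hp1 hp2 hf1a hf1b hf1c ht.1, zero_add]
  have hkey : ∀ (k : ℕ), 1 ≤ k → ∀ t ∈ Set.Icc (0:ℝ) T,
      ∫ s in (0:ℝ)..t, Rfun p f1 k s = p k - ζ t k := by
    intro k hk t ht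
    obtain ⟨j, rfl⟩ : ∃ j, k = j + 1 := ⟨k-1, by omega⟩
    rw [key_integral hq0 hp1 hp2 hf1a hf1b hf1c hk ht.1, hζk' t ht j]
  have hRint : ∀ (k : ℕ), 1 ≤ k →
      MeasureTheory.IntegrableOn (fun s => -(Rfun p f1 k s)) (Set.Icc 0 T) := by
    intro k hk
    apply MeasureTheory.Integrable.mono' (g := fun _ : ℝ => (1:ℝ))
    · exact integrableOn_const measure_Icc_lt_top.ne
    · exact ((Rfun_measurable hq0 hp1 hp2 hf1a hf1b hf1c k).neg).aestronglyMeasurable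
    · apply MeasureTheory.ae_of_all
      intro s
      rw [norm_neg, Real.norm_eq_abs,
        abs_of_nonneg (Rfun_nonneg hq0 hp1 hp2 hf1a hf1b hf1c hk s)]
      exact Rfun_le_one hq0 hp1 hp2 hf1a hf1b hf1c hk s
  have hCT : memCT T p ζ ψ := by
    refine ⟨?_, ?_, hpsi0, habs_psi, ?_, ?_⟩
    · intro k
      match k with
      | 0 => exact continuousOn_const.congr (fun t ht => hζ0 t ht)
      | (j+1) =>
        apply ((continuous_const.mul
          ((Fc_cont hq0 hp1 hf1a hf1b hf1c).pow (j+1))).continuousOn).congr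
        intro t ht
        exact hζk' t ht j
    · have h1 : ContinuousOn (fun t => ∫ s in (0:ℝ)..t, gpsi p f1 s) (Set.Icc 0 T) := by
        have h2 := intervalIntegral.continuousOn_primitive_interval
          (a := 0) (b := T) (f := gpsi p f1) (μ := volume) (by rwa [Set.uIcc_of_le hT0])
        rwa [Set.uIcc_of_le hT0] at h2
      apply h1.congr
      intro t ht
      rw [hpsi t ht, ← gpsi_integral hq0 hp1 hp2 hf1a hf1b hf1c ht.1]
    · intro t ht
      have hanti : ∀ s ∈ Set.Icc (0:ℝ) t, ψ t ≤ ψ s := by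
        intro s hs
        have hsT : s ∈ Set.Icc (0:ℝ) T := ⟨hs.1, le_trans hs.2 ht.2⟩
        rw [hpsi t ht, hpsi s hsT]
        exact SER_anti hq0 hp1 hp2 hf1a hf1b hf1c hsub hs.2
      have hmem : ψ t ∈ ψ '' Set.Icc 0 t := ⟨t, Set.right_mem_Icc.2 ht.1, rfl⟩
      have hInf : sInf (ψ '' Set.Icc 0 t) = ψ t := by
        apply IsLeast.csInf_eq
        exact ⟨hmem, fun y hy => by obtain ⟨s, hs, rfl⟩ := hy; exact hanti s hs⟩
      have hneg : ψ t ≤ 0 := by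
        have h3 := hanti 0 (Set.left_mem_Icc.2 ht.1)
        rwa [hpsi0] at h3
      rw [hζ0 t ht]
      unfold Skorokhod
      rw [hInf, min_eq_left hneg, sub_self]
    · intro k hk
      obtain ⟨j, rfl⟩ : ∃ j, k = j+1 := ⟨k-1, by omega⟩
      have hz0 : ζ 0 (j+1) = p (j+1) := by
        rw [hζk' 0 (Set.left_mem_Icc.2 hT0) j, Fc_zero hq0 hp1 hf1a hf1b hf1c,
          one_pow, mul_one]
      refine ⟨hz0, ?_, ?_, ?_⟩
      · intro t ht
        rw [hζk' t ht j]
        exact mul_nonneg (hq0 j) (pow_nonneg (Fc_mem hq0 hp1 hf1a hf1b hf1c t).1 _)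
      · intro t₁ h1 t₂ h2 h12
        show ζ t₂ (j+1) ≤ ζ t₁ (j+1)
        rw [hζk' t₁ h1 j, hζk' t₂ h2 j]
        apply mul_le_mul_of_nonneg_left _ (hq0 j)
        exact pow_le_pow_left₀ (Fc_mem hq0 hp1 hf1a hf1b hf1c t₂).1
          (Fc_anti hq0 hp1 hf1a hf1b hf1c h12) _
      · refine ⟨fun s => -(Rfun p f1 (j+1) s), hRint (j+1) (by omega), fun t ht => ?_⟩
        show ζ t (j+1) = ζ 0 (j+1) + ∫ s in (0:ℝ)..t, -(Rfun p f1 (j+1) s)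
        rw [intervalIntegral.integral_neg, hkey (j+1) (by omega) t ht, hz0]
        ring
  have hdouble : ∀ t ∈ Set.Icc (0:ℝ) T, ∀ k : ℕ, 1 ≤ k →
      (∫ s in (0:ℝ)..t, ∫ y in (0:ℝ)..1,
        (if y < rcoord (ζ s) k then (1:ℝ) else 0)) = p k - ζ t k := by
    intro t ht k hk
    rw [intervalIntegral.integral_congr (g := Rfun p f1 k) (fun s hs => ?_)]
    · exact hkey k hk t ht
    · rw [Set.uIcc_of_le ht.1] at hs
      have hsT : s ∈ Set.Icc (0:ℝ) T := ⟨hs.1, le_trans hs.2 ht.2⟩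
      rw [(hrc s hsT).2 k hk]
      exact inner_integral (Rfun_nonneg hq0 hp1 hp2 hf1a hf1b hf1c hk s)
        (Rfun_le_one hq0 hp1 hp2 hf1a hf1b hf1c hk s)
  have hzero : ∀ t ∈ Set.Icc (0:ℝ) T,
      (∫ s in (0:ℝ)..t, ∫ y in (0:ℝ)..1,
        (if y < rcoord (ζ s) 0 then (1:ℝ) else 0)) = 0 := by
    intro t ht
    rw [intervalIntegral.integral_congr (g := fun _ => (0:ℝ)) (fun s hs => ?_)]
    · simp
    · rw [Set.uIcc_of_le ht.1] at hs
      have hsT : s ∈ Set.Icc (0:ℝ) T := ⟨hs.1, le_trans hs.2 ht.2⟩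
      rw [(hrc s hsT).1]
      rw [intervalIntegral.integral_congr (g := fun _ => (0:ℝ)) (fun y hy => ?_)]
      · simp
      · rw [Set.uIcc_of_le zero_le_one] at hy
        rw [if_neg (not_lt.2 hy.1)]
  have hST : memST T p ζ ψ (fun _ _ _ => (1:ℝ)) := by
    refine ⟨fun k => measurable_const, fun k s y => zero_le_one, fun t ht => ?_,
      fun k hk t ht => ?_⟩
    · show ψ t = ∑' k : ℕ, ((k:ℝ) - 2) * ∫ s in (0:ℝ)..t, ∫ y in (0:ℝ)..1,
        (if y < rcoord (ζ s) k then (1:ℝ) else 0)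
      set a : ℕ → ℝ := fun k => ((k:ℝ) - 2) * ∫ s in (0:ℝ)..t, ∫ y in (0:ℝ)..1,
        (if y < rcoord (ζ s) k then (1:ℝ) else 0) with hadef
      have ha0 : a 0 = 0 := by
        rw [hadef]
        simp only []
        rw [hzero t ht, mul_zero]
      have haj : ∀ j : ℕ, a (j+1) =
          (((j+1:ℕ):ℝ) - 2) * (p (j+1) - p (j+1) * Fc f1 t ^ (j+1)) := by
        intro j
        rw [hadef]
        simp only []
        rw [hdouble t ht (j+1) (by omega), hζk' t ht j]
      have hsuma : Summable a := by
        rw [← summable_nat_add_iff 1]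
        exact ((SER_summable hq0 hp1 hp2 hf1a hf1b hf1c t).congr (fun j => (haj j).symm))
      rw [hpsi t ht, Summable.tsum_eq_zero_add hsuma, ha0, zero_add, tsum_congr haj]
      unfold SER
      rfl
    · show ζ t k = p k - ∫ s in (0:ℝ)..t, ∫ y in (0:ℝ)..1,
        (if y < rcoord (ζ s) k then (1:ℝ) else 0)
      rw [hdouble t ht k hk]
      ring
  have hcost : costOf T (fun _ _ _ => (1:ℝ)) = 0 := by
    have h1 : ellFn 1 = 0 := by unfold ellFn; simp
    simp [costOf, h1]
  refine ⟨hCT, ?_⟩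
  unfold IT
  rw [if_pos hCT]
  apply le_antisymm _ zero_le
  calc (⨅ (φ : ℕ → ℝ → ℝ → ℝ) (_ : memST T p ζ ψ φ), costOf T φ)
      ≤ costOf T (fun _ _ _ => (1:ℝ)) := iInf₂_le _ hST
    _ = 0 := hcost
end

section
/- Assume in addition that ∑_{k≥1} k^{1+ε}·p_k < ∞ for some ε > 0. Then for every (ζ, ψ) ∈ C_T with I_T(ζ, ψ) < ∞, the infimum defining I_T is attained: there exists φ ∈ S_T(ζ, ψ) with ∑_{k≥0} ∫_{[0,T]×[0,1]} ℓ(φ_k(s,y)) ds dy = I_T(ζ, ψ). -/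
open MeasureTheory
open scoped ENNReal

lemma ellFn_nonneg {u : ℝ} (hu : 0 ≤ u) : 0 ≤ ellFn u := by
  rcases hu.eq_or_lt with h | h
  · simp [ellFn, ← h]
  · have h1 := Real.one_sub_inv_le_log_of_pos h
    have h2 : u * (1 - u⁻¹) ≤ u * Real.log u := mul_le_mul_of_nonneg_left h1 h.le
    have h3 : u * (1 - u⁻¹) = u - 1 := by field_simp
    simp only [ellFn]; nlinarith

lemma ellFn_one : ellFn 1 = 0 := by simp [ellFn]

lemma le_ellFn_add {u : ℝ} (hu : 0 ≤ u) : u ≤ ellFn u + Real.exp 2 := by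
  by_cases h : u ≤ Real.exp 2
  · have := ellFn_nonneg hu; linarith
  · push_neg at h
    have hu0 : 0 < u := lt_trans (Real.exp_pos 2) h
    have hl : (2:ℝ) ≤ Real.log u := by
      have := Real.log_le_log (Real.exp_pos 2) h.le
      simpa [Real.log_exp] using this
    have : 2 * u ≤ u * Real.log u := by nlinarith
    have he := (Real.exp_pos 2).le
    simp only [ellFn]; nlinarith

lemma continuous_ellFn : Continuous ellFn := by
  unfold ellFn; exact (Real.continuous_mul_log.sub continuous_id).add continuous_const

lemma convexOn_ellFn : ConvexOn ℝ (Set.Ici (0:ℝ)) ellFn := by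
  have h2 : ConvexOn ℝ (Set.Ici (0:ℝ)) (fun u : ℝ => -u + 1) := by
    refine ⟨convex_Ici 0, fun x _ y _ a b ha hb hab => ?_⟩
    simp only [smul_eq_mul]
    apply le_of_eq; nlinarith [hab, sq_nonneg (a+b)]
  have hfe : ellFn = ((fun x : ℝ => x * Real.log x) + fun u : ℝ => -u + 1) := by
    funext u; simp only [ellFn, Pi.add_apply]; ring
  rw [hfe]; exact Real.convexOn_mul_log.add h2

lemma measurable_ellFn : Measurable ellFn := continuous_ellFn.measurable

/-! ### Auxiliary definitions for the minimizer -/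

open Classical in
/-- `rcoord (ζ s) k` extended by `0` off `[0,T]`. -/
noncomputable def Gd (T : ℝ) (ζ : ℝ → ℕ → ℝ) (k : ℕ) (s : ℝ) : ℝ :=
  if s ∈ Set.Icc (0:ℝ) T then rcoord (ζ s) k else 0

/-- The flux of a control `φ`. -/
noncomputable def Fd (T : ℝ) (ζ : ℝ → ℕ → ℝ) (φ : ℕ → ℝ → ℝ → ℝ) (k : ℕ) (s : ℝ) : ℝ :=
  ∫ y in (0:ℝ)..1, if y < Gd T ζ k s then φ k s y else 0

/-- The candidate minimizer built from `φ`. -/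
noncomputable def stard (T : ℝ) (ζ : ℝ → ℕ → ℝ) (φ : ℕ → ℝ → ℝ → ℝ) (k : ℕ)
    (s y : ℝ) : ℝ :=
  if y < Gd T ζ k s then Fd T ζ φ k s / Gd T ζ k s else 1

section CT

variable {T : ℝ} {p : ℕ → ℝ} {ζ : ℝ → ℕ → ℝ} {ψ : ℝ → ℝ} {ε : ℝ}

lemma zeta_nonneg (hmem : memCT T p ζ ψ) {k : ℕ} (hk : 1 ≤ k) {t : ℝ}
    (ht : t ∈ Set.Icc (0:ℝ) T) : 0 ≤ ζ t k :=
  (hmem.2.2.2.2.2 k hk).2.1 t ht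

lemma zeta_le_p (hmem : memCT T p ζ ψ) {k : ℕ} (hk : 1 ≤ k) {t : ℝ}
    (ht : t ∈ Set.Icc (0:ℝ) T) : ζ t k ≤ p k := by
  have h0 : (0:ℝ) ∈ Set.Icc (0:ℝ) T := ⟨le_refl 0, ht.1.trans ht.2⟩
  have := (hmem.2.2.2.2.2 k hk).2.2.1 h0 ht ht.1
  calc ζ t k ≤ ζ 0 k := this
  _ = p k := (hmem.2.2.2.2.2 k hk).1

lemma summable_kp (hε : 0 < ε) (hp : ∀ k, 1 ≤ k → 0 ≤ p k)
    (hmom : Summable (fun k : ℕ => ((k + 1 : ℕ) : ℝ) ^ (1 + ε) * p (k + 1))) :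
    Summable (fun j : ℕ => ((j + 1 : ℕ) : ℝ) * p (j + 1)) := by
  refine Summable.of_nonneg_of_le (fun j => ?_) (fun j => ?_) hmom
  · have := hp (j+1) (Nat.le_add_left 1 j)
    positivity
  · have h1 : (1:ℝ) ≤ ((j + 1 : ℕ) : ℝ) := by exact_mod_cast Nat.one_le_iff_ne_zero.2 (Nat.succ_ne_zero j)
    have hx : ((j + 1 : ℕ) : ℝ) ≤ ((j + 1 : ℕ) : ℝ) ^ (1 + ε) := by
      calc ((j + 1 : ℕ) : ℝ) = ((j + 1 : ℕ) : ℝ) ^ (1:ℝ) := (Real.rpow_one _).symm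
      _ ≤ ((j + 1 : ℕ) : ℝ) ^ (1 + ε) := Real.rpow_le_rpow_of_exponent_le h1 (by linarith)
    exact mul_le_mul_of_nonneg_right hx (hp (j+1) (Nat.le_add_left 1 j))

lemma summable_zeta (hmem : memCT T p ζ ψ)
    (hkp : Summable (fun j : ℕ => ((j + 1 : ℕ) : ℝ) * p (j + 1)))
    {s : ℝ} (hs : s ∈ Set.Icc (0:ℝ) T) :
    Summable (fun j : ℕ => ((j + 1 : ℕ) : ℝ) * ζ s (j + 1)) := by
  refine Summable.of_nonneg_of_le (fun j => ?_) (fun j => ?_) hkp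
  · have := zeta_nonneg hmem (Nat.le_add_left 1 j) hs
    positivity
  · exact mul_le_mul_of_nonneg_left (zeta_le_p hmem (Nat.le_add_left 1 j) hs)
      (Nat.cast_nonneg _)

lemma rcoord_nonneg (hmem : memCT T p ζ ψ) {s : ℝ} (hs : s ∈ Set.Icc (0:ℝ) T) (k : ℕ) :
    0 ≤ rcoord (ζ s) k := by
  unfold rcoord
  split_ifs with h h0
  · exact div_nonneg (le_max_right _ _) h.1.le
  · have hk : 1 ≤ k := Nat.one_le_iff_ne_zero.2 h0
    exact div_nonneg (mul_nonneg (Nat.cast_nonneg _) (zeta_nonneg hmem hk hs)) h.1.le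
  · exact le_refl 0

lemma rcoord_le_one (hmem : memCT T p ζ ψ) {s : ℝ} (hs : s ∈ Set.Icc (0:ℝ) T) (k : ℕ) :
    rcoord (ζ s) k ≤ 1 := by
  unfold rcoord
  split_ifs with h h0
  · rw [div_le_one h.1]
    unfold rtot
    have : 0 ≤ ∑' j : ℕ, ((j + 1 : ℕ) : ℝ) * ζ s (j + 1) :=
      tsum_nonneg (fun j => mul_nonneg (Nat.cast_nonneg _) (zeta_nonneg hmem (Nat.le_add_left 1 j) hs))
    linarith
  · rw [div_le_one h.1]
    have hk : 1 ≤ k := Nat.one_le_iff_ne_zero.2 h0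
    unfold rtot
    have hterm : (k : ℝ) * ζ s k = ((k - 1 + 1 : ℕ) : ℝ) * ζ s (k - 1 + 1) := by
      have : k - 1 + 1 = k := Nat.succ_pred_eq_of_pos hk
      rw [this]
    have hle : (k : ℝ) * ζ s k ≤ ∑' j : ℕ, ((j + 1 : ℕ) : ℝ) * ζ s (j + 1) := by
      rw [hterm]
      exact Summable.le_tsum h.2 (k-1) (fun j _ => mul_nonneg (Nat.cast_nonneg _)
        (zeta_nonneg hmem (Nat.le_add_left 1 j) hs))
    have : (0:ℝ) ≤ max (ζ s 0) 0 := le_max_right _ _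
    linarith
  · exact zero_le_one

lemma Gd_eq {s : ℝ} (hs : s ∈ Set.Icc (0:ℝ) T) (k : ℕ) : Gd T ζ k s = rcoord (ζ s) k :=
  if_pos hs

lemma Gd_nonneg (hmem : memCT T p ζ ψ) (k : ℕ) (s : ℝ) : 0 ≤ Gd T ζ k s := by
  unfold Gd; split_ifs with h
  · exact rcoord_nonneg hmem h k
  · exact le_refl 0

lemma Gd_le_one (hmem : memCT T p ζ ψ) (k : ℕ) (s : ℝ) : Gd T ζ k s ≤ 1 := by
  unfold Gd; split_ifs with h
  · exact rcoord_le_one hmem h k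
  · exact zero_le_one

end CT

section Meas

variable {T : ℝ} {p : ℕ → ℝ} {ζ : ℝ → ℕ → ℝ} {ψ : ℝ → ℝ} {φ : ℕ → ℝ → ℝ → ℝ}

lemma measurable_Gd (hmem : memCT T p ζ ψ)
    (hkp : Summable (fun j : ℕ => ((j + 1 : ℕ) : ℝ) * p (j + 1))) (k : ℕ) :
    Measurable (Gd T ζ k) := by
  classical
  set I := Set.Icc (0:ℝ) T with hI
  have hcont : ∀ m : ℕ, Continuous (fun s : I => ζ s m) := fun m => (hmem.1 m).restrict
  have hts : Continuous (fun s : I => ∑' j : ℕ, ((j + 1 : ℕ) : ℝ) * ζ (s:ℝ) (j + 1)) := by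
    apply continuous_tsum (fun j => (continuous_const.mul (hcont (j+1)))) hkp
    intro j x
    have h1 : 0 ≤ ((j + 1 : ℕ) : ℝ) * ζ (x:ℝ) (j + 1) :=
      mul_nonneg (Nat.cast_nonneg _) (zeta_nonneg hmem (Nat.le_add_left 1 j) x.2)
    have h2 : ((j + 1 : ℕ) : ℝ) * ζ (x:ℝ) (j + 1) ≤ ((j + 1 : ℕ) : ℝ) * p (j + 1) :=
      mul_le_mul_of_nonneg_left (zeta_le_p hmem (Nat.le_add_left 1 j) x.2) (Nat.cast_nonneg _)
    rw [Real.norm_eq_abs]; show |((j + 1 : ℕ) : ℝ) * ζ (x:ℝ) (j + 1)| ≤ _; rw [abs_of_nonneg h1]; exact h2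
  have hrt : Continuous (fun s : I => rtot (ζ s)) := by
    unfold rtot; exact ((hcont 0).max continuous_const).add hts
  have hnum : Continuous (fun s : I =>
      (if k = 0 then max (ζ (s:ℝ) 0) 0 else (k : ℝ) * ζ (s:ℝ) k)) := by
    by_cases k0 : k = 0
    · simp only [k0, if_true]; exact (hcont 0).max continuous_const
    · simp only [k0, if_false]; exact continuous_const.mul (hcont k)
  have hmeasF : Measurable (fun s : I => rcoord (ζ s) k) := by
    have heq : (fun s : I => rcoord (ζ s) k) = fun s : I =>
        if 0 < rtot (ζ s) then
          (if k = 0 then max (ζ (s:ℝ) 0) 0 else (k : ℝ) * ζ (s:ℝ) k) / rtot (ζ s)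
        else 0 := by
      funext s
      unfold rcoord
      by_cases hpos : 0 < rtot (ζ s)
      · rw [if_pos ⟨hpos, summable_zeta hmem hkp s.2⟩, if_pos hpos]
        by_cases k0 : k = 0 <;> simp [k0]
      · rw [if_neg (fun hc => hpos hc.1), if_neg hpos]
    rw [heq]
    have hset : MeasurableSet {s : I | 0 < rtot (ζ s)} :=
      measurableSet_lt measurable_const hrt.measurable
    exact Measurable.ite hset (hnum.measurable.div hrt.measurable) measurable_const
  have hGd : Gd T ζ k = fun x : ℝ =>
      if hx : x ∈ I then (fun s : I => rcoord (ζ s) k) ⟨x, hx⟩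
      else (fun _ : ↥Iᶜ => (0:ℝ)) ⟨x, hx⟩ := by
    funext x; by_cases h : x ∈ I <;> simp [Gd, h, hI]
  rw [hGd]
  exact Measurable.dite hmeasF measurable_const measurableSet_Icc

lemma measurable_ite_Gd (hG : Measurable (Gd T ζ k))
    (hφ : Measurable (Function.uncurry (φ k))) :
    Measurable (fun q : ℝ × ℝ => if q.2 < Gd T ζ k q.1 then φ k q.1 q.2 else 0) := by
  classical
  refine Measurable.ite ?_ hφ measurable_const
  exact measurableSet_lt measurable_snd (hG.comp measurable_fst)

lemma measurable_Fd (hG : Measurable (Gd T ζ k))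
    (hφ : Measurable (Function.uncurry (φ k))) : Measurable (Fd T ζ φ k) := by
  have hf := measurable_ite_Gd (ζ := ζ) (T := T) hG hφ
  have heq : Fd T ζ φ k = fun s =>
      ∫ y, (fun q : ℝ × ℝ => if q.2 < Gd T ζ k q.1 then φ k q.1 q.2 else 0) (s, y)
        ∂(volume.restrict (Set.Ioc (0:ℝ) 1)) := by
    funext s; exact intervalIntegral.integral_of_le zero_le_one
  rw [heq]
  exact hf.stronglyMeasurable.integral_prod_right'.measurable

lemma Fd_nonneg (hφ0 : ∀ s y, 0 ≤ φ k s y) (s : ℝ) : 0 ≤ Fd T ζ φ k s := by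
  refine intervalIntegral.integral_nonneg zero_le_one (fun y _ => ?_)
  by_cases h : y < Gd T ζ k s <;> simp [h, hφ0 s y]

lemma int01_ite_nonpos {r : ℝ} (hr : r ≤ 0) (f : ℝ → ℝ) :
    (∫ y in (0:ℝ)..1, if y < r then f y else 0) = 0 := by
  rw [intervalIntegral.integral_of_le zero_le_one]
  have hEq : Set.EqOn (fun y => if y < r then f y else 0) (fun _ => (0:ℝ)) (Set.Ioc 0 1) :=
    fun y hy => if_neg (not_lt.2 (hr.trans hy.1.le))
  rw [setIntegral_congr_fun measurableSet_Ioc hEq]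
  simp

lemma int01_ite_eq_setIntegral {r : ℝ} (hr1 : r ≤ 1) (f : ℝ → ℝ) :
    (∫ y in (0:ℝ)..1, if y < r then f y else 0) = ∫ y in Set.Ioo (0:ℝ) r, f y := by
  classical
  rcases le_or_gt r 0 with h | h
  · rw [int01_ite_nonpos h, Set.Ioo_eq_empty (by intro hc; exact absurd (hc.trans_le h) (lt_irrefl 0))]
    simp
  · rw [intervalIntegral.integral_of_le zero_le_one]
    have hind : (fun y => if y < r then f y else 0) = (Set.Iio r).indicator f := by
      funext y; simp [Set.indicator_apply, Set.mem_Iio]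
    rw [hind, setIntegral_indicator measurableSet_Iio]
    have hset : Set.Ioc (0:ℝ) 1 ∩ Set.Iio r = Set.Ioo 0 r := by
      ext y
      constructor
      · rintro ⟨⟨h1, _⟩, h3⟩; exact ⟨h1, h3⟩
      · rintro ⟨h1, h2⟩; exact ⟨⟨h1, (h2.trans_le hr1).le⟩, h2⟩
    rw [hset]

lemma int01_ite_const {r c : ℝ} (hr0 : 0 < r) (hr1 : r ≤ 1) :
    (∫ y in (0:ℝ)..1, if y < r then c else 0) = r * c := by
  rw [int01_ite_eq_setIntegral hr1 (fun _ => c), setIntegral_const]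
  rw [measureReal_def, Real.volume_Ioo, smul_eq_mul, ENNReal.toReal_ofReal (by linarith)]
  ring_nf

lemma star_inner (hmem : memCT T p ζ ψ) (hφ0 : ∀ s y, 0 ≤ φ k s y) {s : ℝ}
    (hs : s ∈ Set.Icc (0:ℝ) T) :
    (∫ y in (0:ℝ)..1, if y < Gd T ζ k s then stard T ζ φ k s y else 0)
      = Fd T ζ φ k s := by
  have hr0 : 0 ≤ Gd T ζ k s := Gd_nonneg hmem k s
  have hr1 : Gd T ζ k s ≤ 1 := Gd_le_one hmem k s
  have hint : (fun y => if y < Gd T ζ k s then stard T ζ φ k s y else 0)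
      = fun y => if y < Gd T ζ k s then Fd T ζ φ k s / Gd T ζ k s else 0 := by
    funext y; by_cases h : y < Gd T ζ k s <;> simp [stard, h]
  rcases hr0.eq_or_lt with h0 | hpos
  · rw [hint, int01_ite_nonpos (le_of_eq h0.symm)]
    unfold Fd
    rw [show Gd T ζ k s = (0:ℝ) from h0.symm, int01_ite_nonpos le_rfl]
  · rw [hint, int01_ite_const hpos hr1]
    field_simp

end Meas

section Slice

variable {T : ℝ} {p : ℕ → ℝ} {ζ : ℝ → ℕ → ℝ} {ψ : ℝ → ℝ} {φ : ℕ → ℝ → ℝ → ℝ} {k : ℕ}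

lemma integrable_of_lint {α : Type*} {m : MeasurableSpace α} {μ : Measure α} {g : α → ℝ}
    (hm : AEStronglyMeasurable g μ) (h0 : ∀ x, 0 ≤ g x)
    (hfin : (∫⁻ x, ENNReal.ofReal (g x) ∂μ) ≠ ⊤) : Integrable g μ :=
  ⟨hm, (hasFiniteIntegral_iff_ofReal (ae_of_all _ h0)).2 hfin.lt_top⟩

lemma star_slice (hmem : memCT T p ζ ψ) (s : ℝ) :
    (∫⁻ y in Set.Icc (0:ℝ) 1, ENNReal.ofReal (ellFn (stard T ζ φ k s y)))
      = ENNReal.ofReal (ellFn (Fd T ζ φ k s / Gd T ζ k s)) * ENNReal.ofReal (Gd T ζ k s) := by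
  have hr0 : 0 ≤ Gd T ζ k s := Gd_nonneg hmem k s
  have hr1 : Gd T ζ k s ≤ 1 := Gd_le_one hmem k s
  have hind : (fun y => ENNReal.ofReal (ellFn (stard T ζ φ k s y)))
      = (Set.Iio (Gd T ζ k s)).indicator
          (fun _ => ENNReal.ofReal (ellFn (Fd T ζ φ k s / Gd T ζ k s))) := by
    funext y
    by_cases h : y < Gd T ζ k s
    · simp [stard, h, Set.indicator_apply, Set.mem_Iio]
    · simp [stard, h, Set.indicator_apply, Set.mem_Iio, ellFn_one]
  rw [hind, lintegral_indicator_const measurableSet_Iio,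
    Measure.restrict_apply measurableSet_Iio]
  have hset : Set.Iio (Gd T ζ k s) ∩ Set.Icc 0 1 = Set.Ico 0 (Gd T ζ k s) := by
    ext y
    constructor
    · rintro ⟨h1, h2, _⟩; exact ⟨h2, h1⟩
    · rintro ⟨h1, h2⟩; exact ⟨h2, h1, (h2.trans_le hr1).le⟩
  rw [hset, Real.volume_Ico, sub_zero]

lemma jensen_slice {r c : ℝ} (hr0 : 0 ≤ r) (hr1 : r ≤ 1) {h : ℝ → ℝ}
    (hm : Measurable h) (hnn : ∀ y, 0 ≤ h y)
    (hc : c = ∫ y in (0:ℝ)..1, if y < r then h y else 0) :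
    ENNReal.ofReal (ellFn (c / r)) * ENNReal.ofReal r
      ≤ ∫⁻ y in Set.Icc (0:ℝ) 1, ENNReal.ofReal (ellFn (h y)) := by
  rcases hr0.eq_or_lt with h0 | hpos
  · simp [← h0]
  set μ := volume.restrict (Set.Ioo (0:ℝ) r) with hμ
  have hμu : μ Set.univ = ENNReal.ofReal r := by
    simp [hμ, Measure.restrict_apply_univ, Real.volume_Ioo]
  haveI : IsFiniteMeasure μ := ⟨by rw [hμu]; exact ENNReal.ofReal_lt_top⟩
  haveI : NeZero μ := by
    refine ⟨fun hz => ?_⟩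
    rw [hz] at hμu
    simp only [Measure.coe_zero, Pi.zero_apply] at hμu
    rw [eq_comm, ENNReal.ofReal_eq_zero] at hμu
    linarith
  have hsub : Set.Ioo (0:ℝ) r ⊆ Set.Icc 0 1 := fun y hy => ⟨hy.1.le, (hy.2.trans_le hr1).le⟩
  have hmono : (∫⁻ y, ENNReal.ofReal (ellFn (h y)) ∂μ)
      ≤ ∫⁻ y in Set.Icc (0:ℝ) 1, ENNReal.ofReal (ellFn (h y)) :=
    lintegral_mono' (Measure.restrict_mono hsub le_rfl) le_rfl
  by_cases Htop : (∫⁻ y, ENNReal.ofReal (ellFn (h y)) ∂μ) = ⊤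
  · rw [Htop] at hmono; exact le_trans le_top hmono
  · have hIell : Integrable (fun y => ellFn (h y)) μ :=
      integrable_of_lint ((measurable_ellFn.comp hm).aestronglyMeasurable)
        (fun y => ellFn_nonneg (hnn y)) Htop
    have hIh : Integrable h μ := by
      refine Integrable.mono' (hIell.add (integrable_const (Real.exp 2)))
        hm.aestronglyMeasurable (ae_of_all _ fun y => ?_)
      rw [Real.norm_eq_abs, abs_of_nonneg (hnn y)]
      exact le_ellFn_add (hnn y)
    have hcval : c = ∫ y, h y ∂μ := by rw [hc, int01_ite_eq_setIntegral hr1 h]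
    have hc0 : 0 ≤ c := by rw [hcval]; exact integral_nonneg (fun y => hnn y)
    have havg : (⨍ y, h y ∂μ) = c / r := by
      rw [average_eq, measureReal_def, hμu, ENNReal.toReal_ofReal hpos.le, smul_eq_mul, ← hcval]
      field_simp
    have hjen : ellFn (c / r) ≤ ⨍ y, ellFn (h y) ∂μ := by
      have hcomp : Integrable (ellFn ∘ h) μ := hIell
      have := ConvexOn.map_average_le convexOn_ellFn continuous_ellFn.continuousOn
        isClosed_Ici (ae_of_all _ fun y => hnn y) hIh hcomp
      rwa [havg] at this
    have havg2 : (⨍ y, ellFn (h y) ∂μ) = r⁻¹ * ∫ y, ellFn (h y) ∂μ := by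
      rw [average_eq, measureReal_def, hμu, ENNReal.toReal_ofReal hpos.le, smul_eq_mul]
    have hkey : ellFn (c / r) * r ≤ ∫ y, ellFn (h y) ∂μ := by
      rw [havg2] at hjen
      calc ellFn (c / r) * r ≤ (r⁻¹ * ∫ y, ellFn (h y) ∂μ) * r :=
            mul_le_mul_of_nonneg_right hjen hpos.le
      _ = ∫ y, ellFn (h y) ∂μ := by field_simp
    calc ENNReal.ofReal (ellFn (c / r)) * ENNReal.ofReal r
        = ENNReal.ofReal (ellFn (c / r) * r) :=
          (ENNReal.ofReal_mul (ellFn_nonneg (div_nonneg hc0 hpos.le))).symm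
      _ ≤ ENNReal.ofReal (∫ y, ellFn (h y) ∂μ) := ENNReal.ofReal_le_ofReal hkey
      _ = ∫⁻ y, ENNReal.ofReal (ellFn (h y)) ∂μ :=
          ofReal_integral_eq_lintegral_ofReal hIell (ae_of_all _ fun y => ellFn_nonneg (hnn y))
      _ ≤ _ := hmono

end Slice

section Flux

variable {T : ℝ} {p : ℕ → ℝ} {ζ : ℝ → ℕ → ℝ} {ψ : ℝ → ℝ} {φ : ℕ → ℝ → ℝ → ℝ} {k : ℕ}

lemma Fd_ofReal_le (hφ0 : ∀ s y, 0 ≤ φ k s y) (s : ℝ) :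
    ENNReal.ofReal (Fd T ζ φ k s)
      ≤ (∫⁻ y in Set.Icc (0:ℝ) 1, ENNReal.ofReal (ellFn (φ k s y)))
        + ENNReal.ofReal (Real.exp 2) := by
  classical
  set g : ℝ → ℝ := fun y => if y < Gd T ζ k s then φ k s y else 0 with hg
  have hg0 : ∀ y, 0 ≤ g y := fun y => by
    by_cases h : y < Gd T ζ k s <;> simp [hg, h, hφ0 s y]
  have hgle : ∀ y, g y ≤ φ k s y := fun y => by
    by_cases h : y < Gd T ζ k s <;> simp [hg, h, hφ0 s y]
  have hchain : (∫⁻ y in Set.Ioc (0:ℝ) 1, ENNReal.ofReal (g y))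
      ≤ (∫⁻ y in Set.Icc (0:ℝ) 1, ENNReal.ofReal (ellFn (φ k s y)))
        + ENNReal.ofReal (Real.exp 2) := by
    calc (∫⁻ y in Set.Ioc (0:ℝ) 1, ENNReal.ofReal (g y))
        ≤ ∫⁻ y in Set.Icc (0:ℝ) 1, ENNReal.ofReal (φ k s y) := by
          refine lintegral_mono' (Measure.restrict_mono Set.Ioc_subset_Icc_self le_rfl) ?_
          exact fun y => ENNReal.ofReal_le_ofReal (hgle y)
      _ ≤ ∫⁻ y in Set.Icc (0:ℝ) 1,
            (ENNReal.ofReal (ellFn (φ k s y)) + ENNReal.ofReal (Real.exp 2)) := by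
          refine lintegral_mono (fun y => ?_)
          rw [← ENNReal.ofReal_add (ellFn_nonneg (hφ0 s y)) (Real.exp_pos 2).le]
          exact ENNReal.ofReal_le_ofReal (le_ellFn_add (hφ0 s y))
      _ = (∫⁻ y in Set.Icc (0:ℝ) 1, ENNReal.ofReal (ellFn (φ k s y)))
            + ENNReal.ofReal (Real.exp 2) := by
          rw [lintegral_add_right _ measurable_const, setLIntegral_const]
          simp [Real.volume_Icc]
  by_cases hig : IntegrableOn g (Set.Ioc (0:ℝ) 1) volume
  · have hFd : Fd T ζ φ k s = ∫ y in Set.Ioc (0:ℝ) 1, g y := by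
      unfold Fd; exact intervalIntegral.integral_of_le zero_le_one
    rw [hFd, ofReal_integral_eq_lintegral_ofReal hig (ae_of_all _ hg0)]
    exact hchain
  · have hFd : Fd T ζ φ k s = 0 := by
      unfold Fd; rw [intervalIntegral.integral_of_le zero_le_one]
      exact integral_undef hig
    simp [hFd]

lemma Fd_integrableOn (hG : Measurable (Gd T ζ k))
    (hφ : Measurable (Function.uncurry (φ k))) (hφ0 : ∀ s y, 0 ≤ φ k s y)
    (hk : (∫⁻ s in Set.Icc (0:ℝ) T, ∫⁻ y in Set.Icc (0:ℝ) 1,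
        ENNReal.ofReal (ellFn (φ k s y))) ≠ ⊤) :
    IntegrableOn (Fd T ζ φ k) (Set.Icc (0:ℝ) T) := by
  refine integrable_of_lint ((measurable_Fd hG hφ).aestronglyMeasurable)
    (Fd_nonneg hφ0) ?_
  have hb : (∫⁻ s in Set.Icc (0:ℝ) T, ENNReal.ofReal (Fd T ζ φ k s))
      ≤ (∫⁻ s in Set.Icc (0:ℝ) T, ∫⁻ y in Set.Icc (0:ℝ) 1,
          ENNReal.ofReal (ellFn (φ k s y)))
        + ENNReal.ofReal (Real.exp 2) * volume (Set.Icc (0:ℝ) T) := by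
    calc (∫⁻ s in Set.Icc (0:ℝ) T, ENNReal.ofReal (Fd T ζ φ k s))
        ≤ ∫⁻ s in Set.Icc (0:ℝ) T, ((∫⁻ y in Set.Icc (0:ℝ) 1,
            ENNReal.ofReal (ellFn (φ k s y))) + ENNReal.ofReal (Real.exp 2)) :=
          lintegral_mono (fun s => Fd_ofReal_le hφ0 s)
      _ = _ := by rw [lintegral_add_right _ measurable_const, setLIntegral_const]
  refine ne_top_of_le_ne_top ?_ hb
  refine ENNReal.add_ne_top.2 ⟨hk, ?_⟩
  exact ENNReal.mul_ne_top ENNReal.ofReal_ne_top (by simp [Real.volume_Icc])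

lemma ae_eq_of_intInt_eq {T : ℝ} (hT : 0 < T) {f g : ℝ → ℝ}
    (hfm : Measurable f) (hgm : Measurable g) (hf0 : ∀ s, 0 ≤ f s) (hg0 : ∀ s, 0 ≤ g s)
    (hfi : IntegrableOn f (Set.Icc 0 T)) (hgi : IntegrableOn g (Set.Icc 0 T))
    (heq : ∀ t ∈ Set.Icc (0:ℝ) T, (∫ s in (0:ℝ)..t, f s) = ∫ s in (0:ℝ)..t, g s) :
    ∀ᵐ s ∂(volume.restrict (Set.Icc (0:ℝ) T)), f s = g s := by
  set ν := volume.restrict (Set.Icc (0:ℝ) T) with hν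
  have main : ∀ a b : ℝ, (∫⁻ s in Set.Ioc a b, ENNReal.ofReal (f s) ∂ν)
      = ∫⁻ s in Set.Ioc a b, ENNReal.ofReal (g s) ∂ν := by
    intro a b
    set a' := max a 0 with ha'
    set b' := min b T with hb'
    have hsets : ∀ u : ℝ → ℝ, (∫⁻ s in Set.Ioc a b, ENNReal.ofReal (u s) ∂ν)
        = ∫⁻ s in Set.Ioc a b ∩ Set.Icc 0 T, ENNReal.ofReal (u s) := by
      intro u; rw [hν, Measure.restrict_restrict measurableSet_Ioc]
    have haeset : (Set.Ioc a b ∩ Set.Icc 0 T : Set ℝ) =ᵐ[volume] (Set.Ioc a' b' : Set ℝ) := by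
      rw [ae_eq_set]
      constructor
      · refine measure_mono_null (t := {(0:ℝ)}) (fun x hx => ?_) Real.volume_singleton
        rcases hx with ⟨⟨⟨hax, hxb⟩, ⟨h0x, hxT⟩⟩, hnot⟩
        rcases h0x.eq_or_lt with h0 | h0
        · exact Set.mem_singleton_iff.2 h0.symm
        · exact absurd ⟨max_lt hax h0, le_min hxb hxT⟩ hnot
      · refine measure_mono_null (t := {(0:ℝ)}) (fun x hx => ?_) Real.volume_singleton
        rcases hx with ⟨⟨ha'x, hxb'⟩, hnot⟩
        exact absurd ⟨⟨(le_max_left a 0).trans_lt ha'x, hxb'.trans (min_le_left b T)⟩,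
          ⟨((le_max_right a 0).trans_lt ha'x).le, hxb'.trans (min_le_right b T)⟩⟩ hnot
    rw [hsets f, hsets g, setLIntegral_congr haeset, setLIntegral_congr haeset]
    by_cases hab : a' < b'
    · have ha'mem : a' ∈ Set.Icc (0:ℝ) T :=
        ⟨le_max_right a 0, (hab.le.trans (min_le_right b T))⟩
      have hb'mem : b' ∈ Set.Icc (0:ℝ) T :=
        ⟨(le_max_right a 0).trans hab.le, min_le_right b T⟩
      have hsub : Set.Ioc a' b' ⊆ Set.Icc (0:ℝ) T := fun x hx =>
        ⟨(le_max_right a 0).trans hx.1.le, hx.2.trans (min_le_right b T)⟩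
      have hIf : IntegrableOn f (Set.Ioc a' b') := hfi.mono_set hsub
      have hIg : IntegrableOn g (Set.Ioc a' b') := hgi.mono_set hsub
      have hiif : ∀ c ∈ Set.Icc (0:ℝ) T, IntervalIntegrable f volume 0 c := by
        intro c hc
        rw [intervalIntegrable_iff_integrableOn_Ioc_of_le hc.1]
        exact hfi.mono_set (fun x hx => ⟨hx.1.le, hx.2.trans hc.2⟩)
      have hiig : ∀ c ∈ Set.Icc (0:ℝ) T, IntervalIntegrable g volume 0 c := by
        intro c hc
        rw [intervalIntegrable_iff_integrableOn_Ioc_of_le hc.1]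
        exact hgi.mono_set (fun x hx => ⟨hx.1.le, hx.2.trans hc.2⟩)
      have hvalf : (∫ s in Set.Ioc a' b', f s)
          = (∫ s in (0:ℝ)..b', f s) - ∫ s in (0:ℝ)..a', f s := by
        rw [← intervalIntegral.integral_of_le hab.le]
        exact (intervalIntegral.integral_interval_sub_left (hiif b' hb'mem) (hiif a' ha'mem)).symm
      have hvalg : (∫ s in Set.Ioc a' b', g s)
          = (∫ s in (0:ℝ)..b', g s) - ∫ s in (0:ℝ)..a', g s := by
        rw [← intervalIntegral.integral_of_le hab.le]
        exact (intervalIntegral.integral_interval_sub_left (hiig b' hb'mem) (hiig a' ha'mem)).symm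
      rw [← ofReal_integral_eq_lintegral_ofReal hIf (ae_of_all _ hf0),
        ← ofReal_integral_eq_lintegral_ofReal hIg (ae_of_all _ hg0),
        hvalf, hvalg, heq a' ha'mem, heq b' hb'mem]
    · rw [Set.Ioc_eq_empty hab]; simp
  set μf := ν.withDensity (fun s => ENNReal.ofReal (f s)) with hμf
  set μg := ν.withDensity (fun s => ENNReal.ofReal (g s)) with hμg
  have hfin : (∫⁻ s, ENNReal.ofReal (f s) ∂ν) ≠ ⊤ := by
    have := (hasFiniteIntegral_iff_ofReal (ae_of_all _ hf0)).1 hfi.2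
    exact this.ne
  haveI : IsFiniteMeasure μf := by
    constructor
    rw [hμf, withDensity_apply _ MeasurableSet.univ, Measure.restrict_univ]
    exact hfin.lt_top
  have huniv : ∀ {u : ℝ → ℝ}, (∫⁻ s in Set.Ioc (-1:ℝ) T, ENNReal.ofReal (u s) ∂ν)
      = ∫⁻ s, ENNReal.ofReal (u s) ∂ν := by
    intro u
    have hss : Set.Icc (0:ℝ) T ⊆ Set.Ioc (-1:ℝ) T := fun x hx =>
      ⟨lt_of_lt_of_le neg_one_lt_zero hx.1, hx.2⟩
    rw [hν, Measure.restrict_restrict measurableSet_Ioc,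
      Set.inter_eq_self_of_subset_right hss]
  have hext : μf = μg := by
    refine Measure.ext_of_Ioc_finite μf μg ?_ (fun a b hab => ?_)
    · rw [hμf, hμg, withDensity_apply _ MeasurableSet.univ, Measure.restrict_univ,
        withDensity_apply _ MeasurableSet.univ, Measure.restrict_univ,
        ← huniv (u := f), ← huniv (u := g)]
      exact main (-1) T
    · rw [hμf, hμg, withDensity_apply _ measurableSet_Ioc, withDensity_apply _ measurableSet_Ioc]
      exact main a b
  have hae : (fun s => ENNReal.ofReal (f s)) =ᵐ[ν] (fun s => ENNReal.ofReal (g s)) := by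
    refine ae_eq_of_forall_setLIntegral_eq_of_sigmaFinite
      (ENNReal.measurable_ofReal.comp hfm) (ENNReal.measurable_ofReal.comp hgm)
      (fun A hA _ => ?_)
    have := congrArg (fun m : Measure ℝ => m A) hext
    simpa [hμf, hμg, withDensity_apply _ hA] using this
  filter_upwards [hae] with s hs
  exact (ENNReal.ofReal_eq_ofReal_iff (hf0 s) (hg0 s)).1 hs

end Flux

section Pin

variable {T : ℝ} {p : ℕ → ℝ} {ζ : ℝ → ℕ → ℝ} {ψ : ℝ → ℝ} {φ' φ'' : ℕ → ℝ → ℝ → ℝ}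

lemma intInt_congr (φ' : ℕ → ℝ → ℝ → ℝ) {t : ℝ} (ht : t ∈ Set.Icc (0:ℝ) T) (k : ℕ) :
    (∫ s in (0:ℝ)..t, ∫ y in (0:ℝ)..1, if y < rcoord (ζ s) k then φ' k s y else 0)
      = ∫ s in (0:ℝ)..t, Fd T ζ φ' k s := by
  apply intervalIntegral.integral_congr
  intro s hs
  rw [Set.uIcc_of_le ht.1] at hs
  have hs' : s ∈ Set.Icc (0:ℝ) T := ⟨hs.1, hs.2.trans ht.2⟩
  simp only [Fd, Gd_eq hs']

lemma flux_pin (hS' : memST T p ζ ψ φ') {k : ℕ} (hk : 1 ≤ k) {t : ℝ}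
    (ht : t ∈ Set.Icc (0:ℝ) T) :
    (∫ s in (0:ℝ)..t, Fd T ζ φ' k s) = p k - ζ t k := by
  have h := hS'.2.2.2 k hk t ht
  rw [← intInt_congr φ' ht k]
  linarith

lemma flux_pin0 (hmem : memCT T p ζ ψ)
    (hps : Summable (fun j : ℕ => p (j + 1)))
    (hkp : Summable (fun j : ℕ => ((j + 1 : ℕ) : ℝ) * p (j + 1)))
    (hS' : memST T p ζ ψ φ') (hS'' : memST T p ζ ψ φ'')
    {t : ℝ} (ht : t ∈ Set.Icc (0:ℝ) T) :
    (∫ s in (0:ℝ)..t, Fd T ζ φ' 0 s) = ∫ s in (0:ℝ)..t, Fd T ζ φ'' 0 s := by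
  set c : ℕ → ℝ := fun j => (((j + 1 : ℕ) : ℝ) - 2) * (p (j + 1) - ζ t (j + 1)) with hc
  have hcsum : Summable c := by
    apply Summable.of_abs
    refine Summable.of_nonneg_of_le (fun j => abs_nonneg _) (fun j => ?_)
      (hkp.add (hps.mul_left 2))
    have h1 : 0 ≤ p (j + 1) - ζ t (j + 1) := by
      have := zeta_le_p hmem (Nat.le_add_left 1 j) ht; linarith
    have h2 : p (j + 1) - ζ t (j + 1) ≤ p (j + 1) := by
      have := zeta_nonneg hmem (Nat.le_add_left 1 j) ht; linarith
    have h3 : |(((j + 1 : ℕ) : ℝ) - 2)| ≤ ((j + 1 : ℕ) : ℝ) + 2 := by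
      rw [abs_le]; constructor <;> [linarith [Nat.cast_nonneg (α := ℝ) (j+1)]; linarith [Nat.cast_nonneg (α := ℝ) (j+1)]]
    have hp0 : 0 ≤ p (j + 1) := by
      have := zeta_nonneg hmem (Nat.le_add_left 1 j) ht
      have := zeta_le_p hmem (Nat.le_add_left 1 j) ht
      linarith
    calc |c j| = |(((j + 1 : ℕ) : ℝ) - 2)| * (p (j + 1) - ζ t (j + 1)) := by
          rw [hc]; rw [abs_mul, abs_of_nonneg h1]
    _ ≤ (((j + 1 : ℕ) : ℝ) + 2) * p (j + 1) := by
          apply mul_le_mul h3 h2 h1 (by positivity)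
    _ = ((j + 1 : ℕ) : ℝ) * p (j + 1) + 2 * p (j + 1) := by ring
  have key : ∀ φ₁ : ℕ → ℝ → ℝ → ℝ, memST T p ζ ψ φ₁ →
      ψ t = -2 * (∫ s in (0:ℝ)..t, Fd T ζ φ₁ 0 s) + ∑' j, c j := by
    intro φ₁ hS₁
    have hterm : ∀ j : ℕ,
        (((j + 1 : ℕ) : ℝ) - 2) * (∫ s in (0:ℝ)..t, ∫ y in (0:ℝ)..1,
          if y < rcoord (ζ s) (j+1) then φ₁ (j+1) s y else 0) = c j := by
      intro j
      have h := hS₁.2.2.2 (j+1) (Nat.le_add_left 1 j) t ht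
      rw [hc]
      congr 1
      linarith
    have hψ := hS₁.2.2.1 t ht
    have hsum : Summable (fun k : ℕ => ((k : ℝ) - 2) * ∫ s in (0:ℝ)..t, ∫ y in (0:ℝ)..1,
        if y < rcoord (ζ s) k then φ₁ k s y else 0) := by
      rw [← summable_nat_add_iff 1]
      refine hcsum.congr (fun j => ?_)
      rw [← hterm j]
    rw [Summable.tsum_eq_zero_add hsum] at hψ
    rw [hψ]
    have htail : (∑' j : ℕ, (((j+1 : ℕ) : ℝ) - 2) * ∫ s in (0:ℝ)..t, ∫ y in (0:ℝ)..1,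
        if y < rcoord (ζ s) (j+1) then φ₁ (j+1) s y else 0) = ∑' j, c j :=
      tsum_congr (fun j => hterm j)
    rw [← intInt_congr φ₁ ht 0, ← htail]
    simp only [Nat.cast_zero]
    ring
  have h1 := key φ' hS'
  have h2 := key φ'' hS''
  linarith

end Pin

section Transfer

variable {T : ℝ} {p : ℕ → ℝ} {ζ : ℝ → ℕ → ℝ} {ψ : ℝ → ℝ} {φ : ℕ → ℝ → ℝ → ℝ}

lemma memST_stard (hmem : memCT T p ζ ψ)
    (hkp : Summable (fun j : ℕ => ((j + 1 : ℕ) : ℝ) * p (j + 1)))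
    (hS0 : memST T p ζ ψ φ) : memST T p ζ ψ (fun k => stard T ζ φ k) := by
  obtain ⟨hφm, hφ0, hψeq, hζeq⟩ := hS0
  have hG : ∀ k, Measurable (Gd T ζ k) := fun k => measurable_Gd hmem hkp k
  have hcongr : ∀ (k : ℕ), ∀ t ∈ Set.Icc (0:ℝ) T,
      (∫ s in (0:ℝ)..t, ∫ y in (0:ℝ)..1,
        if y < rcoord (ζ s) k then stard T ζ φ k s y else 0)
      = ∫ s in (0:ℝ)..t, ∫ y in (0:ℝ)..1,
        if y < rcoord (ζ s) k then φ k s y else 0 := by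
    intro k t ht
    apply intervalIntegral.integral_congr
    intro s hs
    rw [Set.uIcc_of_le ht.1] at hs
    have hs' : s ∈ Set.Icc (0:ℝ) T := ⟨hs.1, hs.2.trans ht.2⟩
    show (∫ y in (0:ℝ)..1, if y < rcoord (ζ s) k then stard T ζ φ k s y else 0)
      = ∫ y in (0:ℝ)..1, if y < rcoord (ζ s) k then φ k s y else 0
    rw [← Gd_eq (ζ := ζ) hs' k]
    exact star_inner hmem (fun s y => hφ0 k s y) hs'
  refine ⟨fun k => ?_, fun k s y => ?_, fun t ht => ?_, fun k hk t ht => ?_⟩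
  · show Measurable fun q : ℝ × ℝ =>
      if q.2 < Gd T ζ k q.1 then Fd T ζ φ k q.1 / Gd T ζ k q.1 else 1
    refine Measurable.ite (measurableSet_lt measurable_snd ((hG k).comp measurable_fst))
      (((measurable_Fd (hG k) (hφm k)).comp measurable_fst).div ((hG k).comp measurable_fst))
      measurable_const
  · show 0 ≤ stard T ζ φ k s y
    unfold stard
    split_ifs
    · exact div_nonneg (Fd_nonneg (fun s y => hφ0 k s y) s) (Gd_nonneg hmem k s)
    · exact zero_le_one
  · rw [show (∑' k : ℕ, ((k : ℝ) - 2) * ∫ s in (0:ℝ)..t, ∫ y in (0:ℝ)..1,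
        if y < rcoord (ζ s) k then stard T ζ φ k s y else 0)
      = ∑' k : ℕ, ((k : ℝ) - 2) * ∫ s in (0:ℝ)..t, ∫ y in (0:ℝ)..1,
        if y < rcoord (ζ s) k then φ k s y else 0 from
      tsum_congr fun k => by rw [hcongr k t ht]]
    exact hψeq t ht
  · rw [hcongr k t ht]
    exact hζeq k hk t ht

end Transfer

/-- the infimum defining the rate function I_T is attained whenever
it is finite. -/
theorem stmt15 (T : ℝ) (hT : 0 < T) (p : ℕ → ℝ)
    (hp : ∀ k, 1 ≤ k → 0 ≤ p k) (hp1 : (∑' k : ℕ, p (k + 1)) = 1)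
    (ε : ℝ) (hε : 0 < ε)
    (hmom : Summable (fun k : ℕ => ((k + 1 : ℕ) : ℝ) ^ (1 + ε) * p (k + 1)))
    (ζ : ℝ → ℕ → ℝ) (ψ : ℝ → ℝ)
    (hmem : memCT T p ζ ψ) (hfin : IT T p ζ ψ < ⊤) :
    ∃ φ : ℕ → ℝ → ℝ → ℝ, memST T p ζ ψ φ ∧ costOf T φ = IT T p ζ ψ := by
  classical
  have hkp : Summable (fun j : ℕ => ((j + 1 : ℕ) : ℝ) * p (j + 1)) :=
    summable_kp hε hp hmom
  have hps : Summable (fun j : ℕ => p (j + 1)) := by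
    by_contra hcon
    rw [tsum_eq_zero_of_not_summable hcon] at hp1
    norm_num at hp1
  unfold IT at hfin ⊢
  rw [if_pos hmem] at hfin ⊢
  have hex : ∃ φ₀, memST T p ζ ψ φ₀ ∧ costOf T φ₀ ≠ ⊤ := by
    by_contra hcon
    push_neg at hcon
    have htop : (⨅ (φ : ℕ → ℝ → ℝ → ℝ) (_ : memST T p ζ ψ φ), costOf T φ) = ⊤ := by
      simp only [iInf_eq_top]
      exact fun φ' h' => hcon φ' h'
    rw [htop] at hfin
    exact absurd hfin (lt_irrefl ⊤)
  obtain ⟨φ₀, hS0, hc0⟩ := hex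
  set Φ : ℕ → ℝ → ℝ → ℝ := fun k => stard T ζ φ₀ k with hΦ
  have hSst : memST T p ζ ψ Φ := memST_stard hmem hkp hS0
  have hkey : ∀ φ', memST T p ζ ψ φ' → costOf T Φ ≤ costOf T φ' := by
    intro φ' hS'
    unfold costOf
    refine ENNReal.tsum_le_tsum (fun k => ?_)
    by_cases Hk : (∫⁻ s in Set.Icc (0:ℝ) T, ∫⁻ y in Set.Icc (0:ℝ) 1,
        ENNReal.ofReal (ellFn (φ' k s y))) = ⊤
    · rw [Hk]; exact le_top
    · have hG := measurable_Gd hmem hkp k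
      have hF'i : IntegrableOn (Fd T ζ φ' k) (Set.Icc (0:ℝ) T) :=
        Fd_integrableOn hG (hS'.1 k) (fun s y => hS'.2.1 k s y) Hk
      have hF0i : IntegrableOn (Fd T ζ φ₀ k) (Set.Icc (0:ℝ) T) :=
        Fd_integrableOn hG (hS0.1 k) (fun s y => hS0.2.1 k s y)
          (ENNReal.lt_top_of_tsum_ne_top hc0 k).ne
      have heqint : ∀ t ∈ Set.Icc (0:ℝ) T,
          (∫ s in (0:ℝ)..t, Fd T ζ φ' k s) = ∫ s in (0:ℝ)..t, Fd T ζ φ₀ k s := by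
        rcases Nat.eq_zero_or_pos k with rfl | hk
        · exact fun t ht => flux_pin0 hmem hps hkp hS' hS0 ht
        · exact fun t ht => by rw [flux_pin hS' hk ht, flux_pin hS0 hk ht]
      have hae := ae_eq_of_intInt_eq hT (measurable_Fd hG (hS'.1 k))
        (measurable_Fd hG (hS0.1 k)) (Fd_nonneg (fun s y => hS'.2.1 k s y))
        (Fd_nonneg (fun s y => hS0.2.1 k s y)) hF'i hF0i heqint
      refine lintegral_mono_ae ?_
      filter_upwards [hae] with s hFe
      have hslice := star_slice (φ := φ₀) (k := k) hmem s
      calc (∫⁻ y in Set.Icc (0:ℝ) 1, ENNReal.ofReal (ellFn (Φ k s y)))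
          = ENNReal.ofReal (ellFn (Fd T ζ φ₀ k s / Gd T ζ k s))
              * ENNReal.ofReal (Gd T ζ k s) := hslice
        _ ≤ ∫⁻ y in Set.Icc (0:ℝ) 1, ENNReal.ofReal (ellFn (φ' k s y)) := by
            refine jensen_slice (Gd_nonneg hmem k s) (Gd_le_one hmem k s)
              ((hS'.1 k).of_uncurry_left) (fun y => hS'.2.1 k s y) ?_
            exact hFe.symm
  exact ⟨Φ, hSst, le_antisymm (le_iInf₂ fun φ' h' => hkey φ' h') (iInf₂_le Φ hSst)⟩
end

section
/- Let p = (p_k)_{k≥1} be a sequence of nonnegative reals with ∑_{k≥1} p_k = 1 and ∑_{k≥1} k²·p_k < ∞, and set μ = ∑_{k≥1} k·p_k. If ρ ∈ [0,1) satisfies ∑_{k≥1} k·p_k·ρ^{k−1} = μ·ρ (with the convention 0⁰ = 1), then ∑_{k≥1} k·(k−2)·p_k·ρ^{k−1} ≤ 0. -/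
lemma stmt17_aux (ρ : ℝ) (h0 : 0 ≤ ρ) (h1 : ρ ≤ 1) :
    ∀ k : ℕ, (k : ℝ) * ρ ^ k * (1 - ρ) ≤ ρ * (1 - ρ ^ k) := by
  intro k
  induction k with
  | zero => simp
  | succ n ih =>
    have hpn : 0 ≤ ρ ^ n := pow_nonneg h0 n
    have hpn1 : ρ ^ n ≤ 1 := pow_le_one₀ h0 h1
    have h2 := mul_le_mul_of_nonneg_left ih h0
    have h3 : ρ * (ρ * (1 - ρ ^ n)) ≤ ρ * (1 - ρ ^ n) := by
      nlinarith [mul_nonneg h0 (sub_nonneg.mpr hpn1)]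
    push_cast
    rw [pow_succ]
    nlinarith [h2, h3]

/-- If p is nonnegative with ∑ p_k = 1, ∑ k²·p_k < ∞, μ = ∑ k·p_k, and
ρ ∈ [0,1) satisfies ∑ k·p_k·ρ^{k−1} = μ·ρ (with 0⁰ = 1), then
∑ k·(k−2)·p_k·ρ^{k−1} ≤ 0. -/
theorem stmt17 (p : ℕ → ℝ) (hp : ∀ k, 1 ≤ k → 0 ≤ p k)
    (hp1sum : (∑' k : ℕ, p (k + 1)) = 1)
    (hp2 : Summable (fun k : ℕ => ((k + 1 : ℕ) : ℝ) ^ 2 * p (k + 1)))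
    (μ : ℝ) (hμ : μ = ∑' k : ℕ, ((k + 1 : ℕ) : ℝ) * p (k + 1))
    (ρ : ℝ) (hρ : ρ ∈ Set.Ico (0 : ℝ) 1)
    (hfix : (∑' k : ℕ, ((k + 1 : ℕ) : ℝ) * p (k + 1) * ρ ^ k) = μ * ρ) :
    (∑' k : ℕ, ((k + 1 : ℕ) : ℝ) * (((k + 1 : ℕ) : ℝ) - 2) * p (k + 1) * ρ ^ k) ≤ 0 := by
  obtain ⟨hρ0, hρ1⟩ := hρ
  have hpk : ∀ k : ℕ, 0 ≤ p (k + 1) := fun k => hp (k + 1) (Nat.succ_le_succ (Nat.zero_le k))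
  have hρpow : ∀ k : ℕ, 0 ≤ ρ ^ k := fun k => pow_nonneg hρ0 k
  have hρpow1 : ∀ k : ℕ, ρ ^ k ≤ 1 := fun k => pow_le_one₀ hρ0 hρ1.le
  set a : ℕ → ℝ := fun k => ((k + 1 : ℕ) : ℝ) * p (k + 1) with ha_def
  set b : ℕ → ℝ := fun k => ((k + 1 : ℕ) : ℝ) * p (k + 1) * ρ ^ k with hb_def
  set c : ℕ → ℝ := fun k => ((k + 1 : ℕ) : ℝ) * (k : ℝ) * p (k + 1) * ρ ^ k with hc_def
  have ha : Summable a := by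
    apply hp2.of_nonneg_of_le (fun k => mul_nonneg (Nat.cast_nonneg _) (hpk k))
    intro k
    have h0 := hpk k
    have hk0 : (0 : ℝ) ≤ (k : ℝ) := Nat.cast_nonneg _
    push_cast
    nlinarith [mul_nonneg (mul_nonneg (by linarith : (0:ℝ) ≤ (k:ℝ)+1) hk0) h0]
  have hb : Summable b := by
    apply ha.of_nonneg_of_le (fun k => by have := hpk k; positivity)
    intro k
    have := hpk k
    have hk0 : (0 : ℝ) ≤ ((k + 1 : ℕ) : ℝ) := Nat.cast_nonneg _
    simp only [ha_def, hb_def]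
    push_cast
    exact mul_le_of_le_one_right (mul_nonneg (by linarith [Nat.cast_nonneg (α := ℝ) k]) this) (hρpow1 k)
  have hc : Summable c := by
    apply hp2.of_nonneg_of_le (fun k => by have := hpk k; have := hρpow k; positivity)
    intro k
    have := hpk k
    have h1 : (k : ℝ) ≤ ((k + 1 : ℕ) : ℝ) := by push_cast; linarith
    have h2 : (0 : ℝ) ≤ (k : ℝ) := Nat.cast_nonneg _
    have h3 : (0 : ℝ) ≤ ((k + 1 : ℕ) : ℝ) := Nat.cast_nonneg _
    simp only [hc_def]
    have : ((k + 1 : ℕ) : ℝ) * (k : ℝ) * p (k + 1) * ρ ^ k ≤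
        ((k + 1 : ℕ) : ℝ) * ((k + 1 : ℕ) : ℝ) * p (k + 1) * 1 := by
      apply mul_le_mul
      · apply mul_le_mul_of_nonneg_right _ (hpk k)
        exact mul_le_mul_of_nonneg_left h1 h3
      · exact hρpow1 k
      · exact hρpow k
      · positivity
    calc ((k + 1 : ℕ) : ℝ) * (k : ℝ) * p (k + 1) * ρ ^ k
        ≤ ((k + 1 : ℕ) : ℝ) * ((k + 1 : ℕ) : ℝ) * p (k + 1) * 1 := this
      _ = ((k + 1 : ℕ) : ℝ) ^ 2 * p (k + 1) := by ring
  have hsb : (∑' k, b k) = μ * ρ := hfix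
  have hsa : (∑' k, a k) = μ := hμ.symm
  -- key bound: (1-ρ) * ∑ c ≤ ρ * (μ - μ*ρ)
  have hab : Summable (fun k => a k - b k) := ha.sub hb
  have key : (1 - ρ) * (∑' k, c k) ≤ ρ * (μ - μ * ρ) := by
    have hterm : ∀ k, (1 - ρ) * c k ≤ ρ * (a k - b k) := by
      intro k
      have haux := stmt17_aux ρ hρ0 hρ1.le k
      have hcoef : (0 : ℝ) ≤ ((k + 1 : ℕ) : ℝ) * p (k + 1) := mul_nonneg (Nat.cast_nonneg _) (hpk k)
      have := mul_le_mul_of_nonneg_left haux hcoef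
      simp only [ha_def, hb_def, hc_def]
      push_cast at this ⊢
      nlinarith [this]
    have hsc : Summable (fun k => (1 - ρ) * c k) := hc.mul_left _
    have hsab : Summable (fun k => ρ * (a k - b k)) := hab.mul_left _
    calc (1 - ρ) * (∑' k, c k) = ∑' k, (1 - ρ) * c k := (tsum_mul_left).symm
      _ ≤ ∑' k, ρ * (a k - b k) := Summable.tsum_le_tsum hterm hsc hsab
      _ = ρ * ∑' k, (a k - b k) := tsum_mul_left
      _ = ρ * ((∑' k, a k) - (∑' k, b k)) := by rw [Summable.tsum_sub ha hb]
      _ = ρ * (μ - μ * ρ) := by rw [hsa, hsb]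
  have hsc_le : (∑' k, c k) ≤ μ * ρ := by
    have h1ρ : 0 < 1 - ρ := by linarith
    have : ρ * (μ - μ * ρ) = (1 - ρ) * (μ * ρ) := by ring
    rw [this] at key
    exact le_of_mul_le_mul_left key h1ρ
  have heq : (∑' k : ℕ, ((k + 1 : ℕ) : ℝ) * (((k + 1 : ℕ) : ℝ) - 2) * p (k + 1) * ρ ^ k)
      = (∑' k, c k) - (∑' k, b k) := by
    rw [← Summable.tsum_sub hc hb]
    congr 1
    funext k
    simp only [ha_def, hb_def, hc_def]
    push_cast
    ring
  rw [heq, hsb]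
  linarith
end
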